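/- arXiv:math/0407127 — 4 statements merged into one kernel-verified Lean document; each statement's English description precedes it below -/
import Mathlib

section
/- Suppose ρ : L^∞(Ω,𝓕,P) → ℝ satisfies monotonicity (X ≤ Y P-a.s. implies ρ(−X) ≤ ρ(−Y)), convexity (ρ(tX+(1−t)Y) ≤ tρ(X)+(1−t)ρ(Y) for all t ∈ [0,1]) and continuity from above (X_n ↓ X P-a.s. implies ρ(X_n) ↑ ρ(X)). Then the Neyman–Pearson problem at level v has a solution: there exists X* ∈ L^∞ with 0 ≤ X* ≤ K P-a.s. and E[φX*] ≥ v such that ρ(−X*) ≤ ρ(−X) for every X ∈ L^∞ with 0 ≤ X ≤ K P-a.s. and E[φX] ≥ v. -/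
set_option linter.unusedSectionVars false
set_option maxHeartbeats 1000000



open MeasureTheory Filter Topology Set

/-- The probability space `(Ω, 𝓕, P)` is atomless. -/
def Atomless {Ω : Type*} [MeasurableSpace Ω] (P : Measure Ω) : Prop :=
  ∀ A : Set Ω, MeasurableSet A → 0 < P A →
    ∃ B : Set Ω, MeasurableSet B ∧ B ⊆ A ∧ 0 < P B ∧ P B < P A

/-- Monotonicity of the risk measure: `X ≤ Y` P-a.s. implies `ρ(−X) ≤ ρ(−Y)`. -/
def RMono {Ω : Type*} [MeasurableSpace Ω] (P : Measure Ω) (ρ : (Ω → ℝ) → ℝ) : Prop :=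
  ∀ X Y : Ω → ℝ, MemLp X ⊤ P → MemLp Y ⊤ P →
    (∀ᵐ ω ∂P, X ω ≤ Y ω) → ρ (fun ω => -X ω) ≤ ρ (fun ω => -Y ω)

/-- Convexity of the risk measure. -/
def RConvex {Ω : Type*} [MeasurableSpace Ω] (P : Measure Ω) (ρ : (Ω → ℝ) → ℝ) : Prop :=
  ∀ X Y : Ω → ℝ, MemLp X ⊤ P → MemLp Y ⊤ P → ∀ t : ℝ, 0 ≤ t → t ≤ 1 →
    ρ (fun ω => t * X ω + (1 - t) * Y ω) ≤ t * ρ X + (1 - t) * ρ Y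

/-- Continuity from above: `Xₙ ↓ X` P-a.s. implies `ρ(Xₙ) ↑ ρ(X)`. -/
def RContFromAbove {Ω : Type*} [MeasurableSpace Ω] (P : Measure Ω) (ρ : (Ω → ℝ) → ℝ) : Prop :=
  ∀ (X : ℕ → Ω → ℝ) (X₀ : Ω → ℝ), (∀ n, MemLp (X n) ⊤ P) → MemLp X₀ ⊤ P →
    (∀ᵐ ω ∂P, Antitone fun n => X n ω) →
    (∀ᵐ ω ∂P, Tendsto (fun n => X n ω) atTop (𝓝 (X₀ ω))) →
    Monotone (fun n => ρ (X n)) ∧ Tendsto (fun n => ρ (X n)) atTop (𝓝 (ρ X₀))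

/-- Feasibility for the Neyman–Pearson problem at level `v`:
`X ∈ L^∞`, `0 ≤ X ≤ K` P-a.s. and `E[φX] ≥ v`. -/
def Feasible {Ω : Type*} [MeasurableSpace Ω] (P : Measure Ω) (φ : Ω → ℝ) (K v : ℝ)
    (X : Ω → ℝ) : Prop :=
  MemLp X ⊤ P ∧ (∀ᵐ ω ∂P, 0 ≤ X ω ∧ X ω ≤ K) ∧ v ≤ ∫ ω, φ ω * X ω ∂P

/-- A solution of the Neyman–Pearson problem for `ρ` at level `v`. -/
def IsNPSolution {Ω : Type*} [MeasurableSpace Ω] (P : Measure Ω) (ρ : (Ω → ℝ) → ℝ)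
    (φ : Ω → ℝ) (K v : ℝ) (X : Ω → ℝ) : Prop :=
  Feasible P φ K v X ∧
    ∀ Y : Ω → ℝ, Feasible P φ K v Y → ρ (fun ω => -X ω) ≤ ρ (fun ω => -Y ω)

section Aux
variable {Ω : Type*} [MeasurableSpace Ω] {P : Measure Ω} [IsProbabilityMeasure P]

private noncomputable def NPq (P : Measure Ω) (X : Ω → ℝ) : ℝ := ∫ ω, X ω ^ 2 ∂P

private lemma np_integrable_sq_of_bound {f : Ω → ℝ} {C : ℝ}
    (hm : AEStronglyMeasurable f P) (hb : ∀ᵐ ω ∂P, |f ω| ≤ C) :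
    Integrable (fun ω => f ω ^ 2) P := by
  refine (integrable_const (C ^ 2)).mono' ?_ ?_
  · have : (fun ω => f ω ^ 2) = fun ω => f ω * f ω := by funext ω; ring
    rw [this]; exact hm.mul hm
  · filter_upwards [hb] with ω h
    rw [Real.norm_eq_abs, abs_of_nonneg (sq_nonneg _), ← sq_abs]
    exact pow_le_pow_left₀ (abs_nonneg _) h 2

private lemma np_integrable_mul_of_bound {φ f : Ω → ℝ} {C : ℝ}
    (hφint : Integrable φ P) (hm : AEStronglyMeasurable f P) (hb : ∀ᵐ ω ∂P, |f ω| ≤ C) :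
    Integrable (fun ω => φ ω * f ω) P := by
  refine (hφint.abs.mul_const C).mono' (hφint.aestronglyMeasurable.mul hm) ?_
  filter_upwards [hb] with ω h
  rw [Real.norm_eq_abs, abs_mul]
  exact mul_le_mul_of_nonneg_left h (abs_nonneg _)

private lemma np_seq_basic {v : ℕ → ℝ} {K : ℝ} (h0 : ∀ k, 0 ≤ v k) (hK : ∀ k, v k ≤ K) :
    (∀ j, 0 ≤ ⨅ i, v (j + i)) ∧ (∀ j, (⨅ i, v (j + i)) ≤ v j) ∧
    Monotone (fun j => ⨅ i, v (j + i)) ∧ (0 ≤ ⨆ j, ⨅ i, v (j + i)) ∧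
    ((⨆ j, ⨅ i, v (j + i)) ≤ K) ∧
    Tendsto (fun j => ⨅ i, v (j + i)) atTop (𝓝 (⨆ j, ⨅ i, v (j + i))) := by
  have hbb : ∀ j, BddBelow (range fun i => v (j + i)) := by
    intro j; exact ⟨0, by rintro x ⟨i, rfl⟩; exact h0 _⟩
  have hT0 : ∀ j, 0 ≤ ⨅ i, v (j + i) := fun j => le_ciInf fun i => h0 _
  have hTv : ∀ j, (⨅ i, v (j + i)) ≤ v j := by
    intro j
    have := ciInf_le (hbb j) 0
    simpa using this
  have hTmono : Monotone (fun j => ⨅ i, v (j + i)) := by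
    apply monotone_nat_of_le_succ
    intro j
    refine le_ciInf fun i => ?_
    have := ciInf_le (hbb j) (i + 1)
    have h' : j + (i + 1) = j + 1 + i := by omega
    rwa [h'] at this
  have hba : BddAbove (range fun j => ⨅ i, v (j + i)) := by
    refine ⟨K, ?_⟩; rintro x ⟨j, rfl⟩; exact (hTv j).trans (hK j)
  refine ⟨hT0, hTv, hTmono, ?_, ?_, tendsto_atTop_ciSup hTmono hba⟩
  · exact le_trans (hT0 0) (le_ciSup hba 0)
  · exact ciSup_le fun j => (hTv j).trans (hK j)

private lemma np_liminf_eq_of_tendsto {v : ℕ → ℝ} {K : ℝ} (h0 : ∀ k, 0 ≤ v k)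
    (hK : ∀ k, v k ≤ K) {l : ℝ} (hv : Tendsto v atTop (𝓝 l)) :
    (⨆ j, ⨅ i, v (j + i)) = l := by
  obtain ⟨hT0, hTv, hTmono, _, _, hTtend⟩ := np_seq_basic h0 hK
  have hbb : ∀ j, BddBelow (range fun i => v (j + i)) := by
    intro j; exact ⟨0, by rintro x ⟨i, rfl⟩; exact h0 _⟩
  have hba : BddAbove (range fun j => ⨅ i, v (j + i)) := by
    refine ⟨K, ?_⟩; rintro x ⟨j, rfl⟩; exact (hTv j).trans (hK j)
  refine le_antisymm ?_ ?_
  · refine ciSup_le fun j => ?_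
    refine ge_of_tendsto hv ?_
    refine eventually_atTop.2 ⟨j, fun k hk => ?_⟩
    obtain ⟨i, rfl⟩ := Nat.exists_eq_add_of_le hk
    exact ciInf_le (hbb j) i
  · by_contra hlt
    push_neg at hlt
    set X := ⨆ j, ⨅ i, v (j + i) with hX
    have hε : 0 < (l - X) / 2 := by linarith
    obtain ⟨j₀, hj₀⟩ := (Metric.tendsto_atTop.1 hv) ((l - X) / 2) hε
    have hT : l - (l - X) / 2 ≤ ⨅ i, v (j₀ + i) := by
      refine le_ciInf fun i => ?_
      have := hj₀ (j₀ + i) (Nat.le_add_right _ _)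
      rw [Real.dist_eq, abs_lt] at this
      linarith [this.1]
    have hXb : (⨅ i, v (j₀ + i)) ≤ X := le_ciSup hba j₀
    linarith
end Aux

/-- Lemma 2.1: under monotonicity, convexity and continuity from above,
the Neyman–Pearson problem at level `v` has a solution. -/
theorem neyman_pearson_existence
    {Ω : Type*} [MeasurableSpace Ω] (P : Measure Ω) [IsProbabilityMeasure P]
    (hP : Atomless P)
    (φ : Ω → ℝ) (hφm : Measurable φ) (hφint : Integrable φ P)
    (hφpos : ∀ᵐ ω ∂P, 0 < φ ω) (hφ1 : ∫ ω, φ ω ∂P = 1)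
    (K v : ℝ) (hK : 0 < K) (hv : v ∈ Icc 0 K)
    (ρ : (Ω → ℝ) → ℝ) (hmono : RMono P ρ) (hconv : RConvex P ρ)
    (hcont : RContFromAbove P ρ) :
    ∃ X : Ω → ℝ, IsNPSolution P ρ φ K v X := by
  classical
  -- ρ is invariant under a.e. equality
  have hcongr : ∀ U V : Ω → ℝ, MemLp U ⊤ P → MemLp V ⊤ P → U =ᵐ[P] V → ρ U = ρ V := by
    intro U V hU hV h
    have h2 := hcont (fun _ => U) V (fun _ => hU) hV
      (ae_of_all _ fun ω => antitone_const)
      (h.mono fun ω hω => hω ▸ tendsto_const_nhds)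
    exact tendsto_nhds_unique tendsto_const_nhds h2.2
  -- the feasible set and the value function
  set S : Set (Ω → ℝ) := {X | Feasible P φ K v X} with hS
  -- nonemptiness via the constant K
  have hKfeas : Feasible P φ K v (fun _ => K) := by
    refine ⟨memLp_const K, ae_of_all _ fun ω => ⟨hK.le, le_rfl⟩, ?_⟩
    rw [integral_mul_const, hφ1, one_mul]; exact hv.2
  have hgSne : ((fun X => ρ (fun ω => -X ω)) '' S).Nonempty :=
    ⟨_, Set.mem_image_of_mem _ hKfeas⟩
  have hbddg : BddBelow ((fun X => ρ (fun ω => -X ω)) '' S) := by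
    refine ⟨ρ (fun _ => -(0 : ℝ)), ?_⟩
    rintro r ⟨X, hX, rfl⟩
    exact hmono (fun _ => 0) X (memLp_const 0) hX.1 (hX.2.1.mono fun ω h => h.1)
  set m : ℝ := sInf ((fun X => ρ (fun ω => -X ω)) '' S) with hm
  have hmle : ∀ Y, Feasible P φ K v Y → m ≤ ρ (fun ω => -Y ω) := by
    intro Y hY
    exact csInf_le hbddg ⟨Y, hY, rfl⟩
  -- level sets
  set F : ℕ → Set (Ω → ℝ) :=
    fun n => {X | Feasible P φ K v X ∧ ρ (fun ω => -X ω) ≤ m + 1 / ((n : ℝ) + 1)} with hF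
  have hpos : ∀ n : ℕ, (0 : ℝ) < 1 / ((n : ℝ) + 1) := fun n => by positivity
  have hFne : ∀ n, (F n).Nonempty := by
    intro n
    obtain ⟨a, ⟨X, hXS, rfl⟩, hlt⟩ := Real.lt_sInf_add_pos hgSne (hpos n)
    exact ⟨X, hXS, hlt.le⟩
  have hFsub : ∀ {n₁ n₂ : ℕ}, n₁ ≤ n₂ → F n₂ ⊆ F n₁ := by
    intro n₁ n₂ h X hX
    refine ⟨hX.1, hX.2.trans ?_⟩
    have : 1 / ((n₂ : ℝ) + 1) ≤ 1 / ((n₁ : ℝ) + 1) := by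
      apply one_div_le_one_div_of_le (by positivity)
      exact_mod_cast by omega
    linarith
  -- midpoints stay in level sets
  have hFmid : ∀ (n : ℕ) (X Y : Ω → ℝ), X ∈ F n → Y ∈ F n →
      (fun ω => (X ω + Y ω) / 2) ∈ F n := by
    intro n X Y hX hY
    have hXf := hX.1; have hYf := hY.1
    have hmem : MemLp (fun ω => (X ω + Y ω) / 2) ⊤ P := by
      have h1 : MemLp (fun ω => X ω + Y ω) ⊤ P := hXf.1.add hYf.1
      have h2 := h1.const_mul (2 : ℝ)⁻¹
      have : (fun ω => (X ω + Y ω) / 2) = fun ω => (2 : ℝ)⁻¹ * (X ω + Y ω) := by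
        funext ω; ring
      rwa [this]
    have hbnd : ∀ᵐ ω ∂P, 0 ≤ (X ω + Y ω) / 2 ∧ (X ω + Y ω) / 2 ≤ K := by
      filter_upwards [hXf.2.1, hYf.2.1] with ω h1 h2
      constructor <;> [linarith [h1.1, h2.1]; linarith [h1.2, h2.2]]
    have hintX : Integrable (fun ω => φ ω * X ω) P :=
      np_integrable_mul_of_bound hφint hXf.1.aestronglyMeasurable
        (hXf.2.1.mono fun ω h => abs_le.2 ⟨by linarith [h.1, hK.le], h.2⟩)
    have hintY : Integrable (fun ω => φ ω * Y ω) P :=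
      np_integrable_mul_of_bound hφint hYf.1.aestronglyMeasurable
        (hYf.2.1.mono fun ω h => abs_le.2 ⟨by linarith [h.1, hK.le], h.2⟩)
    have hint : v ≤ ∫ ω, φ ω * ((X ω + Y ω) / 2) ∂P := by
      have hrw : (fun ω => φ ω * ((X ω + Y ω) / 2))
          = fun ω => φ ω * X ω / 2 + φ ω * Y ω / 2 := by funext ω; ring
      rw [hrw, integral_add (hintX.div_const 2) (hintY.div_const 2), integral_div,
        integral_div]
      have := hXf.2.2; have := hYf.2.2
      linarith
    refine ⟨⟨hmem, hbnd, hint⟩, ?_⟩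
    -- convexity bound
    have hc := hconv (fun ω => -X ω) (fun ω => -Y ω) hXf.1.neg hYf.1.neg
      (2 : ℝ)⁻¹ (by norm_num) (by norm_num)
    have hrw2 : (fun ω => (2 : ℝ)⁻¹ * -X ω + (1 - 2⁻¹) * -Y ω)
        = fun ω => -((X ω + Y ω) / 2) := by funext ω; ring
    rw [hrw2] at hc
    have h1 := hX.2; have h2 := hY.2
    calc ρ (fun ω => -((X ω + Y ω) / 2))
        ≤ 2⁻¹ * ρ (fun ω => -X ω) + (1 - 2⁻¹) * ρ (fun ω => -Y ω) := hc
      _ ≤ m + 1 / ((n : ℝ) + 1) := by linarith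
  -- squares of bounded feasible functions are integrable
  have hsqint : ∀ X : Ω → ℝ, X ∈ S → Integrable (fun ω => X ω ^ 2) P := by
    intro X hX
    exact np_integrable_sq_of_bound hX.1.aestronglyMeasurable
      (hX.2.1.mono fun ω h => abs_le.2 ⟨by linarith [h.1, hK.le], h.2⟩)
  have hqnonneg : ∀ X : Ω → ℝ, 0 ≤ NPq P X := fun X =>
    integral_nonneg fun ω => sq_nonneg _
  have hqle : ∀ X : Ω → ℝ, X ∈ S → NPq P X ≤ K ^ 2 := by
    intro X hX
    refine (integral_mono_ae (hsqint X hX) (integrable_const _) ?_ : _ ≤ ∫ _, K ^ 2 ∂P).trans ?_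
    · filter_upwards [hX.2.1] with ω h
      exact pow_le_pow_left₀ h.1 h.2 2
    · simp
  have hbddq : ∀ n, BddBelow (NPq P '' F n) := by
    intro n; exact ⟨0, by rintro r ⟨X, hX, rfl⟩; exact hqnonneg X⟩
  set α : ℕ → ℝ := fun n => sInf (NPq P '' F n) with hα
  have hαmono : Monotone α := by
    intro n₁ n₂ h
    exact csInf_le_csInf (hbddq n₁) (Set.Nonempty.image (NPq P) (hFne n₂)) (Set.image_mono (hFsub h))
  have hαbdd : BddAbove (range α) := by
    refine ⟨K ^ 2, ?_⟩
    rintro r ⟨n, rfl⟩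
    obtain ⟨X, hX⟩ := hFne n
    exact (csInf_le (hbddq n) ⟨X, hX, rfl⟩).trans (hqle X hX.1)
  set A : ℝ := ⨆ n, α n with hA
  have hαleA : ∀ n, α n ≤ A := fun n => le_ciSup hαbdd n
  have htendα : Tendsto α atTop (𝓝 A) := tendsto_atTop_ciSup hαmono hαbdd
  -- select near-minimal-norm measurable representatives
  have hsel : ∀ n : ℕ, ∃ X : Ω → ℝ, X ∈ F n ∧ Measurable X ∧
      (∀ ω, 0 ≤ X ω ∧ X ω ≤ K) ∧ NPq P X < α n + 1 / ((n : ℝ) + 1) := by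
    intro n
    obtain ⟨a, ⟨X, hXF, rfl⟩, hlt⟩ := Real.lt_sInf_add_pos (Set.Nonempty.image (NPq P) (hFne n)) (hpos n)
    set M := hXF.1.1.aestronglyMeasurable.mk X with hM
    have hMeq : X =ᵐ[P] M := hXF.1.1.aestronglyMeasurable.ae_eq_mk
    have hMmeas : Measurable M :=
      hXF.1.1.aestronglyMeasurable.stronglyMeasurable_mk.measurable
    set X' : Ω → ℝ := fun ω => max 0 (min K (M ω)) with hX'
    have hX'meas : Measurable X' := measurable_const.max (measurable_const.min hMmeas)
    have hX'bd : ∀ ω, 0 ≤ X' ω ∧ X' ω ≤ K :=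
      fun ω => ⟨le_max_left _ _, max_le hK.le (min_le_left _ _)⟩
    have hX'eq : X' =ᵐ[P] X := by
      filter_upwards [hMeq, hXF.1.2.1] with ω h1 h2
      simp only [hX', ← h1, min_eq_right h2.2, max_eq_right h2.1]
    have hX'mem : MemLp X' ⊤ P :=
      memLp_top_of_bound hX'meas.aestronglyMeasurable K
        (ae_of_all _ fun ω => abs_le.2 ⟨by linarith [(hX'bd ω).1, hK.le], (hX'bd ω).2⟩)
    have hX'feas : Feasible P φ K v X' := by
      refine ⟨hX'mem, ae_of_all _ hX'bd, ?_⟩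
      have : (fun ω => φ ω * X' ω) =ᵐ[P] fun ω => φ ω * X ω :=
        hX'eq.mono fun ω h => by simp only [h]
      rw [integral_congr_ae this]
      exact hXF.1.2.2
    have hgeq : ρ (fun ω => -X' ω) = ρ (fun ω => -X ω) :=
      hcongr _ _ hX'mem.neg hXF.1.1.neg (hX'eq.mono fun ω h => by simp only [h])
    have hqeq : NPq P X' = NPq P X :=
      integral_congr_ae (hX'eq.mono fun ω h => by simp only [h])
    exact ⟨X', ⟨hX'feas, hgeq.le.trans hXF.2⟩, hX'meas, hX'bd, hqeq ▸ hlt⟩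
  choose Y hYF hYmeas hYbd hYq using hsel
  -- the parallelogram estimate
  have key : ∀ n₁ n₂ : ℕ, n₁ ≤ n₂ →
      NPq P (fun ω => Y n₁ ω - Y n₂ ω) ≤ 2 * (A - α n₁) + 4 / ((n₁ : ℝ) + 1) := by
    intro n₁ n₂ h
    have hY2 : Y n₂ ∈ F n₁ := hFsub h (hYF n₂)
    have hmid := hFmid n₁ (Y n₁) (Y n₂) (hYF n₁) hY2
    have hqmid : α n₁ ≤ NPq P (fun ω => (Y n₁ ω + Y n₂ ω) / 2) :=
      csInf_le (hbddq n₁) ⟨_, hmid, rfl⟩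
    have i1 : Integrable (fun ω => Y n₁ ω ^ 2) P := hsqint _ (hYF n₁).1
    have i2 : Integrable (fun ω => Y n₂ ω ^ 2) P := hsqint _ (hYF n₂).1
    have i3 : Integrable (fun ω => ((Y n₁ ω + Y n₂ ω) / 2) ^ 2) P := hsqint _ hmid.1
    have hid : NPq P (fun ω => Y n₁ ω - Y n₂ ω) =
        2 * NPq P (Y n₁) + 2 * NPq P (Y n₂)
          - 4 * NPq P (fun ω => (Y n₁ ω + Y n₂ ω) / 2) := by
      simp only [NPq]
      have hptw : (fun ω => (Y n₁ ω - Y n₂ ω) ^ 2)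
          = fun ω => (2 * Y n₁ ω ^ 2 + 2 * Y n₂ ω ^ 2) - 4 * ((Y n₁ ω + Y n₂ ω) / 2) ^ 2 := by
        funext ω; ring
      have ia : Integrable (fun ω => 2 * Y n₁ ω ^ 2) P := by exact i1.const_mul 2
      have ib : Integrable (fun ω => 2 * Y n₂ ω ^ 2) P := by exact i2.const_mul 2
      have ic : Integrable (fun ω => 2 * Y n₁ ω ^ 2 + 2 * Y n₂ ω ^ 2) P := by exact ia.add ib
      have id' : Integrable (fun ω => 4 * ((Y n₁ ω + Y n₂ ω) / 2) ^ 2) P := by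
        exact i3.const_mul 4
      rw [hptw, integral_sub ic id', integral_add ia ib, integral_const_mul, integral_const_mul,
        integral_const_mul]
    have hq1 := hYq n₁
    have hq2 := hYq n₂
    have hαA2 := hαleA n₂
    have h12 : 1 / ((n₂ : ℝ) + 1) ≤ 1 / ((n₁ : ℝ) + 1) := by
      apply one_div_le_one_div_of_le (by positivity)
      exact_mod_cast by omega
    have hαm : α n₁ ≤ α n₂ := hαmono h
    rw [hid]
    have h4 : (4 : ℝ) / ((n₁ : ℝ) + 1) = 2 * (1 / ((n₁ : ℝ) + 1)) + 2 * (1 / ((n₁ : ℝ) + 1)) := by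
      ring
    linarith
  -- error sequence
  set E : ℕ → ℝ := fun n => 2 * (A - α n) + 4 / ((n : ℝ) + 1) with hE
  have htendE : Tendsto E atTop (𝓝 0) := by
    have h1 : Tendsto (fun n : ℕ => 2 * (A - α n)) atTop (𝓝 0) := by
      have := (tendsto_const_nhds (x := A)).sub htendα
      have h2 := this.const_mul (2 : ℝ)
      simpa using h2
    have h2 : Tendsto (fun n : ℕ => 4 / ((n : ℝ) + 1)) atTop (𝓝 0) := by
      have := tendsto_one_div_add_atTop_nhds_zero_nat.const_mul (4 : ℝ)
      simpa [div_eq_mul_inv, mul_comm] using this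
    simpa using h1.add h2
  -- choose a rapid subsequence
  obtain ⟨Φ, hΦmono, hΦ⟩ := Filter.extraction_forall_of_eventually
    (P := fun k n => E n < (8 : ℝ)⁻¹ ^ k)
    (fun k => htendE.eventually_lt_const (by positivity))
  set V : ℕ → Ω → ℝ := fun k => Y (Φ k) with hV
  have hVF : ∀ k, V k ∈ F k := fun k => hFsub (hΦmono.le_apply) (hYF (Φ k))
  have hVmeas : ∀ k, Measurable (V k) := fun k => hYmeas (Φ k)
  have hVbd : ∀ k ω, 0 ≤ V k ω ∧ V k ω ≤ K := fun k ω => hYbd (Φ k) ω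
  have hVq : ∀ k, NPq P (fun ω => V k ω - V (k + 1) ω) < (8 : ℝ)⁻¹ ^ k := by
    intro k
    exact lt_of_le_of_lt (key (Φ k) (Φ (k + 1)) (hΦmono (Nat.lt_succ_self k)).le) (hΦ k)
  -- Borel–Cantelli
  set Bset : ℕ → Set Ω := fun k => {ω | (2 : ℝ)⁻¹ ^ k ≤ |V k ω - V (k + 1) ω|} with hBset
  have hBmeas : ∀ k, (P (Bset k)).toReal ≤ (2 : ℝ)⁻¹ ^ k := by
    intro k
    have hDint : Integrable (fun ω => (V k ω - V (k + 1) ω) ^ 2) P := by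
      refine np_integrable_sq_of_bound (C := K)
        (((hVmeas k).sub (hVmeas (k + 1))).aestronglyMeasurable) (ae_of_all _ fun ω => ?_)
      have h1 := hVbd k ω; have h2 := hVbd (k + 1) ω
      rw [abs_le]; constructor <;> [linarith [h1.1, h2.2]; linarith [h1.2, h2.1]]
    have cheb := mul_meas_ge_le_integral_of_nonneg
      (ae_of_all _ fun ω => sq_nonneg (V k ω - V (k + 1) ω)) hDint (((2 : ℝ)⁻¹ ^ k) ^ 2)
    have hsub : Bset k ⊆ {ω | ((2 : ℝ)⁻¹ ^ k) ^ 2 ≤ (V k ω - V (k + 1) ω) ^ 2} := by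
      intro ω hω
      have : ((2 : ℝ)⁻¹ ^ k) ^ 2 ≤ |V k ω - V (k + 1) ω| ^ 2 :=
        pow_le_pow_left₀ (by positivity) hω 2
      simpa [sq_abs] using this
    have hmono2 : (P (Bset k)).toReal ≤
        (P {ω | ((2 : ℝ)⁻¹ ^ k) ^ 2 ≤ (V k ω - V (k + 1) ω) ^ 2}).toReal :=
      ENNReal.toReal_mono (measure_ne_top P _) (measure_mono hsub)
    have hq := (hVq k).le
    have hpos2 : (0 : ℝ) < ((2 : ℝ)⁻¹ ^ k) ^ 2 := by positivity
    have h8 : (8 : ℝ)⁻¹ ^ k = ((2 : ℝ)⁻¹ ^ k) ^ 2 * (2 : ℝ)⁻¹ ^ k := by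
      rw [← pow_mul, ← pow_add]
      norm_num [← pow_mul]
      rw [show k * 2 + k = 3 * k by ring, pow_mul]
      norm_num
    calc (P (Bset k)).toReal ≤ _ := hmono2
      _ ≤ (2 : ℝ)⁻¹ ^ k := by
        rw [← mul_le_mul_iff_right₀ hpos2]
        calc ((2 : ℝ)⁻¹ ^ k) ^ 2 *
            (P {ω | ((2 : ℝ)⁻¹ ^ k) ^ 2 ≤ (V k ω - V (k + 1) ω) ^ 2}).toReal
            ≤ ∫ ω, (V k ω - V (k + 1) ω) ^ 2 ∂P := cheb
          _ ≤ (8 : ℝ)⁻¹ ^ k := hq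
          _ = _ := h8
  have hBsum : ∑' k, P (Bset k) ≠ ⊤ := by
    have hle : ∀ k, P (Bset k) ≤ ENNReal.ofReal ((2 : ℝ)⁻¹ ^ k) := by
      intro k
      exact (ENNReal.le_ofReal_iff_toReal_le (measure_ne_top P _) (by positivity)).2 (hBmeas k)
    refine ne_top_of_le_ne_top ?_ (ENNReal.tsum_le_tsum hle)
    have : ∀ k, ENNReal.ofReal ((2 : ℝ)⁻¹ ^ k) = (ENNReal.ofReal (2 : ℝ)⁻¹) ^ k := by
      intro k; rw [ENNReal.ofReal_pow (by norm_num)]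
    rw [tsum_congr this, ENNReal.tsum_geometric]
    rw [Ne, ENNReal.inv_eq_top, tsub_eq_zero_iff_le]
    intro hcon
    have : ENNReal.ofReal (2 : ℝ)⁻¹ < 1 := by
      rw [← ENNReal.ofReal_one]
      exact ENNReal.ofReal_lt_ofReal_iff_of_nonneg (by norm_num) |>.2 (by norm_num)
    exact absurd hcon (not_le.2 this)
  have hBC : ∀ᵐ ω ∂P, {k | ω ∈ Bset k}.Finite := MeasureTheory.ae_finite_setOf_mem hBsum
  -- a.e. convergence of V to its pointwise liminf X̄
  set Xb : Ω → ℝ := fun ω => ⨆ j, ⨅ i, V (j + i) ω with hXb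
  have hVconv : ∀ᵐ ω ∂P, Tendsto (fun k => V k ω) atTop (𝓝 (Xb ω)) := by
    filter_upwards [hBC] with ω hfin
    obtain ⟨b, hb⟩ := hfin.bddAbove
    have hsmall : ∀ k, b + 1 ≤ k → |V k ω - V (k + 1) ω| < (2 : ℝ)⁻¹ ^ k := by
      intro k hk
      by_contra hcon
      push_neg at hcon
      have : k ∈ {k | ω ∈ Bset k} := hcon
      have := hb this
      omega
    have hcauchy : CauchySeq (fun k => V k ω) := by
      have h2 : Summable (fun n : ℕ => dist (V (n + (b + 1)) ω) (V (n + (b + 1) + 1) ω)) := by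
        refine Summable.of_nonneg_of_le (fun n => dist_nonneg) (fun n => ?_)
          (((summable_geometric_of_lt_one (by norm_num : (0:ℝ) ≤ 2⁻¹)
            (by norm_num))).mul_left ((2 : ℝ)⁻¹ ^ (b + 1)))
        rw [Real.dist_eq]
        calc |V (n + (b + 1)) ω - V (n + (b + 1) + 1) ω| ≤ (2 : ℝ)⁻¹ ^ (n + (b + 1)) :=
            (hsmall (n + (b + 1)) (by omega)).le
          _ = (2 : ℝ)⁻¹ ^ (b + 1) * (2 : ℝ)⁻¹ ^ n := by rw [← pow_add]; ring_nf
      have hsum : Summable (fun k => dist (V k ω) (V (k + 1) ω)) :=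
        (summable_nat_add_iff (f := fun k => dist (V k ω) (V (k + 1) ω)) (b + 1)).1 h2
      exact cauchySeq_of_dist_le_of_summable _ (fun n => le_rfl) hsum
    obtain ⟨l, hl⟩ := cauchySeq_tendsto_of_complete hcauchy
    have heq : Xb ω = l :=
      np_liminf_eq_of_tendsto (fun k => (hVbd k ω).1) (fun k => (hVbd k ω).2) hl
    rw [heq]; exact hl
  -- the liminf functions
  set T : ℕ → Ω → ℝ := fun j ω => ⨅ i, V (j + i) ω with hT
  have hbasic : ∀ ω, (∀ j, 0 ≤ T j ω) ∧ (∀ j, T j ω ≤ V j ω) ∧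
      Monotone (fun j => T j ω) ∧ (0 ≤ Xb ω) ∧ (Xb ω ≤ K) ∧
      Tendsto (fun j => T j ω) atTop (𝓝 (Xb ω)) :=
    fun ω => np_seq_basic (fun k => (hVbd k ω).1) (fun k => (hVbd k ω).2)
  have hTmeas : ∀ j, Measurable (T j) := fun j => Measurable.iInf fun i => hVmeas (j + i)
  have hXbmeas : Measurable Xb := Measurable.iSup fun j => hTmeas j
  have hTmem : ∀ j, MemLp (T j) ⊤ P := by
    intro j
    refine memLp_top_of_bound (hTmeas j).aestronglyMeasurable K (ae_of_all _ fun ω => ?_)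
    have h := hbasic ω
    exact abs_le.2 ⟨by linarith [(h.1 j), hK.le], (h.2.1 j).trans (hVbd j ω).2⟩
  have hXbmem : MemLp Xb ⊤ P := by
    refine memLp_top_of_bound hXbmeas.aestronglyMeasurable K (ae_of_all _ fun ω => ?_)
    have h := hbasic ω
    exact abs_le.2 ⟨by linarith [h.2.2.2.1, hK.le], h.2.2.2.2.1⟩
  have hVmem : ∀ k, MemLp (V k) ⊤ P := fun k => (hVF k).1.1
  -- continuity from above (Fatou step)
  have hcont2 := hcont (fun j ω => -(T j ω)) (fun ω => -(Xb ω))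
    (fun j => (hTmem j).neg) hXbmem.neg
    (ae_of_all _ fun ω => fun a b hab => neg_le_neg ((hbasic ω).2.2.1 hab))
    (ae_of_all _ fun ω => ((hbasic ω).2.2.2.2.2).neg)
  have hTbound : ∀ j, ρ (fun ω => -(T j ω)) ≤ m + 1 / ((j : ℝ) + 1) := by
    intro j
    have h1 : ρ (fun ω => -(T j ω)) ≤ ρ (fun ω => -(V j ω)) :=
      hmono (T j) (V j) (hTmem j) (hVmem j) (ae_of_all _ fun ω => (hbasic ω).2.1 j)
    exact h1.trans (hVF j).2
  have hXble : ρ (fun ω => -(Xb ω)) ≤ m := by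
    have hlim : Tendsto (fun j : ℕ => m + 1 / ((j : ℝ) + 1)) atTop (𝓝 m) := by
      have := tendsto_one_div_add_atTop_nhds_zero_nat (𝕜 := ℝ)
      simpa using (tendsto_const_nhds (x := m)).add this
    exact le_of_tendsto_of_tendsto' hcont2.2 hlim hTbound
  -- feasibility of Xb
  have hXbfeas : Feasible P φ K v Xb := by
    refine ⟨hXbmem, ae_of_all _ fun ω => ⟨(hbasic ω).2.2.2.1, (hbasic ω).2.2.2.2.1⟩, ?_⟩
    have hdom : Tendsto (fun k => ∫ ω, φ ω * V k ω ∂P) atTop (𝓝 (∫ ω, φ ω * Xb ω ∂P)) := by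
      refine tendsto_integral_of_dominated_convergence (fun ω => |φ ω| * K)
        (fun k => hφint.aestronglyMeasurable.mul (hVmeas k).aestronglyMeasurable)
        (hφint.abs.mul_const K) (fun k => ae_of_all _ fun ω => ?_) ?_
      · rw [Real.norm_eq_abs, abs_mul]
        exact mul_le_mul_of_nonneg_left
          (abs_le.2 ⟨by linarith [(hVbd k ω).1, hK.le], (hVbd k ω).2⟩) (abs_nonneg _)
      · filter_upwards [hVconv] with ω hω
        exact (tendsto_const_nhds (x := φ ω)).mul hω
    refine ge_of_tendsto hdom (eventually_atTop.2 ⟨0, fun k _ => ?_⟩)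
    exact (hVF k).1.2.2
  exact ⟨Xb, hXbfeas, fun Z hZ => hXble.trans (hmle Z hZ)⟩
end

section
/- Suppose ρ : L^∞(Ω,𝓕,P) → ℝ satisfies monotonicity (X ≤ Y P-a.s. implies ρ(−X) ≤ ρ(−Y)), convexity (ρ(tX+(1−t)Y) ≤ tρ(X)+(1−t)ρ(Y) for all t ∈ [0,1]), law invariance (ρ(X) = ρ(Y) whenever X and Y have the same law under P), continuity from above (X_n ↓ X P-a.s. implies ρ(X_n) ↑ ρ(X)), and that the map m ↦ ρ(−m) on real constants is continuous and strictly increasing on [0,K]. Then any solution X* of the Neyman–Pearson problem with capital constraint v ∈ [0,K] satisfies E[φX*] = v. -/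
open MeasureTheory Filter Topology Set
open scoped ENNReal

/-- Law invariance: `ρ(X) = ρ(Y)` whenever `X` and `Y` have the same law under `P`. -/
def RLawInvariant {Ω : Type*} [MeasurableSpace Ω] (P : Measure Ω) (ρ : (Ω → ℝ) → ℝ) : Prop :=
  ∀ X Y : Ω → ℝ, MemLp X ⊤ P → MemLp Y ⊤ P →
    Measure.map X P = Measure.map Y P → ρ X = ρ Y

/-- Condition (13): on real constants, `m ↦ ρ(−m)` is continuous and strictly
increasing on `[0, K]`. -/
def RConstIncreasing {Ω : Type*} [MeasurableSpace Ω] (ρ : (Ω → ℝ) → ℝ) (K : ℝ) : Prop :=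
  ContinuousOn (fun m : ℝ => ρ (fun _ => -m)) (Icc 0 K) ∧
    StrictMonoOn (fun m : ℝ => ρ (fun _ => -m)) (Icc 0 K)

section Aux
variable {Ω : Type*} [MeasurableSpace Ω] (P : Measure Ω) [IsProbabilityMeasure P]

lemma exists_half (hP : Atomless P) {A : Set Ω} (hA : MeasurableSet A) (h0 : 0 < P A) :
    ∃ B, MeasurableSet B ∧ B ⊆ A ∧ 0 < P B ∧ P B ≤ P A / 2 := by
  obtain ⟨B, hBm, hBA, hB0, hBlt⟩ := hP A hA h0
  by_cases hle : P B ≤ P A / 2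
  · exact ⟨B, hBm, hBA, hB0, hle⟩
  · refine ⟨A \ B, hA.diff hBm, diff_subset, ?_, ?_⟩
    · rw [measure_diff hBA hBm.nullMeasurableSet (measure_ne_top P B)]
      exact tsub_pos_of_lt hBlt
    · rw [measure_diff hBA hBm.nullMeasurableSet (measure_ne_top P B)]
      calc P A - P B ≤ P A - P A / 2 := tsub_le_tsub_left (le_of_lt (not_le.mp hle)) _
        _ = P A / 2 := ENNReal.sub_half (measure_ne_top P A)

lemma exists_le_pow (hP : Atomless P) {A : Set Ω} (hA : MeasurableSet A) (h0 : 0 < P A) :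
    ∀ n : ℕ, ∃ B, MeasurableSet B ∧ B ⊆ A ∧ 0 < P B ∧ P B ≤ P A * (2⁻¹ : ℝ≥0∞) ^ n := by
  intro n
  induction n with
  | zero => exact ⟨A, hA, subset_rfl, h0, by simp⟩
  | succ n ih =>
    obtain ⟨B, hBm, hBA, hB0, hBle⟩ := ih
    obtain ⟨C, hCm, hCB, hC0, hCle⟩ := exists_half P hP hBm hB0
    refine ⟨C, hCm, hCB.trans hBA, hC0, ?_⟩
    calc P C ≤ P B / 2 := hCle
      _ = P B * 2⁻¹ := by rw [div_eq_mul_inv]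
      _ ≤ (P A * (2⁻¹) ^ n) * 2⁻¹ := mul_le_mul_left hBle _
      _ = P A * (2⁻¹) ^ (n + 1) := by rw [pow_succ, mul_assoc]

lemma exists_small (hP : Atomless P) {A : Set Ω} (hA : MeasurableSet A) (h0 : 0 < P A)
    {ε : ℝ≥0∞} (hε : 0 < ε) :
    ∃ B, MeasurableSet B ∧ B ⊆ A ∧ 0 < P B ∧ P B ≤ ε := by
  obtain ⟨n, hn⟩ := ENNReal.exists_nat_gt (ENNReal.inv_ne_top.mpr hε.ne')
  obtain ⟨B, hBm, hBA, hB0, hBle⟩ := exists_le_pow P hP hA h0 n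
  refine ⟨B, hBm, hBA, hB0, hBle.trans ?_⟩
  have h2n : (ε⁻¹ : ℝ≥0∞) < 2 ^ n := by
    refine hn.trans_le ?_
    calc ((n : ℕ) : ℝ≥0∞) ≤ ((2 ^ n : ℕ) : ℝ≥0∞) := by exact_mod_cast (Nat.lt_two_pow_self (n := n)).le
      _ = 2 ^ n := by push_cast; ring
  have hin : ((2 : ℝ≥0∞) ^ n)⁻¹ ≤ ε := by
    have := ENNReal.inv_le_inv.mpr h2n.le
    rwa [inv_inv] at this
  calc P A * (2⁻¹ : ℝ≥0∞) ^ n ≤ 1 * (2⁻¹ : ℝ≥0∞) ^ n :=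
        mul_le_mul_left prob_le_one _
    _ = ((2 : ℝ≥0∞) ^ n)⁻¹ := by rw [one_mul, ENNReal.inv_pow]
    _ ≤ ε := hin

lemma exists_measure_eq (hP : Atomless P) {S : Set Ω} (hS : MeasurableSet S)
    {r : ℝ≥0∞} (hr : r ≤ P S) :
    ∃ C, MeasurableSet C ∧ C ⊆ S ∧ P C = r := by
  classical
  -- good sets
  let Good : Type _ := {C : Set Ω // MeasurableSet C ∧ C ⊆ S ∧ P C ≤ r}
  let g : Good → ℝ≥0∞ := fun C =>
    ⨆ E : {E : Set Ω // MeasurableSet E ∧ E ⊆ S \ C.1 ∧ P (C.1 ∪ E) ≤ r}, P E.1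
  have hg_le : ∀ C : Good, g C ≤ 1 := fun C => iSup_le fun E => prob_le_one
  have hstep : ∀ C : Good, ∃ E : Set Ω, MeasurableSet E ∧ E ⊆ S \ C.1 ∧
      P (C.1 ∪ E) ≤ r ∧ g C ≤ 2 * P E := by
    intro C
    by_cases hg : g C = 0
    · refine ⟨∅, MeasurableSet.empty, empty_subset _, ?_, by simp [hg]⟩
      rw [union_empty]; exact C.2.2.2
    · have hg1 : g C ≠ ∞ := (lt_of_le_of_lt (hg_le C) ENNReal.one_lt_top).ne
      have hhalf : g C / 2 < g C := ENNReal.half_lt_self hg hg1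
      obtain ⟨E, hE⟩ := lt_iSup_iff.mp hhalf
      refine ⟨E.1, E.2.1, E.2.2.1, E.2.2.2, ?_⟩
      calc g C = 2 * (g C / 2) := (ENNReal.mul_div_cancel two_ne_zero ENNReal.ofNat_ne_top).symm
        _ ≤ 2 * P E.1 := mul_le_mul_right hE.le _
  choose Efun hE1 hE2 hE3 hE4 using hstep
  let step : Good → Good := fun C =>
    ⟨C.1 ∪ Efun C, C.2.1.union (hE1 C),
      union_subset C.2.2.1 ((hE2 C).trans diff_subset), hE3 C⟩
  let seq : ℕ → Good := fun n => Nat.rec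
    (⟨∅, MeasurableSet.empty, empty_subset _, by simp⟩ : Good) (fun _ C => step C) n
  have hseq_succ : ∀ n, (seq (n+1)).1 = (seq n).1 ∪ Efun (seq n) := fun n => rfl
  have hmono : Monotone fun n => (seq n).1 := by
    apply monotone_nat_of_le_succ
    intro n; rw [hseq_succ]; exact subset_union_left
  set Cinf : Set Ω := ⋃ n, (seq n).1 with hCinf
  have hCm : MeasurableSet Cinf := MeasurableSet.iUnion fun n => (seq n).2.1
  have hCS : Cinf ⊆ S := iUnion_subset fun n => (seq n).2.2.1
  have hPC : P Cinf = ⨆ n, P (seq n).1 := (hmono.directed_le).measure_iUnion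
  have hPCr : P Cinf ≤ r := hPC.le.trans (iSup_le fun n => (seq n).2.2.2)
  refine ⟨Cinf, hCm, hCS, ?_⟩
  by_contra hne
  have hlt : P Cinf < r := lt_of_le_of_ne hPCr hne
  have hdiff_pos : 0 < P (S \ Cinf) := by
    have h1 : P (S \ Cinf) = P S - P Cinf :=
      measure_diff hCS hCm.nullMeasurableSet (measure_ne_top P _)
    rw [h1]
    exact tsub_pos_of_lt (hlt.trans_le hr)
  obtain ⟨E0, hE0m, hE0s, hE00, hE0le⟩ :=
    exists_small P hP (hS.diff hCm) hdiff_pos (tsub_pos_of_lt hlt)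
  -- E0 works at every stage
  have hstagele : ∀ n, P E0 / 2 ≤ P (Efun (seq n)) := by
    intro n
    have hsub : E0 ⊆ S \ (seq n).1 :=
      hE0s.trans (diff_subset_diff_right (subset_iUnion (fun n => (seq n).1) n))
    have hunle : P ((seq n).1 ∪ E0) ≤ r := by
      calc P ((seq n).1 ∪ E0) ≤ P (seq n).1 + P E0 := measure_union_le _ _
        _ ≤ P Cinf + (r - P Cinf) :=
            add_le_add (measure_mono (subset_iUnion (fun n => (seq n).1) n)) hE0le
        _ = r := add_tsub_cancel_of_le hlt.le
    have hgc : P E0 ≤ g (seq n) :=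
      le_iSup (fun (E : {E : Set Ω // MeasurableSet E ∧ E ⊆ S \ (seq n).1 ∧
        P ((seq n).1 ∪ E) ≤ r}) => P E.1) ⟨E0, hE0m, hsub, hunle⟩
    have h2 : P E0 ≤ 2 * P (Efun (seq n)) := hgc.trans (hE4 (seq n))
    have := ENNReal.div_le_div_right h2 2
    rwa [mul_comm, mul_div_assoc, ENNReal.div_self two_ne_zero ENNReal.ofNat_ne_top,
      mul_one] at this
  have hgrow : ∀ n : ℕ, (n : ℝ≥0∞) * (P E0 / 2) ≤ P (seq n).1 := by
    intro n
    induction n with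
    | zero => simp
    | succ n ih =>
      have hdisj : Disjoint (seq n).1 (Efun (seq n)) :=
        (disjoint_sdiff_right.mono_right (hE2 (seq n))).symm.symm
      have : P (seq (n+1)).1 = P (seq n).1 + P (Efun (seq n)) := by
        rw [hseq_succ, measure_union (disjoint_sdiff_right.mono_right (hE2 (seq n))) (hE1 (seq n))]
      rw [this]
      push_cast
      rw [add_mul, one_mul]
      exact add_le_add ih (hstagele n)
  have hc0 : (P E0 / 2) ≠ 0 := by
    simp only [ne_eq, ENNReal.div_eq_zero_iff]
    push_neg
    exact ⟨hE00.ne', ENNReal.ofNat_ne_top⟩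
  have hcT : (P E0 / 2) ≠ ∞ := by
    intro h
    exact (measure_ne_top P E0) (by simpa using (ENNReal.div_eq_top.mp h))
  obtain ⟨n, hn⟩ := ENNReal.exists_nat_gt (ENNReal.inv_ne_top.mpr hc0)
  have h1lt : 1 < (n : ℝ≥0∞) * (P E0 / 2) := by
    have := ENNReal.mul_lt_mul_left hc0 hcT hn
    rwa [ENNReal.inv_mul_cancel hc0 hcT] at this
  have : (1 : ℝ≥0∞) < 1 :=
    h1lt.trans_le ((hgrow n).trans prob_le_one)
  exact lt_irrefl _ this


lemma exists_superset_measure_eq (hP : Atomless P) {B : Set Ω} (hB : MeasurableSet B)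
    {p : ℝ≥0∞} (hp1 : p ≤ 1) (hle : P B ≤ p) :
    ∃ B', MeasurableSet B' ∧ B ⊆ B' ∧ P B' = p := by
  have hcompl : p - P B ≤ P Bᶜ := by
    rw [measure_compl hB (measure_ne_top P B), measure_univ]
    exact tsub_le_tsub_right hp1 _
  obtain ⟨C, hCm, hCs, hCP⟩ := exists_measure_eq P hP hB.compl hcompl
  refine ⟨B ∪ C, hB.union hCm, subset_union_left, ?_⟩
  rw [measure_union (disjoint_compl_right.mono_right hCs) hCm, hCP,
    add_tsub_cancel_of_le hle]

lemma map_ind_eq (c : ℝ) {A B : Set Ω} (hA : MeasurableSet A) (hB : MeasurableSet B)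
    (h : P A = P B) :
    Measure.map (fun ω => -(A.indicator (fun _ => c) ω)) P =
      Measure.map (fun ω => -(B.indicator (fun _ => c) ω)) P := by
  classical
  have key : ∀ C : Set Ω, MeasurableSet C → ∀ s : Set ℝ,
      P ((fun ω => -(C.indicator (fun _ => c) ω)) ⁻¹' s) =
        (if -c ∈ s then P C else 0) + (if (0:ℝ) ∈ s then 1 - P C else 0) := by
    intro C hC s
    by_cases h1 : -c ∈ s <;> by_cases h2 : (0:ℝ) ∈ s
    · have : (fun ω => -(C.indicator (fun _ => c) ω)) ⁻¹' s = univ := by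
        ext ω; by_cases hω : ω ∈ C <;>
          simp [Set.mem_preimage, Set.indicator_of_mem, Set.indicator_of_notMem, hω, h1, h2]
      rw [this, measure_univ, if_pos h1, if_pos h2, add_tsub_cancel_of_le prob_le_one]
    · have : (fun ω => -(C.indicator (fun _ => c) ω)) ⁻¹' s = C := by
        ext ω; by_cases hω : ω ∈ C <;>
          simp [Set.mem_preimage, Set.indicator_of_mem, Set.indicator_of_notMem, hω, h1, h2]
      rw [this, if_pos h1, if_neg h2, add_zero]
    · have : (fun ω => -(C.indicator (fun _ => c) ω)) ⁻¹' s = Cᶜ := by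
        ext ω; by_cases hω : ω ∈ C <;>
          simp [Set.mem_preimage, Set.indicator_of_mem, Set.indicator_of_notMem, hω, h1, h2]
      rw [this, if_neg h1, if_pos h2, zero_add,
        measure_compl hC (measure_ne_top P C), measure_univ]
    · have : (fun ω => -(C.indicator (fun _ => c) ω)) ⁻¹' s = ∅ := by
        ext ω; by_cases hω : ω ∈ C <;>
          simp [Set.mem_preimage, Set.indicator_of_mem, Set.indicator_of_notMem, hω, h1, h2]
      rw [this, if_neg h1, if_neg h2]; simp
  have mA : Measurable fun ω => -(A.indicator (fun _ => c) ω) :=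
    (measurable_const.indicator hA).neg
  have mB : Measurable fun ω => -(B.indicator (fun _ => c) ω) :=
    (measurable_const.indicator hB).neg
  ext s hs
  rw [Measure.map_apply mA hs, Measure.map_apply mB hs, key A hA s, key B hB s, h]

end Aux



/-- Lemma 2.4: any solution `X*` of the Neyman–Pearson problem with capital
constraint `v ∈ [0, K]` satisfies `E[φX*] = v`. -/
theorem solution_budget_eq
    {Ω : Type*} [MeasurableSpace Ω] (P : Measure Ω) [IsProbabilityMeasure P]
    (hP : Atomless P)
    (φ : Ω → ℝ) (hφm : Measurable φ) (hφint : Integrable φ P)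
    (hφpos : ∀ᵐ ω ∂P, 0 < φ ω) (hφ1 : ∫ ω, φ ω ∂P = 1)
    (K v : ℝ) (hK : 0 < K) (hv : v ∈ Icc 0 K)
    (ρ : (Ω → ℝ) → ℝ) (hmono : RMono P ρ) (hconv : RConvex P ρ)
    (hlaw : RLawInvariant P ρ) (hcont : RContFromAbove P ρ)
    (hconst : RConstIncreasing ρ K)
    (X : Ω → ℝ) (hX : IsNPSolution P ρ φ K v X) :
    ∫ ω, φ ω * X ω ∂P = v := by

  classical
  set v' := ∫ ω, φ ω * X ω ∂P with hv'
  by_contra hne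
  obtain ⟨hfeas, hopt⟩ := hX
  have hvle : v ≤ v' := hfeas.2.2
  have hlt : v < v' := lt_of_le_of_ne hvle (Ne.symm hne)
  have hv'pos : 0 < v' := lt_of_le_of_lt hv.1 hlt
  have hXmem : MemLp X ⊤ P := hfeas.1
  have hXbdd : ∀ᵐ ω ∂P, 0 ≤ X ω ∧ X ω ≤ K := hfeas.2.1
  have hXnn : ∀ᵐ ω ∂P, 0 ≤ X ω := hXbdd.mono fun ω h => h.1
  have mem0 : MemLp (fun _ : Ω => (0:ℝ)) ⊤ P := memLp_const 0
  have memInd : ∀ (B : Set Ω), MeasurableSet B → ∀ c : ℝ,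
      MemLp (B.indicator (fun _ => c)) ⊤ P :=
    fun B hB c => MemLp.indicator hB (memLp_const c)
  set z := ρ (fun _ : Ω => (0:ℝ)) with hz
  -- Step 1 : ρ(-X) = z
  have hzleX : z ≤ ρ (fun ω => -X ω) := by
    have h := hmono (fun _ => (0:ℝ)) X mem0 hXmem hXnn
    exact le_of_eq_of_le (congrArg ρ (funext fun _ => neg_zero.symm)) h
  have hXlez : ρ (fun ω => -X ω) ≤ z := by
    set s : ℝ := v / v' with hs
    have hs0 : 0 ≤ s := div_nonneg hv.1 hv'pos.le
    have hs1 : s < 1 := (div_lt_one hv'pos).mpr hlt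
    set Y : Ω → ℝ := fun ω => s * X ω with hY
    have hYfeas : Feasible P φ K v Y := by
      refine ⟨hXmem.const_mul s, ?_, ?_⟩
      · filter_upwards [hXbdd] with ω hω
        constructor
        · exact mul_nonneg hs0 hω.1
        · calc s * X ω ≤ 1 * X ω := mul_le_mul_of_nonneg_right hs1.le hω.1
            _ = X ω := one_mul _
            _ ≤ K := hω.2
      · have hint : ∫ ω, φ ω * Y ω ∂P = s * v' := by
          calc ∫ ω, φ ω * Y ω ∂P = ∫ ω, s * (φ ω * X ω) ∂P := by
                congr 1; funext ω; simp only [hY]; ring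
            _ = s * v' := by rw [integral_const_mul]
        rw [hint, hs, div_mul_cancel₀ _ hv'pos.ne']
    have h1 : ρ (fun ω => -X ω) ≤ ρ (fun ω => -Y ω) := hopt Y hYfeas
    have h2 : ρ (fun ω => -Y ω) ≤ (1 - s) * z + (1 - (1 - s)) * ρ (fun ω => -X ω) := by
      have h := hconv (fun _ => (0:ℝ)) (fun ω => -X ω) mem0 hXmem.neg (1 - s)
        (by linarith) (by linarith)
      have e : (fun ω => (1 - s) * (0:ℝ) + (1 - (1 - s)) * (-X ω)) = (fun ω => -Y ω) := by
        funext ω; simp only [hY]; ring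
      exact le_of_eq_of_le (congrArg ρ e.symm) h
    have h3 : ρ (fun ω => -X ω) ≤ (1 - s) * z + (1 - (1 - s)) * ρ (fun ω => -X ω) :=
      h1.trans h2
    have h1s : (0:ℝ) < 1 - s := by linarith
    nlinarith [h3, h1s]
  have hρX : ρ (fun ω => -X ω) = z := le_antisymm hXlez hzleX
  -- Step 2 : find δ > 0 and a measurable set A with δ·1_A ≤ X a.e., P A > 0
  have hae : AEStronglyMeasurable X P := hXmem.1
  set X' : Ω → ℝ := hae.mk X with hX'def
  have hX'meas : Measurable X' := hae.stronglyMeasurable_mk.measurable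
  have hX'eq : X =ᵐ[P] X' := hae.ae_eq_mk
  have hXne : ¬ (X =ᵐ[P] (fun _ => (0:ℝ))) := by
    intro hcontra
    have : v' = 0 := by
      rw [hv']
      calc ∫ ω, φ ω * X ω ∂P = ∫ ω, (0:ℝ) ∂P :=
            integral_congr_ae (hcontra.mono fun ω h => by simp [h])
        _ = 0 := integral_zero _ _
    linarith
  have hX'ne : ¬ (X' =ᵐ[P] (fun _ => (0:ℝ))) := fun hc => hXne (hX'eq.trans hc)
  have hposne : P {ω | X' ω ≠ 0} ≠ 0 := by
    intro hc
    exact hX'ne (by rwa [Filter.EventuallyEq, ae_iff])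
  have hX'nn : ∀ᵐ ω ∂P, 0 ≤ X' ω := by
    filter_upwards [hX'eq, hXnn] with ω he hn
    rw [← he]; exact hn
  have hneg0 : P {ω | X' ω < 0} = 0 := by
    have h1 : {ω | X' ω < 0} = {ω | ¬ (0 ≤ X' ω)} := by ext ω; simp [not_le]
    rw [h1]; exact ae_iff.mp hX'nn
  have hpos : P {ω | 0 < X' ω} ≠ 0 := by
    intro hc
    apply hposne
    have hsub : {ω | X' ω ≠ 0} ⊆ {ω | 0 < X' ω} ∪ {ω | X' ω < 0} := by
      intro ω hω
      rcases lt_or_gt_of_ne hω with h | h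
      · exact Or.inr h
      · exact Or.inl h
    have := (measure_mono hsub).trans (measure_union_le (μ := P) {ω | 0 < X' ω} {ω | X' ω < 0})
    rw [hc, hneg0, add_zero] at this
    exact nonpos_iff_eq_zero.mp this
  have hUnion : {ω | 0 < X' ω} = ⋃ n : ℕ, {ω | 1 / ((n:ℝ) + 1) ≤ X' ω} := by
    ext ω
    simp only [Set.mem_setOf_eq, Set.mem_iUnion]
    constructor
    · intro h
      obtain ⟨n, hn⟩ := exists_nat_one_div_lt h
      exact ⟨n, hn.le⟩
    · rintro ⟨n, hn⟩
      exact lt_of_lt_of_le (by positivity) hn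
  obtain ⟨n, hn⟩ : ∃ n : ℕ, P {ω | 1 / ((n:ℝ) + 1) ≤ X' ω} ≠ 0 := by
    by_contra hc
    push_neg at hc
    exact hpos (by rw [hUnion]; exact measure_iUnion_null hc)
  set δ : ℝ := min (1 / ((n:ℝ) + 1)) K with hδdef
  have hδpos : 0 < δ := lt_min (by positivity) hK
  have hδK : δ ≤ K := min_le_right _ _
  set A : Set Ω := {ω | δ ≤ X' ω} with hA
  have hAm : MeasurableSet A := hX'meas measurableSet_Ici
  have hPA : 0 < P A := by
    have hsub : {ω | 1 / ((n:ℝ) + 1) ≤ X' ω} ⊆ A := by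
      intro ω hω
      simp only [hA, Set.mem_setOf_eq] at hω ⊢
      exact le_trans (min_le_left _ _) hω
    exact lt_of_lt_of_le (pos_iff_ne_zero.mpr hn) (measure_mono hsub)
  have hindle : ∀ᵐ ω ∂P, A.indicator (fun _ => δ) ω ≤ X ω := by
    filter_upwards [hX'eq, hXnn] with ω he hnn
    by_cases hω : ω ∈ A
    · rw [Set.indicator_of_mem hω, he]; exact hω
    · rw [Set.indicator_of_notMem hω]; exact hnn
  -- lower bound for indicators
  have lower : ∀ (c : ℝ), 0 ≤ c → ∀ B : Set Ω, MeasurableSet B →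
      z ≤ ρ (fun ω => -(B.indicator (fun _ => c) ω)) := by
    intro c hc B hB
    have h := hmono (fun _ => (0:ℝ)) (B.indicator (fun _ => c)) mem0 (memInd B hB c)
      (Filter.Eventually.of_forall fun ω => Set.indicator_nonneg (fun _ _ => hc) ω)
    exact le_of_eq_of_le (congrArg ρ (funext fun _ => neg_zero.symm)) h
  -- the key induction
  have key : ∀ k : ℕ, ∀ B : Set Ω, MeasurableSet B → P B ≤ 2 ^ k * P A →
      ρ (fun ω => -(B.indicator (fun _ => δ / 2 ^ k) ω)) = z := by
    intro k
    induction k with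
    | zero =>
      intro B hB hPB
      rw [pow_zero, one_mul] at hPB
      have e0 : δ / (2:ℝ) ^ (0:ℕ) = δ := by norm_num
      rw [e0]
      obtain ⟨B', hB'm, hBB', hPB'⟩ := exists_superset_measure_eq P hP hB prob_le_one hPB
      refine le_antisymm ?_ (lower δ hδpos.le B hB)
      calc ρ (fun ω => -(B.indicator (fun _ => δ) ω))
          ≤ ρ (fun ω => -(B'.indicator (fun _ => δ) ω)) :=
            hmono _ _ (memInd B hB δ) (memInd B' hB'm δ)
              (Filter.Eventually.of_forall fun ω =>
                Set.indicator_le_indicator_of_subset hBB' (fun _ => hδpos.le) ω)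
        _ = ρ (fun ω => -(A.indicator (fun _ => δ) ω)) :=
            hlaw _ _ ((memInd B' hB'm δ).neg) ((memInd A hAm δ).neg)
              (map_ind_eq P δ hB'm hAm hPB')
        _ ≤ ρ (fun ω => -X ω) := hmono _ _ (memInd A hAm δ) hXmem hindle
        _ = z := hρX
    | succ k ih =>
      intro B hB hPB
      obtain ⟨B1, hB1m, hB1B, hPB1⟩ := exists_measure_eq P hP hB
        (ENNReal.half_le_self : P B / 2 ≤ P B)
      have hB2m : MeasurableSet (B \ B1) := hB.diff hB1m
      have hPB2 : P (B \ B1) = P B / 2 := by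
        rw [measure_diff hB1B hB1m.nullMeasurableSet (measure_ne_top P B1), hPB1,
          ENNReal.sub_half (measure_ne_top P B)]
      have hle : P B / 2 ≤ 2 ^ k * P A := by
        have h1 : P B / 2 ≤ (2 ^ (k+1) * P A) / 2 := ENNReal.div_le_div_right hPB 2
        have h2 : (2:ℝ≥0∞) ^ (k+1) * P A / 2 = 2 ^ k * P A := by
          rw [show (2:ℝ≥0∞) ^ (k+1) * P A = 2 * (2 ^ k * P A) from by rw [pow_succ]; ring,
            mul_comm (2:ℝ≥0∞), mul_div_assoc, ENNReal.div_self two_ne_zero ENNReal.ofNat_ne_top,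
            mul_one]
        rw [h2] at h1; exact h1
      have e2 : δ / 2 ^ (k+1) = δ / 2 ^ k / 2 := by
        rw [div_div, ← pow_succ]
      refine le_antisymm ?_ (lower _ (by positivity) B hB)
      have efun : (fun ω => (2⁻¹:ℝ) * (-(B1.indicator (fun _ => δ / 2 ^ k) ω)) +
          (1 - 2⁻¹) * (-((B \ B1).indicator (fun _ => δ / 2 ^ k) ω))) =
          (fun ω => -(B.indicator (fun _ => δ / 2 ^ (k+1)) ω)) := by
        funext ω
        rw [e2]
        by_cases h1 : ω ∈ B1
        · have hBω : ω ∈ B := hB1B h1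
          have h2 : ω ∉ B \ B1 := fun h => h.2 h1
          rw [Set.indicator_of_mem h1, Set.indicator_of_notMem h2, Set.indicator_of_mem hBω]
          ring
        · by_cases hBω : ω ∈ B
          · have h2 : ω ∈ B \ B1 := ⟨hBω, h1⟩
            rw [Set.indicator_of_notMem h1, Set.indicator_of_mem h2, Set.indicator_of_mem hBω]
            ring
          · have h2 : ω ∉ B \ B1 := fun h => hBω h.1
            rw [Set.indicator_of_notMem h1, Set.indicator_of_notMem h2,
              Set.indicator_of_notMem hBω]
            ring
      have h := hconv (fun ω => -(B1.indicator (fun _ => δ / 2 ^ k) ω))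
        (fun ω => -((B \ B1).indicator (fun _ => δ / 2 ^ k) ω))
        ((memInd B1 hB1m _).neg) ((memInd (B \ B1) hB2m _).neg)
        (2⁻¹ : ℝ) (by norm_num) (by norm_num)
      rw [ih B1 hB1m (hPB1.trans_le hle), ih (B \ B1) hB2m (hPB2.trans_le hle)] at h
      have hzz : (2⁻¹ : ℝ) * z + (1 - 2⁻¹) * z = z := by ring
      exact le_of_eq_of_le (congrArg ρ efun.symm) (h.trans (le_of_eq hzz))
  -- choose k with 1 ≤ 2^k * P A
  obtain ⟨kk, hkk⟩ : ∃ k : ℕ, (1:ℝ≥0∞) ≤ 2 ^ k * P A := by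
    obtain ⟨m, hm⟩ := ENNReal.exists_nat_gt (ENNReal.inv_ne_top.mpr hPA.ne')
    refine ⟨m, ?_⟩
    have h2n : ((m:ℕ) : ℝ≥0∞) ≤ 2 ^ m := by
      calc ((m:ℕ) : ℝ≥0∞) ≤ ((2 ^ m : ℕ) : ℝ≥0∞) := by exact_mod_cast (Nat.lt_two_pow_self (n := m)).le
        _ = 2 ^ m := by push_cast; ring
    calc (1:ℝ≥0∞) = (P A)⁻¹ * P A := (ENNReal.inv_mul_cancel hPA.ne' (measure_ne_top P A)).symm
      _ ≤ 2 ^ m * P A := mul_le_mul_left (hm.le.trans h2n) _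
  have hz2 := key kk Set.univ MeasurableSet.univ (by rw [measure_univ]; exact hkk)
  have efin : (fun ω : Ω => -(Set.univ.indicator (fun _ => δ / 2 ^ kk) ω)) =
      (fun _ : Ω => -(δ / 2 ^ kk)) := by
    funext ω; rw [Set.indicator_of_mem (Set.mem_univ ω)]
  rw [efin] at hz2
  have hck : (0:ℝ) < δ / 2 ^ kk := by positivity
  have hckK : δ / 2 ^ kk ≤ K := by
    calc δ / 2 ^ kk ≤ δ := by
          apply div_le_self hδpos.le
          exact one_le_pow₀ (by norm_num : (1:ℝ) ≤ 2)
      _ ≤ K := hδK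
  have hsm := hconst.2 (Set.mem_Icc.mpr ⟨le_refl _, hK.le⟩)
    (Set.mem_Icc.mpr ⟨hck.le, hckK⟩) hck
  have hsm' : ρ (fun _ : Ω => -(0:ℝ)) < ρ (fun _ : Ω => -(δ / 2 ^ kk)) := hsm
  rw [hz2] at hsm'
  have : ρ (fun _ : Ω => -(0:ℝ)) = z := congrArg ρ (funext fun _ => neg_zero)
  rw [this] at hsm'
  exact lt_irrefl z hsm'
end

section
/- Suppose ρ : L^∞(Ω,𝓕,P) → ℝ satisfies monotonicity (X ≤ Y P-a.s. implies ρ(−X) ≤ ρ(−Y)), convexity (ρ(tX+(1−t)Y) ≤ tρ(X)+(1−t)ρ(Y) for all t ∈ [0,1]), law invariance (ρ(X) = ρ(Y) whenever X and Y have the same law under P), continuity from above (X_n ↓ X P-a.s. implies ρ(X_n) ↑ ρ(X)), and that m ↦ ρ(−m) is continuous and strictly increasing on [0,K]. If φ has a continuous distribution function and the Neyman–Pearson problem at level v has at most one σ(φ)-measurable solution up to P-null sets, then it has at most one solution up to P-null sets in the class of all 𝓕-measurable random variables. -/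
open MeasureTheory Filter Topology Set

section NPAuxiliary

open ProbabilityTheory
open scoped ENNReal NNReal

noncomputable def npQuant (G : ℝ → ℝ) (K u : ℝ) : ℝ := sInf ({t | min u 1 ≤ G t} ∩ Ici 0)

section Quant

variable {G : ℝ → ℝ} {K : ℝ}

lemma npS_nonempty (hGK : 1 ≤ G K) (hK : 0 ≤ K) (u : ℝ) :
    ({t | min u 1 ≤ G t} ∩ Ici 0).Nonempty :=
  ⟨K, (min_le_right u 1).trans hGK, hK⟩

lemma npS_bddBelow (u : ℝ) : BddBelow ({t | min u 1 ≤ G t} ∩ Ici 0) :=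
  ⟨0, fun _ hx => hx.2⟩

lemma npQuant_mem_Icc (hGK : 1 ≤ G K) (hK : 0 ≤ K) (u : ℝ) : npQuant G K u ∈ Icc 0 K :=
  ⟨le_csInf (npS_nonempty hGK hK u) fun _ hb => hb.2,
    csInf_le (npS_bddBelow u) ⟨(min_le_right u 1).trans hGK, hK⟩⟩

lemma npQuant_monotone (hGK : 1 ≤ G K) (hK : 0 ≤ K) : Monotone (npQuant G K) := by
  intro u v huv
  refine csInf_le_csInf (npS_bddBelow u) (npS_nonempty hGK hK v) ?_
  intro t ht
  exact ⟨le_trans (min_le_min huv le_rfl) ht.1, ht.2⟩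

lemma npQuant_le_iff (hG : Monotone G) (hGrc : ∀ x, ContinuousWithinAt G (Ici x) x)
    (hGK : 1 ≤ G K) (hK : 0 ≤ K) {u t : ℝ} (hu : u ≤ 1) (ht : 0 ≤ t) :
    npQuant G K u ≤ t ↔ u ≤ G t := by
  constructor
  · intro h
    have h1 : ∀ x, npQuant G K u < x → min u 1 ≤ G x := by
      intro x hx
      obtain ⟨t', ht', hlt⟩ := exists_lt_of_csInf_lt (npS_nonempty hGK hK u) hx
      exact ht'.1.trans (hG hlt.le)
    have h2 : min u 1 ≤ G (npQuant G K u) := by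
      have hts : Tendsto G (𝓝[>] (npQuant G K u)) (𝓝 (G (npQuant G K u))) :=
        (hGrc _).mono Ioi_subset_Ici_self
      refine ge_of_tendsto hts ?_
      filter_upwards [self_mem_nhdsWithin] with x hx using h1 x hx
    calc u = min u 1 := (min_eq_left hu).symm
    _ ≤ G (npQuant G K u) := h2
    _ ≤ G t := hG h
  · intro h
    exact csInf_le (npS_bddBelow u) ⟨le_trans (min_le_left u 1) h, ht⟩

end Quant

/-- Probability integral transform. -/
lemma np_pit {Ω : Type*} [MeasurableSpace Ω] (P : Measure Ω) [IsProbabilityMeasure P]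
    {φ : Ω → ℝ} (hφm : Measurable φ)
    (hFc : Continuous (cdf (P.map φ))) {s : ℝ} (hs0 : 0 ≤ s) (hs1 : s ≤ 1) :
    P {ω | cdf (P.map φ) (φ ω) ≤ s} = ENNReal.ofReal s := by
  haveI : IsProbabilityMeasure (P.map φ) := Measure.isProbabilityMeasure_map hφm.aemeasurable
  set F : ℝ → ℝ := fun x => cdf (P.map φ) x with hF
  have hmono : Monotone F := monotone_cdf _
  have hSm : MeasurableSet {x | F x ≤ s} :=
    (isClosed_le hFc continuous_const).measurableSet
  have hmap : P {ω | F (φ ω) ≤ s} = (P.map φ) {x | F x ≤ s} := by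
    rw [Measure.map_apply hφm hSm]; rfl
  by_cases hne : {x | F x ≤ s}.Nonempty
  · by_cases hba : BddAbove {x | F x ≤ s}
    · set a := sSup {x | F x ≤ s} with ha
      have hclosed : IsClosed {x | F x ≤ s} := isClosed_le hFc continuous_const
      have haS : F a ≤ s := hclosed.csSup_mem hne hba
      have hSeq : {x | F x ≤ s} = Iic a := by
        ext x
        exact ⟨fun hx => le_csSup hba hx, fun hx => le_trans (hmono hx) haS⟩
      have hFas : F a = s := by
        refine le_antisymm haS ?_
        have hts : Tendsto F (𝓝[>] a) (𝓝 (F a)) := (hFc.continuousAt).continuousWithinAt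
        refine ge_of_tendsto hts ?_
        filter_upwards [self_mem_nhdsWithin] with x hx
        by_contra hcon
        push_neg at hcon
        exact absurd (le_csSup hba hcon.le) (not_le.mpr hx)
      rw [hmap, hSeq, ← ofReal_cdf (P.map φ) a]
      exact congrArg ENNReal.ofReal hFas
    · have hSuniv : {x | F x ≤ s} = univ := by
        ext x
        simp only [mem_setOf_eq, mem_univ, iff_true]
        obtain ⟨y, hy, hxy⟩ := not_bddAbove_iff.mp hba x
        exact le_trans (hmono hxy.le) hy
      have h1s : (1:ℝ) ≤ s := by
        by_contra hcon
        push_neg at hcon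
        obtain ⟨x, hx⟩ :=
          ((tendsto_cdf_atTop (P.map φ)).eventually (eventually_gt_nhds hcon)).exists
        have hxS : x ∈ {x | F x ≤ s} := hSuniv.symm ▸ mem_univ x
        exact absurd hxS (not_le.mpr hx)
      have hs : s = 1 := le_antisymm hs1 h1s
      rw [hmap, hSuniv, hs]
      simp
  · have hs0' : s ≤ 0 := by
      by_contra hcon
      push_neg at hcon
      obtain ⟨x, hx⟩ :=
        ((tendsto_cdf_atBot (P.map φ)).eventually (eventually_lt_nhds hcon)).exists
      exact hne ⟨x, hx.le⟩
    have hs : s = 0 := le_antisymm hs0' hs0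
    have hempty : {x | F x ≤ s} = ∅ := by
      rw [eq_empty_iff_forall_notMem]
      exact fun x hx => hne ⟨x, hx⟩
    rw [hmap, hempty, hs]
    simp

/-- Key construction: a `σ(φ)`-measurable, comonotone rearrangement of `W` with the same
law and a larger `φ`-weighted integral. -/
lemma np_key {Ω : Type*} [MeasurableSpace Ω] (P : Measure Ω) [IsProbabilityMeasure P]
    {φ : Ω → ℝ} (hφm : Measurable φ) (hφint : Integrable φ P)
    (hφpos : ∀ᵐ ω ∂P, 0 < φ ω)
    (hFcont : Continuous fun x : ℝ => (P {ω | φ ω ≤ x}).toReal)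
    {K : ℝ} (hK : 0 ≤ K) {W : Ω → ℝ} (hWm : Measurable W)
    (hWb : ∀ᵐ ω ∂P, 0 ≤ W ω ∧ W ω ≤ K) :
    ∃ Wh : Ω → ℝ, Measurable Wh ∧
      @Measurable Ω ℝ (MeasurableSpace.comap φ Real.measurableSpace) _ Wh ∧
      (∀ ω, Wh ω ∈ Icc 0 K) ∧ P.map Wh = P.map W ∧
      ∫ ω, φ ω * W ω ∂P ≤ ∫ ω, φ ω * Wh ω ∂P := by
  haveI hPμφ : IsProbabilityMeasure (P.map φ) := Measure.isProbabilityMeasure_map hφm.aemeasurable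
  haveI hPμW : IsProbabilityMeasure (P.map W) := Measure.isProbabilityMeasure_map hWm.aemeasurable
  set F : ℝ → ℝ := fun x => cdf (P.map φ) x with hFdef
  set G : ℝ → ℝ := fun x => cdf (P.map W) x with hGdef
  have hFc : Continuous F := by
    have h : F = fun x : ℝ => (P {ω | φ ω ≤ x}).toReal := by
      funext x
      have h1 : F x = ((P.map φ) (Iic x)).toReal := cdf_eq_real _ _
      rw [h1, Measure.map_apply hφm measurableSet_Iic]
      rfl
    rw [h]; exact hFcont
  have hFmono : Monotone F := monotone_cdf _
  have hGmono : Monotone G := monotone_cdf _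
  have hGrc : ∀ x, ContinuousWithinAt G (Ici x) x := fun x =>
    (cdf (P.map W)).right_continuous x
  have hWK : P {ω | W ω ≤ K} = 1 := by
    have hm : MeasurableSet {ω | W ω ≤ K} := hWm measurableSet_Iic
    rw [← prob_compl_eq_zero_iff hm]
    have h := hWb.mono fun ω hω => hω.2
    rw [ae_iff] at h
    simpa [compl_setOf] using h
  have hGK : 1 ≤ G K := by
    have h : G K = 1 := by
      have h1 : G K = ((P.map W) (Iic K)).toReal := cdf_eq_real _ _
      rw [h1, Measure.map_apply hWm measurableSet_Iic]
      have h2 : W ⁻¹' Iic K = {ω | W ω ≤ K} := rfl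
      rw [h2, hWK]
      simp
    exact h.ge
  set q : ℝ → ℝ := npQuant G K with hqdef
  have hqmono : Monotone q := npQuant_monotone hGK hK
  have hqm : Measurable q := hqmono.measurable
  set Wh : Ω → ℝ := fun ω => q (F (φ ω)) with hWhdef
  have hWhm : Measurable Wh := (hqm.comp hFc.measurable).comp hφm
  have hWhcm : @Measurable Ω ℝ (MeasurableSpace.comap φ Real.measurableSpace) _ Wh := by
    have hφcm : @Measurable Ω ℝ (MeasurableSpace.comap φ Real.measurableSpace) _ φ :=
      measurable_iff_comap_le.mpr le_rfl
    exact (hqm.comp hFc.measurable).comp hφcm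
  have hWhIcc : ∀ ω, Wh ω ∈ Icc 0 K := fun ω => npQuant_mem_Icc hGK hK _
  have hU : ∀ ω, F (φ ω) ∈ Icc (0:ℝ) 1 := fun ω => ⟨cdf_nonneg _ _, cdf_le_one _ _⟩
  have hWle0 : ∀ t : ℝ, t < 0 → P {ω | W ω ≤ t} = 0 := by
    intro t ht
    have h := hWb.mono fun ω hω => not_le.mpr (lt_of_lt_of_le ht hω.1)
    rw [ae_iff] at h
    simpa using h
  have hcdf : ∀ t : ℝ, P {ω | Wh ω ≤ t} = P {ω | W ω ≤ t} := by
    intro t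
    rcases le_or_gt 0 t with ht | ht
    · have hset : {ω | Wh ω ≤ t} = {ω | F (φ ω) ≤ G t} := by
        ext ω
        exact npQuant_le_iff hGmono hGrc hGK hK (hU ω).2 ht
      rw [hset]
      simp only [hFdef]
      rw [np_pit P hφm hFc (cdf_nonneg _ _) (cdf_le_one _ _)]
      rw [show ENNReal.ofReal (G t) = (P.map W) (Iic t) from ofReal_cdf _ t,
        Measure.map_apply hWm measurableSet_Iic]
      rfl
    · have h1 : {ω | Wh ω ≤ t} = ∅ := by
        rw [eq_empty_iff_forall_notMem]
        exact fun ω h => absurd (le_trans (hWhIcc ω).1 h) (not_le.mpr ht)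
      rw [h1, measure_empty, hWle0 t ht]
  have hmapWh : P.map Wh = P.map W := by
    refine Measure.ext_of_Iic _ _ fun t => ?_
    rw [Measure.map_apply hWhm measurableSet_Iic, Measure.map_apply hWm measurableSet_Iic]
    exact hcdf t
  -- Hardy–Littlewood part
  set ψ : Ω → ℝ≥0∞ := fun ω => ENNReal.ofReal (φ ω) with hψdef
  have hψm : Measurable ψ := hφm.ennreal_ofReal
  have hψfin : ∫⁻ ω, ψ ω ∂P ≠ ∞ := hφint.lintegral_lt_top.ne
  set μ' := P.withDensity ψ with hμ'def
  haveI : IsFiniteMeasure μ' := isFiniteMeasure_withDensity hψfin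
  have hac : μ' ≪ P := withDensity_absolutelyContinuous P ψ
  have layer : ∀ (V : Ω → ℝ), Measurable V → (0 ≤ᵐ[P] V) →
      ∫⁻ ω, ψ ω * ENNReal.ofReal (V ω) ∂P = ∫⁻ t in Ioi (0:ℝ), μ' {ω | t < V ω} := by
    intro V hVm hVnn
    have h1 : ∫⁻ ω, ENNReal.ofReal (V ω) ∂μ' = ∫⁻ ω, ψ ω * ENNReal.ofReal (V ω) ∂P :=
      lintegral_withDensity_eq_lintegral_mul P hψm hVm.ennreal_ofReal
    rw [← h1]
    exact lintegral_eq_lintegral_meas_lt μ' (hVnn.filter_mono hac.ae_le) hVm.aemeasurable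
  have hcomp : ∀ t : ℝ, μ' {ω | t < W ω} ≤ μ' {ω | t < Wh ω} := by
    intro t
    rcases lt_or_ge t 0 with ht | ht
    · have h : {ω | t < Wh ω} = univ :=
        eq_univ_of_forall fun ω => lt_of_lt_of_le ht (hWhIcc ω).1
      rw [h]
      exact measure_mono (subset_univ _)
    · set B := {ω | t < W ω} with hBdef
      set C := {ω | t < Wh ω} with hCdef
      have hBm : MeasurableSet B := measurableSet_lt measurable_const hWm
      have hCm : MeasurableSet C := measurableSet_lt measurable_const hWhm
      have hPBC : P B = P C := by
        have hmB : MeasurableSet {ω | W ω ≤ t} := hWm measurableSet_Iic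
        have hmC : MeasurableSet {ω | Wh ω ≤ t} := hWhm measurableSet_Iic
        have hBc : B = {ω | W ω ≤ t}ᶜ := by ext ω; simp [hBdef, not_le]
        have hCc : C = {ω | Wh ω ≤ t}ᶜ := by ext ω; simp [hCdef, not_le]
        rw [hBc, hCc, measure_compl hmB (measure_ne_top _ _),
          measure_compl hmC (measure_ne_top _ _), hcdf t]
      have hCeq : C = {ω | G t < F (φ ω)} := by
        ext ω
        simp only [hCdef, mem_setOf_eq, ← not_le]
        exact not_congr (npQuant_le_iff hGmono hGrc hGK hK (hU ω).2 ht)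
      set T := {x : ℝ | G t < F x} with hTdef
      by_cases hTne : T.Nonempty
      · by_cases hTbb : BddBelow T
        · set a := sInf T with hadef
          have hCub : ∀ ω, ω ∈ C → ENNReal.ofReal a ≤ ψ ω := by
            intro ω hω
            have hin : φ ω ∈ T := by rw [hCeq] at hω; exact hω
            exact ENNReal.ofReal_le_ofReal (csInf_le hTbb hin)
          have hCcub : ∀ ω, ω ∉ C → ψ ω ≤ ENNReal.ofReal a := by
            intro ω hω
            have hφT : φ ω ∉ T := by rw [hCeq] at hω; exact hω
            have hlb : φ ω ∈ lowerBounds T := by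
              intro y hy
              by_contra hcon
              push_neg at hcon
              exact hφT (lt_of_lt_of_le hy (hFmono hcon.le))
            exact ENNReal.ofReal_le_ofReal (le_csInf hTne hlb)
          have hμ'BC : μ' (B \ C) ≤ ENNReal.ofReal a * P (B \ C) := by
            rw [hμ'def, withDensity_apply ψ (hBm.diff hCm)]
            calc ∫⁻ ω in B \ C, ψ ω ∂P ≤ ∫⁻ _ in B \ C, ENNReal.ofReal a ∂P :=
                  setLIntegral_mono measurable_const fun ω hω => hCcub ω hω.2
            _ = ENNReal.ofReal a * P (B \ C) := by rw [setLIntegral_const]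
          have hμ'CB : ENNReal.ofReal a * P (C \ B) ≤ μ' (C \ B) := by
            rw [hμ'def, withDensity_apply ψ (hCm.diff hBm)]
            calc ENNReal.ofReal a * P (C \ B)
                = ∫⁻ _ in C \ B, ENNReal.ofReal a ∂P := by rw [setLIntegral_const]
            _ ≤ ∫⁻ ω in C \ B, ψ ω ∂P :=
                  setLIntegral_mono hψm fun ω hω => hCub ω hω.1
          have hPdiff : P (B \ C) = P (C \ B) := by
            have h1 : P (B \ C) + P (B ∩ C) = P B := measure_diff_add_inter B hCm
            have h2 : P (C \ B) + P (C ∩ B) = P C := measure_diff_add_inter C hBm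
            rw [inter_comm C B] at h2
            have h3 : P (B \ C) + P (B ∩ C) = P (C \ B) + P (B ∩ C) := by
              rw [h1, h2, hPBC]
            rw [add_comm (P (B \ C)), add_comm (P (C \ B))] at h3
            exact ((ENNReal.cancel_of_ne (measure_ne_top P (B ∩ C))).inj).mp h3
          calc μ' B = μ' (B ∩ C) + μ' (B \ C) := (measure_inter_add_diff B hCm).symm
          _ ≤ μ' (B ∩ C) + ENNReal.ofReal a * P (B \ C) := add_le_add_right hμ'BC _
          _ = μ' (B ∩ C) + ENNReal.ofReal a * P (C \ B) := by rw [hPdiff]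
          _ ≤ μ' (B ∩ C) + μ' (C \ B) := add_le_add_right hμ'CB _
          _ = μ' (C ∩ B) + μ' (C \ B) := by rw [inter_comm]
          _ = μ' C := measure_inter_add_diff C hBm
        · have hCuniv : C = univ := by
            rw [hCeq]
            refine eq_univ_of_forall fun ω => ?_
            obtain ⟨y, hy, hxy⟩ := not_bddBelow_iff.mp hTbb (φ ω)
            exact lt_of_lt_of_le hy (hFmono hxy.le)
          rw [hCuniv]
          exact measure_mono (subset_univ _)
      · have hC0 : C = ∅ := by
          rw [hCeq, eq_empty_iff_forall_notMem]
          exact fun ω hω => hTne ⟨φ ω, hω⟩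
        have hPB0 : P B = 0 := by rw [hPBC, hC0, measure_empty]
        rw [hac hPB0]
        exact zero_le
  have hφnn : ∀ᵐ ω ∂P, 0 ≤ φ ω := hφpos.mono fun ω h => h.le
  have hWhnn : 0 ≤ᵐ[P] Wh := Eventually.of_forall fun ω => (hWhIcc ω).1
  have hWnn : 0 ≤ᵐ[P] W := hWb.mono fun ω h => h.1
  have hLle : ∫⁻ ω, ψ ω * ENNReal.ofReal (W ω) ∂P
      ≤ ∫⁻ ω, ψ ω * ENNReal.ofReal (Wh ω) ∂P := by
    rw [layer W hWm hWnn, layer Wh hWhm hWhnn]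
    exact lintegral_mono fun t => hcomp t
  have hLfin : ∫⁻ ω, ψ ω * ENNReal.ofReal (Wh ω) ∂P ≠ ∞ := by
    have hle : ∫⁻ ω, ψ ω * ENNReal.ofReal (Wh ω) ∂P ≤ ∫⁻ ω, ψ ω * ENNReal.ofReal K ∂P :=
      lintegral_mono fun ω => mul_le_mul_right (ENNReal.ofReal_le_ofReal (hWhIcc ω).2) _
    refine ne_of_lt (lt_of_le_of_lt hle ?_)
    rw [lintegral_mul_const _ hψm]
    exact ENNReal.mul_lt_top hφint.lintegral_lt_top ENNReal.ofReal_lt_top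
  have hint_eq : ∀ (V : Ω → ℝ), Measurable V → (0 ≤ᵐ[P] V) →
      ∫ ω, φ ω * V ω ∂P = (∫⁻ ω, ψ ω * ENNReal.ofReal (V ω) ∂P).toReal := by
    intro V hVm hVnn
    have hnn : 0 ≤ᵐ[P] fun ω => φ ω * V ω := by
      filter_upwards [hφnn, hVnn] with ω h1 h2 using mul_nonneg h1 h2
    have hsm : AEStronglyMeasurable (fun ω => φ ω * V ω) P :=
      (hφm.mul hVm).aestronglyMeasurable
    rw [integral_eq_lintegral_of_nonneg_ae hnn hsm]
    congr 1
    refine lintegral_congr_ae ?_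
    filter_upwards [hφnn] with ω h1
    exact ENNReal.ofReal_mul h1
  refine ⟨Wh, hWhm, hWhcm, hWhIcc, hmapWh, ?_⟩
  rw [hint_eq W hWm hWnn, hint_eq Wh hWhm hWhnn]
  exact (ENNReal.toReal_le_toReal (ne_of_lt (lt_of_le_of_lt hLle hLfin.lt_top)) hLfin).mpr hLle

lemma np_sol_congr {Ω : Type*} [MeasurableSpace Ω] (P : Measure Ω)
    (ρ : (Ω → ℝ) → ℝ) (φ : Ω → ℝ) (K v : ℝ)
    (hlaw : RLawInvariant P ρ) {X X' : Ω → ℝ} (hX : IsNPSolution P ρ φ K v X)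
    (hXX' : X =ᵐ[P] X') : IsNPSolution P ρ φ K v X' := by
  obtain ⟨⟨hXmem, hXb, hXi⟩, hXopt⟩ := hX
  have hmem' : MemLp X' ⊤ P := hXmem.ae_eq hXX'
  have hb' : ∀ᵐ ω ∂P, 0 ≤ X' ω ∧ X' ω ≤ K := by
    filter_upwards [hXb, hXX'] with ω h1 h2
    rw [← h2]; exact h1
  have hi' : ∫ ω, φ ω * X' ω ∂P = ∫ ω, φ ω * X ω ∂P := by
    refine integral_congr_ae ?_
    filter_upwards [hXX'] with ω h
    rw [h]
  have hρeq : ρ (fun ω => -X' ω) = ρ (fun ω => -X ω) := by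
    refine hlaw _ _ hmem'.neg hXmem.neg ?_
    refine Measure.map_congr ?_
    filter_upwards [hXX'] with ω h
    simp [h]
  exact ⟨⟨hmem', hb', by rw [hi']; exact hXi⟩, fun Y hY => hρeq ▸ hXopt Y hY⟩


end NPAuxiliary

open ProbabilityTheory in
set_option maxHeartbeats 1000000 in
/-- Proposition 2.7: if `φ` has a continuous distribution function and
the Neyman–Pearson problem has at most one `σ(φ)`-measurable solution up to `P`-null sets,
then it has at most one solution up to `P`-null sets among all `𝓕`-measurable claims. -/
theorem uniqueness_from_sigma_phi_uniqueness
    {Ω : Type*} [MeasurableSpace Ω] (P : Measure Ω) [IsProbabilityMeasure P]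
    (hP : Atomless P)
    (φ : Ω → ℝ) (hφm : Measurable φ) (hφint : Integrable φ P)
    (hφpos : ∀ᵐ ω ∂P, 0 < φ ω) (hφ1 : ∫ ω, φ ω ∂P = 1)
    (K v : ℝ) (hK : 0 < K) (hv : v ∈ Icc 0 K)
    (ρ : (Ω → ℝ) → ℝ) (hmono : RMono P ρ) (hconv : RConvex P ρ)
    (hlaw : RLawInvariant P ρ) (hcont : RContFromAbove P ρ)
    (hconst : RConstIncreasing ρ K)
    (hFcont : Continuous fun x : ℝ => (P {ω | φ ω ≤ x}).toReal)
    (huniq : ∀ X Y : Ω → ℝ,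
      @Measurable Ω ℝ (MeasurableSpace.comap φ Real.measurableSpace) _ X →
      @Measurable Ω ℝ (MeasurableSpace.comap φ Real.measurableSpace) _ Y →
      IsNPSolution P ρ φ K v X → IsNPSolution P ρ φ K v Y → X =ᵐ[P] Y) :
    ∀ X Y : Ω → ℝ, IsNPSolution P ρ φ K v X → IsNPSolution P ρ φ K v Y → X =ᵐ[P] Y := by
  intro X Y hX hY
  -- measurable representatives
  have hXsm := hX.1.1.aestronglyMeasurable
  have hYsm := hY.1.1.aestronglyMeasurable
  set X' : Ω → ℝ := hXsm.mk X with hX'def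
  set Y' : Ω → ℝ := hYsm.mk Y with hY'def
  have hX'm : Measurable X' := hXsm.stronglyMeasurable_mk.measurable
  have hY'm : Measurable Y' := hYsm.stronglyMeasurable_mk.measurable
  have hXX' : X =ᵐ[P] X' := hXsm.ae_eq_mk
  have hYY' : Y =ᵐ[P] Y' := hYsm.ae_eq_mk
  have hX' : IsNPSolution P ρ φ K v X' := np_sol_congr P ρ φ K v hlaw hX hXX'
  have hY' : IsNPSolution P ρ φ K v Y' := np_sol_congr P ρ φ K v hlaw hY hYY'
  -- the midpoint
  set Z : Ω → ℝ := fun ω => 2⁻¹ * X' ω + (1 - 2⁻¹) * Y' ω with hZdef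
  have hZm : Measurable Z := ((hX'm.const_mul _).add (hY'm.const_mul _))
  have hZval : ∀ ω, Z ω = 2⁻¹ * X' ω + (1 - 2⁻¹) * Y' ω := fun ω => rfl
  -- integrability of φ * V for bounded V
  have hint : ∀ (V : Ω → ℝ), AEStronglyMeasurable V P → (∀ᵐ ω ∂P, 0 ≤ V ω ∧ V ω ≤ K) →
      Integrable (fun ω => φ ω * V ω) P := by
    intro V hVsm hVb
    refine Integrable.mono (hφint.const_mul K) (hφm.aestronglyMeasurable.mul hVsm) ?_
    filter_upwards [hVb] with ω h1
    have h3 : |V ω| ≤ K := abs_le.mpr ⟨by linarith [h1.1, hK.le], h1.2⟩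
    simp only [norm_mul, Real.norm_eq_abs, abs_of_pos hK]
    nlinarith [abs_nonneg (φ ω)]
  have hintX : Integrable (fun ω => φ ω * X' ω) P :=
    hint X' hX'm.aestronglyMeasurable hX'.1.2.1
  have hintY : Integrable (fun ω => φ ω * Y' ω) P :=
    hint Y' hY'm.aestronglyMeasurable hY'.1.2.1
  -- Z is feasible
  have hZmem : MemLp Z ⊤ P :=
    (hX'.1.1.const_mul (2⁻¹ : ℝ)).add (hY'.1.1.const_mul ((1 - 2⁻¹ : ℝ)))
  have hZb : ∀ᵐ ω ∂P, 0 ≤ Z ω ∧ Z ω ≤ K := by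
    filter_upwards [hX'.1.2.1, hY'.1.2.1] with ω h1 h2
    rw [hZval ω]
    constructor <;> nlinarith [h1.1, h1.2, h2.1, h2.2]
  have hIZ : ∫ ω, φ ω * Z ω ∂P
      = 2⁻¹ * ∫ ω, φ ω * X' ω ∂P + (1 - 2⁻¹) * ∫ ω, φ ω * Y' ω ∂P := by
    have h : (fun ω => φ ω * Z ω)
        = fun ω => 2⁻¹ * (φ ω * X' ω) + (1 - 2⁻¹) * (φ ω * Y' ω) := by
      funext ω; rw [hZval ω]; ring
    have hiA : Integrable (fun ω => 2⁻¹ * (φ ω * X' ω)) P := hintX.const_mul _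
    have hiB : Integrable (fun ω => (1 - 2⁻¹) * (φ ω * Y' ω)) P := hintY.const_mul _
    rw [h, integral_add hiA hiB, integral_const_mul, integral_const_mul]
  have hZfeas : Feasible P φ K v Z := by
    refine ⟨hZmem, hZb, ?_⟩
    rw [hIZ]
    have h1 := hX'.1.2.2
    have h2 := hY'.1.2.2
    nlinarith [h1, h2]
  have hρXY : ρ (fun ω => -X' ω) = ρ (fun ω => -Y' ω) :=
    le_antisymm (hX'.2 _ hY'.1) (hY'.2 _ hX'.1)
  have hZsol : IsNPSolution P ρ φ K v Z := by
    refine ⟨hZfeas, fun Y'' hY'' => ?_⟩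
    have h2 := hconv (fun ω => -X' ω) (fun ω => -Y' ω) hX'.1.1.neg hY'.1.1.neg
      2⁻¹ (by norm_num) (by norm_num)
    have h3 : (fun ω => 2⁻¹ * -X' ω + (1 - 2⁻¹) * -Y' ω) = fun ω => -Z ω := by
      funext ω; rw [hZval ω]; ring
    rw [h3, ← hρXY] at h2
    have h4 : ρ (fun ω => -Z ω) ≤ ρ (fun ω => -X' ω) := by linarith
    exact h4.trans (hX'.2 Y'' hY'')
  -- rearranged comap-measurable versions
  obtain ⟨Xh, hXhm, hXhcm, hXhIcc, hXhmap, hXhint⟩ :=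
    np_key P hφm hφint hφpos hFcont hK.le hX'm hX'.1.2.1
  obtain ⟨Yh, hYhm, hYhcm, hYhIcc, hYhmap, hYhint⟩ :=
    np_key P hφm hφint hφpos hFcont hK.le hY'm hY'.1.2.1
  obtain ⟨Zh, hZhm, hZhcm, hZhIcc, hZhmap, hZhint⟩ :=
    np_key P hφm hφint hφpos hFcont hK.le hZm hZb
  -- rearranged versions are solutions
  have hsol : ∀ (V Vh : Ω → ℝ), Measurable V → Measurable Vh → (∀ ω, Vh ω ∈ Icc 0 K) →
      P.map Vh = P.map V → (∫ ω, φ ω * V ω ∂P ≤ ∫ ω, φ ω * Vh ω ∂P) →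
      IsNPSolution P ρ φ K v V → IsNPSolution P ρ φ K v Vh := by
    intro V Vh hVm hVhm hVhIcc hVhmap hVhint hVsol
    have hVhmem : MemLp Vh ⊤ P := by
      refine memLp_top_of_bound hVhm.aestronglyMeasurable K ?_
      refine Eventually.of_forall fun ω => ?_
      rw [Real.norm_eq_abs]
      exact abs_le.mpr ⟨by linarith [(hVhIcc ω).1, hK.le], (hVhIcc ω).2⟩
    have hρeq : ρ (fun ω => -Vh ω) = ρ (fun ω => -V ω) := by
      refine hlaw _ _ hVhmem.neg hVsol.1.1.neg ?_
      have h1 : Measure.map (fun ω => -Vh ω) P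
          = Measure.map (fun x : ℝ => -x) (Measure.map Vh P) :=
        (Measure.map_map measurable_neg hVhm).symm
      rw [h1, hVhmap]
      exact Measure.map_map measurable_neg hVm
    refine ⟨⟨hVhmem, Eventually.of_forall fun ω => ⟨(hVhIcc ω).1, (hVhIcc ω).2⟩,
      le_trans hVsol.1.2.2 hVhint⟩, fun Y'' hY'' => ?_⟩
    rw [hρeq]
    exact hVsol.2 Y'' hY''
  have hXhsol := hsol X' Xh hX'm hXhm hXhIcc hXhmap hXhint hX'
  have hYhsol := hsol Y' Yh hY'm hYhm hYhIcc hYhmap hYhint hY'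
  have hZhsol := hsol Z Zh hZm hZhm hZhIcc hZhmap hZhint hZsol
  -- uniqueness among comap-measurable solutions
  have hXYh : Xh =ᵐ[P] Yh := huniq Xh Yh hXhcm hYhcm hXhsol hYhsol
  have hXZh : Xh =ᵐ[P] Zh := huniq Xh Zh hXhcm hZhcm hXhsol hZhsol
  -- laws coincide
  have hmapXY : P.map X' = P.map Y' :=
    hXhmap.symm.trans ((Measure.map_congr hXYh).trans hYhmap)
  have hmapXZ : P.map X' = P.map Z :=
    hXhmap.symm.trans ((Measure.map_congr hXZh).trans hZhmap)
  -- second moments coincide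
  have hsq : ∀ (V : Ω → ℝ), Measurable V →
      ∫ ω, V ω * V ω ∂P = ∫ x, x * x ∂(P.map V) := by
    intro V hVm
    exact (integral_map (f := fun x : ℝ => x * x) hVm.aemeasurable
      ((measurable_id.mul measurable_id).aestronglyMeasurable)).symm
  have hEXZ : ∫ ω, X' ω * X' ω ∂P = ∫ ω, Z ω * Z ω ∂P := by
    rw [hsq X' hX'm, hsq Z hZm, hmapXZ]
  have hEYX : ∫ ω, Y' ω * Y' ω ∂P = ∫ ω, X' ω * X' ω ∂P := by
    rw [hsq Y' hY'm, hsq X' hX'm, hmapXY]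
  -- integrability of squares
  have hsqint : ∀ (V : Ω → ℝ), Measurable V → (∀ᵐ ω ∂P, 0 ≤ V ω ∧ V ω ≤ K) →
      Integrable (fun ω => V ω * V ω) P := by
    intro V hVm hVb
    refine MemLp.integrable le_top (memLp_top_of_bound
      ((hVm.mul hVm).aestronglyMeasurable) (K * K) ?_)
    filter_upwards [hVb] with ω h1
    rw [Real.norm_eq_abs, abs_mul]
    have : |V ω| ≤ K := abs_le.mpr ⟨by linarith [h1.1, hK.le], h1.2⟩
    nlinarith [abs_nonneg (V ω)]
  have hintX2 := hsqint X' hX'm hX'.1.2.1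
  have hintY2 := hsqint Y' hY'm hY'.1.2.1
  have hintZ2 := hsqint Z hZm hZb
  -- the defect function
  set D : Ω → ℝ := fun ω =>
    2⁻¹ * (X' ω * X' ω) + (1 - 2⁻¹) * (Y' ω * Y' ω) - Z ω * Z ω with hDdef
  have hDval : ∀ ω, D ω
      = 2⁻¹ * (X' ω * X' ω) + (1 - 2⁻¹) * (Y' ω * Y' ω) - Z ω * Z ω := fun ω => rfl
  have hDnn : ∀ ω, 0 ≤ D ω := by
    intro ω
    rw [hDval ω, hZval ω]
    nlinarith [sq_nonneg (X' ω - Y' ω)]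
  have hDint : Integrable D P :=
    ((hintX2.const_mul _).add (hintY2.const_mul _)).sub hintZ2
  have hID : ∫ ω, D ω ∂P = 0 := by
    have h : (fun ω => D ω) = fun ω =>
        (2⁻¹ * (X' ω * X' ω) + (1 - 2⁻¹) * (Y' ω * Y' ω)) - Z ω * Z ω := rfl
    have hiA : Integrable (fun ω => 2⁻¹ * (X' ω * X' ω)) P := hintX2.const_mul _
    have hiB : Integrable (fun ω => (1 - 2⁻¹) * (Y' ω * Y' ω)) P := hintY2.const_mul _
    have hiAB : Integrable (fun ω => 2⁻¹ * (X' ω * X' ω) + (1 - 2⁻¹) * (Y' ω * Y' ω)) P :=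
      hiA.add hiB
    rw [h, integral_sub hiAB hintZ2, integral_add hiA hiB,
      integral_const_mul, integral_const_mul, hEYX, ← hEXZ]
    ring
  have hD0 : D =ᵐ[P] 0 :=
    (integral_eq_zero_iff_of_nonneg (fun ω => hDnn ω) hDint).mp hID
  have hX'Y' : X' =ᵐ[P] Y' := by
    filter_upwards [hD0] with ω h
    have h1 : D ω = 0 := h
    rw [hDval ω, hZval ω] at h1
    have h2 : (X' ω - Y' ω) * (X' ω - Y' ω) = 0 := by nlinarith
    have h3 : X' ω - Y' ω = 0 := by
      by_contra hne
      exact hne (by nlinarith [mul_self_nonneg (X' ω - Y' ω)])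
    linarith
  exact hXX'.trans (hX'Y'.trans hYY'.symm)
end

section
/- For 0 ≤ v < v′ ≤ K, let X*(v) and X*(v′) denote the unique solutions of the Neyman–Pearson problem for ρ_λ at levels v and v′ respectively. Then X*(v) ≤ X*(v′) P-almost surely; that is, the solutions are pointwise increasing in the capital level v. -/
open MeasureTheory Filter Topology Set
open scoped NNReal ENNReal

/-- `ρ_λ(−X) = max_{Q ∈ 𝒬_λ} E_Q[ℓ(X)]`, where `𝒬_λ` is the set of probability measures
`Q ≪ P` with `dQ/dP ≤ 1/λ` P-a.s.  (The value `rhoLam P λ ℓ X` represents `ρ_λ(−X)`.) -/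
noncomputable def rhoLam {Ω : Type*} [MeasurableSpace Ω] (P : Measure Ω) (lam : ℝ)
    (ℓ : ℝ → ℝ) (X : Ω → ℝ) : ℝ :=
  sSup {r : ℝ | ∃ Q : Measure Ω, IsProbabilityMeasure Q ∧ Q ≪ P ∧
    (∀ᵐ ω ∂P, Q.rnDeriv P ω ≤ ENNReal.ofReal (1 / lam)) ∧ r = ∫ ω, ℓ (X ω) ∂Q}

/-- A solution of the Neyman–Pearson problem for `ρ_λ` at level `v`:
minimize `ρ_λ(−X)` over `X ∈ L^∞` with `0 ≤ X ≤ K` P-a.s. and `E[φX] ≥ v`. -/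
def IsLamSolution {Ω : Type*} [MeasurableSpace Ω] (P : Measure Ω) (lam : ℝ) (ℓ : ℝ → ℝ)
    (φ : Ω → ℝ) (K v : ℝ) (X : Ω → ℝ) : Prop :=
  Feasible P φ K v X ∧
    ∀ Y : Ω → ℝ, Feasible P φ K v Y → rhoLam P lam ℓ X ≤ rhoLam P lam ℓ Y

/-- The characterizing properties of the extension `I : ℝ → [−∞,∞]` of the inverse of `ℓ′`:
`I = (ℓ′)⁻¹` on the range `(a,b)` of `ℓ′`, `I = +∞` above `b` and `I = −∞` below `a`. -/
def IsExtendedInverse (ℓ : ℝ → ℝ) (I : ℝ → EReal) : Prop :=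
  (∀ x : ℝ, I (deriv ℓ x) = (x : EReal)) ∧
  (∀ z : ℝ, (∀ x : ℝ, deriv ℓ x < z) → I z = ⊤) ∧
  (∀ z : ℝ, (∀ x : ℝ, z < deriv ℓ x) → I z = ⊥)

/-- The representation `X* = β + (I(c(φ ∨ y)) − I(cy)) ∧ (K − β)` P-a.s.,
with `β ≥ 0`, `y ≥ q` and `c = ℓ′(β)/y`. -/
def LamForm {Ω : Type*} [MeasurableSpace Ω] (P : Measure Ω) (φ : Ω → ℝ) (ℓ : ℝ → ℝ)
    (I : ℝ → EReal) (K q : ℝ) (X : Ω → ℝ) (β y c : ℝ) : Prop :=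
  0 ≤ β ∧ q ≤ y ∧ c = deriv ℓ β / y ∧
    ∀ᵐ ω ∂P, X ω =
      β + (min (I (c * max (φ ω) y) - I (c * y)) (((K - β : ℝ) : EReal))).toReal


noncomputable def rhoLam' {Ω : Type*} [MeasurableSpace Ω] (P : Measure Ω) (lam : ℝ)
    (ℓ : ℝ → ℝ) (X : Ω → ℝ) : ℝ :=
  sSup {r : ℝ | ∃ Q : Measure Ω, IsProbabilityMeasure Q ∧ Q ≪ P ∧
    (∀ᵐ ω ∂P, Q.rnDeriv P ω ≤ ENNReal.ofReal (1 / lam)) ∧ r = ∫ ω, ℓ (X ω) ∂Q}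

namespace NPAux

variable {Ω : Type*} [MeasurableSpace Ω]

/-- The value set of `rhoLam`. -/
def rset (P : Measure Ω) (lam : ℝ) (ℓ : ℝ → ℝ) (W : Ω → ℝ) : Set ℝ :=
  {r : ℝ | ∃ Q : Measure Ω, IsProbabilityMeasure Q ∧ Q ≪ P ∧
    (∀ᵐ ω ∂P, Q.rnDeriv P ω ≤ ENNReal.ofReal (1 / lam)) ∧ r = ∫ ω, ℓ (W ω) ∂Q}

theorem rhoLam'_def (P : Measure Ω) (lam : ℝ) (ℓ : ℝ → ℝ) (W : Ω → ℝ) :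
    rhoLam' P lam ℓ W = sSup (rset P lam ℓ W) := rfl

/-- A density against `P` with values in `[0, 1/lam]` and total mass one. -/
structure Den (P : Measure Ω) (lam : ℝ) (q : Ω → ℝ) : Prop where
  meas : Measurable q
  nonneg : ∀ ω, 0 ≤ q ω
  le : ∀ ω, q ω ≤ 1 / lam
  mass : ∫ ω, q ω ∂P = 1

variable {P : Measure Ω} [IsProbabilityMeasure P]

theorem intble {f : Ω → ℝ} (hf : AEStronglyMeasurable f P) (C : ℝ)
    (h : ∀ᵐ ω ∂P, |f ω| ≤ C) : Integrable f P :=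
  (integrable_const C).mono' hf (by simpa [Real.norm_eq_abs] using h)

theorem den_intble {lam : ℝ} {q : Ω → ℝ} (hq : Den P lam q) : Integrable q P :=
  intble hq.meas.aestronglyMeasurable (1/lam)
    (Eventually.of_forall fun ω => by rw [abs_of_nonneg (hq.nonneg ω)]; exact hq.le ω)

theorem den_mul_intble {lam : ℝ} {q g : Ω → ℝ} (hq : Den P lam q)
    (hg : Integrable g P) : Integrable (fun ω => q ω * g ω) P :=
  hg.bdd_mul hq.meas.aestronglyMeasurable
    (c := 1/lam) (Eventually.of_forall fun ω => by
      rw [Real.norm_eq_abs, abs_of_nonneg (hq.nonneg ω)]; exact hq.le ω)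

/-- Bound on `ℓ ∘ W` for `W` with values a.e. in `[0,K]`. -/
theorem lW_bound {ℓ : ℝ → ℝ} (hmono : Monotone ℓ) {K : ℝ} {W : Ω → ℝ}
    (hWb : ∀ᵐ ω ∂P, 0 ≤ W ω ∧ W ω ≤ K) :
    ∀ᵐ ω ∂P, |ℓ (W ω)| ≤ max |ℓ 0| |ℓ K| := by
  filter_upwards [hWb] with ω hω
  have h1 : ℓ 0 ≤ ℓ (W ω) := hmono hω.1
  have h2 : ℓ (W ω) ≤ ℓ K := hmono hω.2
  rw [abs_le]
  constructor
  · have := neg_abs_le (ℓ 0)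
    have := le_max_left |ℓ 0| |ℓ K|
    linarith
  · have := le_abs_self (ℓ K)
    have := le_max_right |ℓ 0| |ℓ K|
    linarith

theorem lW_intble {ℓ : ℝ → ℝ} (hc : Continuous ℓ) (hmono : Monotone ℓ) {K : ℝ} {W : Ω → ℝ}
    (hW : Measurable W) (hWb : ∀ᵐ ω ∂P, 0 ≤ W ω ∧ W ω ≤ K) :
    Integrable (fun ω => ℓ (W ω)) P :=
  intble (hc.measurable.comp hW).aestronglyMeasurable _ (lW_bound hmono hWb)

/-- Membership: each density gives an element of the value set. -/
theorem val_mem_rset {lam : ℝ} (hlam : lam ∈ Ioo (0:ℝ) 1) {ℓ : ℝ → ℝ}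
    (hc : Continuous ℓ) (hmono : Monotone ℓ) {K : ℝ} {W : Ω → ℝ}
    (hW : Measurable W) (hWb : ∀ᵐ ω ∂P, 0 ≤ W ω ∧ W ω ≤ K)
    {q : Ω → ℝ} (hq : Den P lam q) :
    (∫ ω, q ω * ℓ (W ω) ∂P) ∈ rset P lam ℓ W := by
  classical
  set f : Ω → ℝ≥0 := fun ω => Real.toNNReal (q ω) with hf
  have hfm : Measurable f := hq.meas.real_toNNReal
  set Q : Measure Ω := P.withDensity (fun ω => (f ω : ℝ≥0∞)) with hQ
  have hcoe : (fun ω => ((f ω : ℝ≥0∞))) = fun ω => ENNReal.ofReal (q ω) := rfl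
  have hQuniv : Q Set.univ = 1 := by
    rw [hQ, withDensity_apply _ MeasurableSet.univ, setLIntegral_univ, hcoe,
      ← ofReal_integral_eq_lintegral_ofReal (den_intble hq)
        (Eventually.of_forall hq.nonneg), hq.mass, ENNReal.ofReal_one]
  have hQP : IsProbabilityMeasure Q := ⟨hQuniv⟩
  have hac : Q ≪ P := withDensity_absolutelyContinuous _ _
  have hrn : (∀ᵐ ω ∂P, Q.rnDeriv P ω ≤ ENNReal.ofReal (1 / lam)) := by
    have h1 : Q.rnDeriv P =ᵐ[P] (fun ω => ((f ω : ℝ≥0∞))) :=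
      Measure.rnDeriv_withDensity P (hfm.coe_nnreal_ennreal)
    filter_upwards [h1] with ω hω
    rw [hω]
    exact ENNReal.ofReal_le_ofReal (hq.le ω)
  refine ⟨Q, hQP, hac, hrn, ?_⟩
  rw [hQ, integral_withDensity_eq_integral_smul hfm]
  refine integral_congr_ae (Eventually.of_forall fun ω => ?_)
  show q ω * ℓ (W ω) = f ω • ℓ (W ω)
  simp only [NNReal.smul_def, smul_eq_mul, hf]
  rw [Real.coe_toNNReal _ (hq.nonneg ω)]

/-- Converse: each element of the value set comes from a density. -/
theorem rset_elim {lam : ℝ} (hlam : lam ∈ Ioo (0:ℝ) 1) {ℓ : ℝ → ℝ} {W : Ω → ℝ}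
    {r : ℝ} (hr : r ∈ rset P lam ℓ W) :
    ∃ q : Ω → ℝ, Den P lam q ∧ r = ∫ ω, q ω * ℓ (W ω) ∂P := by
  obtain ⟨Q, hQP, hac, hrn, hr⟩ := hr
  haveI := hQP
  set q0 : Ω → ℝ := fun ω => (Q.rnDeriv P ω).toReal with hq0
  have hq0m : Measurable q0 := (Measure.measurable_rnDeriv Q P).ennreal_toReal
  have hlaminv : (0:ℝ) ≤ 1/lam := by have := hlam.1; positivity
  set q : Ω → ℝ := fun ω => max 0 (min (q0 ω) (1/lam)) with hq
  have hae : q =ᵐ[P] q0 := by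
    filter_upwards [hrn] with ω hω
    have h1 : q0 ω ≤ 1/lam := by
      have := ENNReal.toReal_mono (ENNReal.ofReal_ne_top) hω
      rwa [ENNReal.toReal_ofReal hlaminv] at this
    have h2 : 0 ≤ q0 ω := ENNReal.toReal_nonneg
    rw [hq]; simp only []
    rw [min_eq_left h1, max_eq_right h2]
  have hmass : ∫ ω, q ω ∂P = 1 := by
    rw [integral_congr_ae hae, hq0]
    rw [Measure.integral_toReal_rnDeriv hac, probReal_univ]
  refine ⟨q, ⟨(measurable_const.max (hq0m.min measurable_const)), fun ω => le_max_left _ _,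
    fun ω => by rw [hq]; simp only []; exact max_le hlaminv (min_le_right _ _), hmass⟩, ?_⟩
  rw [hr, ← integral_rnDeriv_smul hac]
  refine integral_congr_ae ?_
  filter_upwards [hae] with ω hω
  show (Q.rnDeriv P ω).toReal • ℓ (W ω) = q ω * ℓ (W ω)
  rw [smul_eq_mul, hω]

theorem rset_nonempty {lam : ℝ} (hlam : lam ∈ Ioo (0:ℝ) 1) {ℓ : ℝ → ℝ}
    (hc : Continuous ℓ) (hmono : Monotone ℓ) {K : ℝ} {W : Ω → ℝ}
    (hW : Measurable W) (hWb : ∀ᵐ ω ∂P, 0 ≤ W ω ∧ W ω ≤ K) :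
    (rset P lam ℓ W).Nonempty := by
  refine ⟨_, val_mem_rset hlam hc hmono hW hWb (q := fun _ => 1) ?_⟩
  refine ⟨measurable_const, fun ω => zero_le_one, fun ω => ?_, by simp⟩
  rw [le_div_iff₀ hlam.1]; linarith [hlam.2]

theorem rset_bddAbove {lam : ℝ} (hlam : lam ∈ Ioo (0:ℝ) 1) {ℓ : ℝ → ℝ}
    (hc : Continuous ℓ) (hmono : Monotone ℓ) {K : ℝ} {W : Ω → ℝ}
    (hW : Measurable W) (hWb : ∀ᵐ ω ∂P, 0 ≤ W ω ∧ W ω ≤ K) :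
    BddAbove (rset P lam ℓ W) := by
  refine ⟨max |ℓ 0| |ℓ K| / lam, fun r hr => ?_⟩
  obtain ⟨q, hq, hrq⟩ := rset_elim hlam hr
  rw [hrq]
  have h1 : Integrable (fun ω => q ω * ℓ (W ω)) P :=
    den_mul_intble hq (lW_intble hc hmono hW hWb)
  calc ∫ ω, q ω * ℓ (W ω) ∂P ≤ ∫ ω, q ω * max |ℓ 0| |ℓ K| ∂P := by
        refine integral_mono_ae h1 ((den_intble hq).mul_const _) ?_
        filter_upwards [lW_bound hmono hWb] with ω hω
        exact mul_le_mul_of_nonneg_left (le_trans (le_abs_self _) hω) (hq.nonneg ω)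
    _ = max |ℓ 0| |ℓ K| := by rw [integral_mul_const, hq.mass, one_mul]
    _ ≤ max |ℓ 0| |ℓ K| / lam := by
        rw [le_div_iff₀ hlam.1]
        nlinarith [le_trans (abs_nonneg (ℓ 0)) (le_max_left |ℓ 0| |ℓ K|), hlam.2, hlam.1]

theorem le_rho {lam : ℝ} (hlam : lam ∈ Ioo (0:ℝ) 1) {ℓ : ℝ → ℝ}
    (hc : Continuous ℓ) (hmono : Monotone ℓ) {K : ℝ} {W : Ω → ℝ}
    (hW : Measurable W) (hWb : ∀ᵐ ω ∂P, 0 ≤ W ω ∧ W ω ≤ K)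
    {q : Ω → ℝ} (hq : Den P lam q) :
    ∫ ω, q ω * ℓ (W ω) ∂P ≤ rhoLam' P lam ℓ W :=
  le_csSup (rset_bddAbove hlam hc hmono hW hWb (K := K))
    (val_mem_rset hlam hc hmono hW hWb hq)

theorem rho_le {lam : ℝ} (hlam : lam ∈ Ioo (0:ℝ) 1) {ℓ : ℝ → ℝ}
    (hc : Continuous ℓ) (hmono : Monotone ℓ) {K : ℝ} {W : Ω → ℝ}
    (hW : Measurable W) (hWb : ∀ᵐ ω ∂P, 0 ≤ W ω ∧ W ω ≤ K) {B : ℝ}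
    (h : ∀ q : Ω → ℝ, Den P lam q → ∫ ω, q ω * ℓ (W ω) ∂P ≤ B) :
    rhoLam' P lam ℓ W ≤ B := by
  refine csSup_le (rset_nonempty hlam hc hmono hW hWb) fun r hr => ?_
  obtain ⟨q, hq, hrq⟩ := rset_elim hlam hr
  rw [hrq]; exact h q hq

theorem rho_le_F {lam : ℝ} (hlam : lam ∈ Ioo (0:ℝ) 1) {ℓ : ℝ → ℝ}
    (hc : Continuous ℓ) (hmono : Monotone ℓ) {K : ℝ} {W : Ω → ℝ}
    (hW : Measurable W) (hWb : ∀ᵐ ω ∂P, 0 ≤ W ω ∧ W ω ≤ K) (t : ℝ) :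
    rhoLam' P lam ℓ W ≤ t + (1/lam) * ∫ ω, max (ℓ (W ω) - t) 0 ∂P := by
  have hZint : Integrable (fun ω => ℓ (W ω)) P := lW_intble hc hmono hW hWb
  have hZt : Integrable (fun ω => ℓ (W ω) - t) P := hZint.sub (integrable_const t)
  have hplus : Integrable (fun ω => max (ℓ (W ω) - t) 0) P := hZt.pos_part
  refine rho_le hlam hc hmono hW hWb fun q hq => ?_
  have key : ∫ ω, q ω * ℓ (W ω) ∂P
      = t + ∫ ω, q ω * (ℓ (W ω) - t) ∂P := by
    have h1 : (fun ω => q ω * ℓ (W ω)) = fun ω => q ω * t + q ω * (ℓ (W ω) - t) :=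
      funext fun ω => by ring
    rw [h1, integral_add ((den_intble hq).mul_const t) (den_mul_intble hq hZt),
      integral_mul_const, hq.mass, one_mul]
  rw [key]
  refine add_le_add_right ?_ t
  calc ∫ ω, q ω * (ℓ (W ω) - t) ∂P ≤ ∫ ω, (1/lam) * max (ℓ (W ω) - t) 0 ∂P := by
        refine integral_mono_ae (den_mul_intble hq hZt) (hplus.const_mul _)
          (Eventually.of_forall fun ω => ?_)
        show q ω * (ℓ (W ω) - t) ≤ 1/lam * max (ℓ (W ω) - t) 0
        rcases le_or_gt (ℓ (W ω) - t) 0 with h | h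
        · have h2 : q ω * (ℓ (W ω) - t) ≤ 0 :=
            mul_nonpos_of_nonneg_of_nonpos (hq.nonneg ω) h
          have h3 : (0:ℝ) ≤ (1/lam) * max (ℓ (W ω) - t) 0 := by
            have := hlam.1
            positivity
          linarith
        · rw [max_eq_left h.le]
          exact mul_le_mul_of_nonneg_right (hq.le ω) h.le
    _ = (1/lam) * ∫ ω, max (ℓ (W ω) - t) 0 ∂P := integral_const_mul _ _

/-- The worst-case density is attained, with an explicit quantile-type form. -/
theorem attain {lam : ℝ} (hlam : lam ∈ Ioo (0:ℝ) 1) {ℓ : ℝ → ℝ}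
    (hc : Continuous ℓ) (hmono : Monotone ℓ) {K : ℝ} {W : Ω → ℝ}
    (hW : Measurable W) (hWb : ∀ᵐ ω ∂P, 0 ≤ W ω ∧ W ω ≤ K) :
    ∃ t : ℝ, ℓ 0 ≤ t ∧ t ≤ ℓ K ∧ ∃ q : Ω → ℝ, Den P lam q ∧
      (∀ ω, ℓ (W ω) < t → q ω = 0) ∧ (∀ ω, t < ℓ (W ω) → q ω = 1/lam) ∧
      rhoLam' P lam ℓ W = ∫ ω, q ω * ℓ (W ω) ∂P ∧
      rhoLam' P lam ℓ W = t + (1/lam) * ∫ ω, max (ℓ (W ω) - t) 0 ∂P := by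
  classical
  have hlam0 := hlam.1
  have hZm : Measurable (fun ω => ℓ (W ω)) := hc.measurable.comp hW
  set T : Set ℝ := {s : ℝ | P {ω | s < ℓ (W ω)} ≤ ENNReal.ofReal lam} with hT
  have hZub : ∀ᵐ ω ∂P, ℓ (W ω) ≤ ℓ K := by
    filter_upwards [hWb] with ω h
    exact hmono h.2
  have hZlb : ∀ᵐ ω ∂P, ℓ 0 ≤ ℓ (W ω) := by
    filter_upwards [hWb] with ω h
    exact hmono h.1
  have hKT : ℓ K ∈ T := by
    have h0 : P {ω | ℓ K < ℓ (W ω)} = 0 := by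
      have h1 := hZub
      rw [ae_iff] at h1
      have h2 : {ω | ℓ K < ℓ (W ω)} = {ω | ¬ ℓ (W ω) ≤ ℓ K} := by ext ω; simp [not_le]
      rw [h2]
      exact h1
    show P {ω | ℓ K < ℓ (W ω)} ≤ ENNReal.ofReal lam
    rw [h0]
    exact bot_le
  have hTlb : ∀ s ∈ T, ℓ 0 ≤ s := by
    intro s hs
    by_contra hlt
    push_neg at hlt
    have h2 : P {ω | ℓ 0 ≤ ℓ (W ω)} = 1 := by
      rw [← prob_compl_eq_zero_iff (measurableSet_le measurable_const hZm)]
      rw [ae_iff] at hZlb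
      exact hZlb
    have h4 : P {ω | s < ℓ (W ω)} = 1 := by
      refine le_antisymm prob_le_one ?_
      rw [← h2]
      exact measure_mono fun ω h => lt_of_lt_of_le hlt h
    have h5 : P {ω | s < ℓ (W ω)} ≤ ENNReal.ofReal lam := hs
    rw [h4] at h5
    exact absurd h5 (ENNReal.ofReal_lt_one.2 hlam.2).not_ge
  have hTne : T.Nonempty := ⟨ℓ K, hKT⟩
  have hTbdd : BddBelow T := ⟨ℓ 0, hTlb⟩
  set t : ℝ := sInf T with htdef
  have ht0 : ℓ 0 ≤ t := le_csInf hTne hTlb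
  have htK : t ≤ ℓ K := csInf_le hTbdd hKT
  have hmemT : ∀ s, t < s → P {ω | s < ℓ (W ω)} ≤ ENNReal.ofReal lam := by
    intro s hs
    obtain ⟨s', hs'T, hs's⟩ := exists_lt_of_csInf_lt hTne hs
    exact le_trans (measure_mono fun ω (h : s < ℓ (W ω)) => lt_trans hs's h) hs'T
  have hA : P {ω | t < ℓ (W ω)} ≤ ENNReal.ofReal lam := by
    have hU : {ω | t < ℓ (W ω)} = ⋃ n : ℕ, {ω | t + 1/(n+1) < ℓ (W ω)} := by
      ext ω
      simp only [mem_setOf_eq, mem_iUnion]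
      constructor
      · intro h
        obtain ⟨n, hn⟩ := exists_nat_one_div_lt (sub_pos.2 h)
        exact ⟨n, by push_cast at hn ⊢; linarith⟩
      · rintro ⟨n, hn⟩
        have hpos : (0:ℝ) < 1/((n:ℝ)+1) := by positivity
        push_cast at hn
        linarith
    rw [hU, Directed.measure_iUnion]
    · refine iSup_le fun n => ?_
      refine hmemT _ ?_
      have hpos : (0:ℝ) < 1/((n:ℝ)+1) := by positivity
      push_cast
      linarith
    · refine Monotone.directed_le fun m n hmn ω h => ?_
      simp only [mem_setOf_eq] at h ⊢
      have h1 : 1/((n:ℝ)+1) ≤ 1/((m:ℝ)+1) := by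
        apply one_div_le_one_div_of_le (by positivity)
        have : (m:ℝ) ≤ (n:ℝ) := Nat.cast_le.2 hmn
        linarith
      push_cast at h ⊢
      linarith
  have hB : ENNReal.ofReal lam ≤ P {ω | t ≤ ℓ (W ω)} := by
    have hI : {ω | t ≤ ℓ (W ω)} = ⋂ n : ℕ, {ω | t - 1/(n+1) < ℓ (W ω)} := by
      ext ω
      simp only [mem_setOf_eq, mem_iInter]
      constructor
      · intro h n
        have hpos : (0:ℝ) < 1/((n:ℝ)+1) := by positivity
        push_cast
        linarith
      · intro h
        by_contra hlt
        push_neg at hlt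
        obtain ⟨n, hn⟩ := exists_nat_one_div_lt (sub_pos.2 hlt)
        have h2 := h n
        push_cast at hn h2
        linarith
    rw [hI, Directed.measure_iInter
      (fun n => (measurableSet_lt measurable_const hZm).nullMeasurableSet)
      ?_ ⟨0, measure_ne_top P _⟩]
    · refine le_iInf fun n => ?_
      by_contra hlt
      push_neg at hlt
      have hmem : t - 1/(n+1) ∈ T := le_of_lt hlt
      have h1 := csInf_le hTbdd hmem
      have hpos : (0:ℝ) < 1/((n:ℝ)+1) := by positivity
      rw [← htdef] at h1
      push_cast at h1
      linarith
    · intro m n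
      refine ⟨max m n, fun ω h => ?_, fun ω h => ?_⟩
      · simp only [mem_setOf_eq] at h ⊢
        have h2 : 1/(((max m n : ℕ):ℝ)+1) ≤ 1/((m:ℝ)+1) := by
          apply one_div_le_one_div_of_le (by positivity)
          have : (m:ℝ) ≤ ((max m n : ℕ):ℝ) := Nat.cast_le.2 (le_max_left m n)
          linarith
        push_cast at h2 h ⊢
        linarith
      · simp only [mem_setOf_eq] at h ⊢
        have h2 : 1/(((max m n : ℕ):ℝ)+1) ≤ 1/((n:ℝ)+1) := by
          apply one_div_le_one_div_of_le (by positivity)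
          have : (n:ℝ) ≤ ((max m n : ℕ):ℝ) := Nat.cast_le.2 (le_max_right m n)
          linarith
        push_cast at h2 h ⊢
        linarith
  -- the two level sets and their masses
  have hAm : MeasurableSet {ω | t < ℓ (W ω)} := measurableSet_lt measurable_const hZm
  have hBm : MeasurableSet {ω | ℓ (W ω) = t} := measurableSet_eq_fun hZm measurable_const
  have hdisj : Disjoint {ω | t < ℓ (W ω)} {ω | ℓ (W ω) = t} := by
    rw [Set.disjoint_left]
    intro ω hωA hωB
    exact absurd hωB (ne_of_gt hωA)
  have hunion : {ω | t ≤ ℓ (W ω)} = {ω | t < ℓ (W ω)} ∪ {ω | ℓ (W ω) = t} := by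
    ext ω
    simp only [mem_setOf_eq, mem_union]
    constructor
    · intro h
      rcases lt_or_eq_of_le h with h | h
      · exact Or.inl h
      · exact Or.inr h.symm
    · rintro (h | h)
      · exact h.le
      · exact h.ge
  set a : ℝ := (P {ω | t < ℓ (W ω)}).toReal with hadef
  set b : ℝ := (P {ω | ℓ (W ω) = t}).toReal with hbdef
  have ha0 : 0 ≤ a := ENNReal.toReal_nonneg
  have hb0 : 0 ≤ b := ENNReal.toReal_nonneg
  have ha_le : a ≤ lam := by
    have h1 := ENNReal.toReal_mono ENNReal.ofReal_ne_top hA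
    rwa [ENNReal.toReal_ofReal hlam0.le] at h1
  have hlam_le : lam ≤ a + b := by
    have h1 : P {ω | t ≤ ℓ (W ω)} = P {ω | t < ℓ (W ω)} + P {ω | ℓ (W ω) = t} := by
      rw [hunion, measure_union hdisj hBm]
    have h2 := ENNReal.toReal_mono
      (ENNReal.add_ne_top.2 ⟨measure_ne_top P _, measure_ne_top P _⟩)
      (le_trans hB h1.le)
    rwa [ENNReal.toReal_ofReal hlam0.le,
      ENNReal.toReal_add (measure_ne_top P _) (measure_ne_top P _)] at h2
  set κ : ℝ := if b = 0 then 0 else (lam - a)/(lam*b) with hκdef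
  have hκ0 : 0 ≤ κ := by
    rw [hκdef]
    split_ifs with h
    · exact le_refl 0
    · have hb : 0 < b := lt_of_le_of_ne hb0 (Ne.symm h)
      apply div_nonneg (by linarith)
      positivity
  have hκle : κ ≤ 1/lam := by
    rw [hκdef]
    split_ifs with h
    · positivity
    · have hb : 0 < b := lt_of_le_of_ne hb0 (Ne.symm h)
      rw [div_le_div_iff₀ (by positivity) hlam0]
      nlinarith
  have hsum : (1/lam)*a + κ*b = 1 := by
    rw [hκdef]
    split_ifs with h
    · have haeq : a = lam := le_antisymm ha_le (by rw [h] at hlam_le; linarith)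
      rw [haeq, h]
      field_simp
      norm_num
    · have hb : 0 < b := lt_of_le_of_ne hb0 (Ne.symm h)
      field_simp
      ring
  set q : Ω → ℝ := fun ω => if t < ℓ (W ω) then 1/lam else if ℓ (W ω) = t then κ else 0
    with hqdef
  have hqm : Measurable q :=
    Measurable.ite hAm measurable_const
      (Measurable.ite hBm measurable_const measurable_const)
  have hq_nonneg : ∀ ω, 0 ≤ q ω := by
    intro ω
    rw [hqdef]
    dsimp only
    split_ifs
    · positivity
    · exact hκ0
    · exact le_refl 0
  have hq_le : ∀ ω, q ω ≤ 1/lam := by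
    intro ω
    rw [hqdef]
    dsimp only
    split_ifs
    · exact le_refl _
    · exact hκle
    · positivity
  have hqa : ∀ ω, q ω = ({ω | t < ℓ (W ω)}).indicator (fun _ => 1/lam) ω
      + ({ω | ℓ (W ω) = t}).indicator (fun _ => κ) ω := by
    intro ω
    by_cases h1 : t < ℓ (W ω)
    · rw [hqdef]
      dsimp only
      rw [if_pos h1, Set.indicator_of_mem (show ω ∈ {ω | t < ℓ (W ω)} from h1),
        Set.indicator_of_notMem (show ω ∉ {ω | ℓ (W ω) = t} from ne_of_gt h1)]
      ring
    · by_cases h2 : ℓ (W ω) = t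
      · rw [hqdef]
        dsimp only
        rw [if_neg h1, if_pos h2, Set.indicator_of_notMem (show ω ∉ {ω | t < ℓ (W ω)} from h1),
          Set.indicator_of_mem (show ω ∈ {ω | ℓ (W ω) = t} from h2)]
        ring
      · rw [hqdef]
        dsimp only
        rw [if_neg h1, if_neg h2, Set.indicator_of_notMem (show ω ∉ {ω | t < ℓ (W ω)} from h1),
          Set.indicator_of_notMem (show ω ∉ {ω | ℓ (W ω) = t} from h2)]
        ring
  have hmass : ∫ ω, q ω ∂P = 1 := by
    have hint1 : Integrable (fun ω => ({ω | t < ℓ (W ω)}).indicator (fun _ => 1/lam) ω) P :=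
      (integrable_const _).indicator hAm
    have hint2 : Integrable (fun ω => ({ω | ℓ (W ω) = t}).indicator (fun _ => κ) ω) P :=
      (integrable_const _).indicator hBm
    rw [integral_congr_ae (Eventually.of_forall hqa), integral_add hint1 hint2,
      integral_indicator_const _ hAm, integral_indicator_const _ hBm]
    simp only [smul_eq_mul, measureReal_def, ← hadef, ← hbdef]
    linear_combination hsum
  have hden : Den P lam q := ⟨hqm, hq_nonneg, hq_le, hmass⟩
  have hplusint : Integrable (fun ω => max (ℓ (W ω) - t) 0) P :=
    ((lW_intble hc hmono hW hWb).sub (integrable_const t)).pos_part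
  have hpt : ∀ ω, q ω * ℓ (W ω)
      = (({ω | t < ℓ (W ω)}).indicator (fun _ => (1/lam)*t) ω
          + (1/lam) * max (ℓ (W ω) - t) 0)
        + ({ω | ℓ (W ω) = t}).indicator (fun _ => κ*t) ω := by
    intro ω
    by_cases h1 : t < ℓ (W ω)
    · rw [hqdef]
      dsimp only
      rw [if_pos h1, Set.indicator_of_mem (show ω ∈ {ω | t < ℓ (W ω)} from h1),
        Set.indicator_of_notMem (show ω ∉ {ω | ℓ (W ω) = t} from ne_of_gt h1),
        max_eq_left (by linarith)]
      ring
    · by_cases h2 : ℓ (W ω) = t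
      · rw [hqdef]
        dsimp only
        rw [if_neg h1, if_pos h2, Set.indicator_of_notMem (show ω ∉ {ω | t < ℓ (W ω)} from h1),
          Set.indicator_of_mem (show ω ∈ {ω | ℓ (W ω) = t} from h2), h2,
          sub_self, max_self]
        ring
      · have h3 : ℓ (W ω) < t := lt_of_le_of_ne (not_lt.1 h1) h2
        rw [hqdef]
        dsimp only
        rw [if_neg h1, if_neg h2, Set.indicator_of_notMem (show ω ∉ {ω | t < ℓ (W ω)} from h1),
          Set.indicator_of_notMem (show ω ∉ {ω | ℓ (W ω) = t} from h2),
          max_eq_right (by linarith)]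
        ring
  have hval : ∫ ω, q ω * ℓ (W ω) ∂P = t + (1/lam) * ∫ ω, max (ℓ (W ω) - t) 0 ∂P := by
    have hint3 : Integrable (fun ω => ({ω | t < ℓ (W ω)}).indicator (fun _ => (1/lam)*t) ω) P :=
      (integrable_const _).indicator hAm
    have hint4 : Integrable (fun ω => (1/lam) * max (ℓ (W ω) - t) 0) P :=
      hplusint.const_mul _
    have hint1 : Integrable (fun ω => ({ω | t < ℓ (W ω)}).indicator (fun _ => (1/lam)*t) ω
        + (1/lam) * max (ℓ (W ω) - t) 0) P := hint3.add hint4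
    have hint2 : Integrable (fun ω => ({ω | ℓ (W ω) = t}).indicator (fun _ => κ*t) ω) P :=
      (integrable_const _).indicator hBm
    rw [integral_congr_ae (Eventually.of_forall hpt), integral_add hint1 hint2,
      integral_add hint3 hint4,
      integral_indicator_const _ hAm, integral_indicator_const _ hBm, integral_const_mul]
    simp only [smul_eq_mul, measureReal_def, ← hadef, ← hbdef]
    linear_combination t * hsum
  have hrle := rho_le_F hlam hc hmono hW hWb t
  have hq_rho : rhoLam' P lam ℓ W = ∫ ω, q ω * ℓ (W ω) ∂P := by
    refine le_antisymm ?_ (le_rho hlam hc hmono hW hWb hden)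
    rw [hval]
    exact hrle
  refine ⟨t, ht0, htK, q, hden, ?_, ?_, hq_rho, by rw [hq_rho, hval]⟩
  · intro ω h
    rw [hqdef]
    dsimp only
    rw [if_neg (not_lt.2 h.le), if_neg (ne_of_lt h)]
  · intro ω h
    rw [hqdef]
    dsimp only
    rw [if_pos h]

/-! ### Congruence and feasibility helpers -/

theorem rset_mono_congr {lam : ℝ} {ℓ : ℝ → ℝ} {W W' : Ω → ℝ} (h : W =ᵐ[P] W') :
    rset P lam ℓ W ⊆ rset P lam ℓ W' := by
  rintro r ⟨Q, h1, h2, h3, h4⟩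
  refine ⟨Q, h1, h2, h3, h4.trans (integral_congr_ae ?_)⟩
  filter_upwards [h.filter_mono h2.ae_le] with ω hω
  rw [hω]

theorem rhoLam_congr {lam : ℝ} {ℓ : ℝ → ℝ} {W W' : Ω → ℝ} (h : W =ᵐ[P] W') :
    rhoLam P lam ℓ W = rhoLam P lam ℓ W' := by
  show sSup (rset P lam ℓ W) = sSup (rset P lam ℓ W')
  rw [Subset.antisymm (rset_mono_congr h) (rset_mono_congr h.symm)]

theorem rhoLam_eq_rho' {lam : ℝ} {ℓ : ℝ → ℝ} {W : Ω → ℝ} :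
    rhoLam P lam ℓ W = rhoLam' P lam ℓ W := rfl

theorem phiW_intble {φ : Ω → ℝ} (hφm : Measurable φ) (hφint : Integrable φ P)
    {W : Ω → ℝ} (hWm : AEStronglyMeasurable W P) {C : ℝ}
    (hWb : ∀ᵐ ω ∂P, |W ω| ≤ C) : Integrable (fun ω => φ ω * W ω) P := by
  refine (hφint.abs.const_mul C).mono' (hφm.aestronglyMeasurable.mul hWm) ?_
  filter_upwards [hWb] with ω hω
  rw [Real.norm_eq_abs, abs_mul]
  have := abs_nonneg (φ ω)
  calc |φ ω| * |W ω| ≤ |φ ω| * C := mul_le_mul_of_nonneg_left hω this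
    _ = C * |φ ω| := mul_comm _ _

theorem abs_le_of_bounds {K : ℝ} {W : Ω → ℝ} (hWb : ∀ᵐ ω ∂P, 0 ≤ W ω ∧ W ω ≤ K) :
    ∀ᵐ ω ∂P, |W ω| ≤ K := by
  filter_upwards [hWb] with ω hω
  rw [abs_of_nonneg hω.1]
  exact hω.2

theorem feasible_of {φ : Ω → ℝ} {K v : ℝ} {W : Ω → ℝ} (hWm : Measurable W)
    (hWb : ∀ᵐ ω ∂P, 0 ≤ W ω ∧ W ω ≤ K) (hv : v ≤ ∫ ω, φ ω * W ω ∂P) :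
    Feasible P φ K v W :=
  ⟨memLp_top_of_bound hWm.aestronglyMeasurable K
      (by filter_upwards [hWb] with ω hω; rw [Real.norm_eq_abs, abs_of_nonneg hω.1]; exact hω.2),
    hWb, hv⟩

/-! ### Strict decrease under scaling -/

theorem rho_scale_lt {lam : ℝ} (hlam : lam ∈ Ioo (0:ℝ) 1) {ℓ : ℝ → ℝ}
    (hc : Continuous ℓ) (hsmono : StrictMono ℓ) {K : ℝ} {W : Ω → ℝ}
    (hWm : Measurable W) (hWb : ∀ᵐ ω ∂P, 0 ≤ W ω ∧ W ω ≤ K)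
    (hWne : ¬ W =ᵐ[P] (fun _ => (0:ℝ))) {s : ℝ} (hs0 : 0 < s) (hs1 : s < 1) :
    rhoLam' P lam ℓ (fun ω => s * W ω) < rhoLam' P lam ℓ W := by
  have hmono := hsmono.monotone
  have hsWm : Measurable (fun ω => s * W ω) := hWm.const_mul s
  have hsWb : ∀ᵐ ω ∂P, 0 ≤ s * W ω ∧ s * W ω ≤ K := by
    filter_upwards [hWb] with ω h
    constructor
    · exact mul_nonneg hs0.le h.1
    · nlinarith [h.1, h.2]
  obtain ⟨t, ht0, htK, q, hq, hq_zero, hq_one, hrho_eq, -⟩ :=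
    attain hlam hc hmono hsWm hsWb
  have hWaege : ∀ᵐ ω ∂P, s * W ω ≤ W ω := by
    filter_upwards [hWb] with ω h
    nlinarith [h.1]
  have hint1 : Integrable (fun ω => ℓ (W ω)) P := lW_intble hc hmono hWm hWb
  have hint2 : Integrable (fun ω => ℓ (s * W ω)) P := lW_intble hc hmono hsWm hsWb
  have hintf : Integrable (fun ω => q ω * (ℓ (W ω) - ℓ (s * W ω))) P :=
    den_mul_intble hq (hint1.sub hint2)
  have hf_nonneg : ∀ᵐ ω ∂P, 0 ≤ q ω * (ℓ (W ω) - ℓ (s * W ω)) := by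
    filter_upwards [hWaege] with ω h
    have := hmono h
    have := hq.nonneg ω
    nlinarith
  have hgap : 0 < ∫ ω, q ω * (ℓ (W ω) - ℓ (s * W ω)) ∂P := by
    rcases lt_or_ge 0 (∫ ω, q ω * (ℓ (W ω) - ℓ (s * W ω)) ∂P) with h | h
    · exact h
    exfalso
    have hzero : ∫ ω, q ω * (ℓ (W ω) - ℓ (s * W ω)) ∂P = 0 :=
      le_antisymm h (integral_nonneg_of_ae hf_nonneg)
    have hf0 : (fun ω => q ω * (ℓ (W ω) - ℓ (s * W ω))) =ᵐ[P] 0 :=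
      (integral_eq_zero_iff_of_nonneg_ae hf_nonneg hintf).1 hzero
    -- find a positive-measure set where the integrand is positive
    by_cases hApos : P {ω | t < ℓ (s * W ω)} = 0
    · -- mass of q sits on {ℓ (sW) = t}-ish; two subcases on t
      by_cases ht : ℓ 0 < t
      · -- q ≠ 0 forces ℓ(sW) ≥ t > ℓ 0, hence W > 0, integrand positive
        have hq_ne : P {ω | q ω ≠ 0} ≠ 0 := by
          intro hz
          have : q =ᵐ[P] 0 := by
            rw [Filter.EventuallyEq, ae_iff]
            exact hz
          have : ∫ ω, q ω ∂P = 0 := by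
            rw [integral_congr_ae this]
            simp
          rw [hq.mass] at this
          norm_num at this
        have hsub : {ω | q ω ≠ 0} ⊆ {ω | q ω * (ℓ (W ω) - ℓ (s * W ω)) ≠ 0} := by
          intro ω hω
          simp only [mem_setOf_eq] at hω ⊢
          have hge : t ≤ ℓ (s * W ω) := by
            by_contra hlt
            exact hω (hq_zero ω (not_le.1 hlt))
          have hsW : 0 < s * W ω := by
            by_contra hle
            push_neg at hle
            have h1 : ℓ (s * W ω) ≤ ℓ 0 := hmono (by linarith)
            linarith
          have hWpos : 0 < W ω := by nlinarith
          have hlt : ℓ (s * W ω) < ℓ (W ω) := hsmono (by nlinarith)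
          have hqpos : 0 < q ω := lt_of_le_of_ne (hq.nonneg ω) (Ne.symm hω)
          exact ne_of_gt (mul_pos hqpos (by linarith))
        refine hq_ne (measure_mono_null hsub ?_)
        have hf0' := hf0
        rw [Filter.EventuallyEq, ae_iff] at hf0'
        simpa using hf0'
      · -- t = ℓ 0 : then sW ≤ 0 a.e., so W = 0 a.e., contradiction
        have hteq : t = ℓ 0 := le_antisymm (not_lt.1 ht) ht0
        apply hWne
        have hA0' : ∀ᵐ ω ∂P, ¬ (t < ℓ (s * W ω)) := by
          rw [ae_iff]
          push_neg
          simpa using hApos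
        filter_upwards [hA0', hWb] with ω h1 h2
        have h3 : ℓ (s * W ω) ≤ ℓ 0 := by rw [← hteq]; exact not_lt.1 h1
        have h4 : s * W ω ≤ 0 := by
          by_contra h5
          push_neg at h5
          exact absurd (hsmono h5) (by linarith)
        have : W ω ≤ 0 := by nlinarith
        exact le_antisymm this h2.1
    · -- the strict upper set has positive measure; integrand positive there
      have hsub : {ω | t < ℓ (s * W ω)} ⊆ {ω | q ω * (ℓ (W ω) - ℓ (s * W ω)) ≠ 0} := by
        intro ω hω
        simp only [mem_setOf_eq] at hω ⊢
        have hq1 : q ω = 1/lam := hq_one ω hω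
        have hsW : 0 < s * W ω := by
          by_contra hle
          push_neg at hle
          have h1 : ℓ (s * W ω) ≤ ℓ 0 := hmono (by linarith)
          linarith
        have hWpos : 0 < W ω := by nlinarith
        have hlt : ℓ (s * W ω) < ℓ (W ω) := hsmono (by nlinarith)
        have hqpos : 0 < q ω := by rw [hq1]; have := hlam.1; positivity
        exact ne_of_gt (mul_pos hqpos (by linarith))
      refine hApos (measure_mono_null hsub ?_)
      have hf0' := hf0
      rw [Filter.EventuallyEq, ae_iff] at hf0'
      simpa using hf0'
  have hsplit : ∫ ω, q ω * ℓ (s * W ω) ∂P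
      = ∫ ω, q ω * ℓ (W ω) ∂P - ∫ ω, q ω * (ℓ (W ω) - ℓ (s * W ω)) ∂P := by
    rw [← integral_sub (den_mul_intble hq hint1) hintf]
    refine integral_congr_ae (Eventually.of_forall fun ω => ?_)
    ring
  have hle := le_rho hlam hc hmono hWm hWb hq
  rw [hrho_eq, hsplit]
  linarith

/-! ### The budget constraint binds at any solution -/

theorem sol_budget {lam : ℝ} (hlam : lam ∈ Ioo (0:ℝ) 1) {ℓ : ℝ → ℝ}
    (hc : Continuous ℓ) (hsmono : StrictMono ℓ) {φ : Ω → ℝ} (hφm : Measurable φ)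
    (hφint : Integrable φ P) {K v : ℝ} {W : Ω → ℝ} (hWm : Measurable W)
    (hsol : IsLamSolution P lam ℓ φ K v W) (hv : 0 < v) :
    ∫ ω, φ ω * W ω ∂P = v := by
  obtain ⟨⟨hmem, hWb, hbud⟩, hopt⟩ := hsol
  by_contra hne
  have hgt : v < ∫ ω, φ ω * W ω ∂P := lt_of_le_of_ne hbud (Ne.symm hne)
  have hIpos : 0 < ∫ ω, φ ω * W ω ∂P := lt_trans hv hgt
  set s : ℝ := v / ∫ ω, φ ω * W ω ∂P with hsdef
  have hs0 : 0 < s := div_pos hv hIpos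
  have hs1 : s < 1 := (div_lt_one hIpos).2 hgt
  have hWne : ¬ W =ᵐ[P] (fun _ => (0:ℝ)) := by
    intro h
    have h1 : (fun ω => φ ω * W ω) =ᵐ[P] (fun _ => (0:ℝ)) := by
      filter_upwards [h] with ω hω
      rw [hω, mul_zero]
    have h2 : ∫ ω, φ ω * W ω ∂P = 0 := by
      rw [integral_congr_ae h1, integral_zero]
    linarith
  have hbud' : ∫ ω, φ ω * (s * W ω) ∂P = v := by
    have h1 : (fun ω => φ ω * (s * W ω)) = fun ω => s * (φ ω * W ω) :=
      funext fun ω => by ring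
    rw [h1, integral_const_mul, hsdef]
    field_simp
  have hfeas : Feasible P φ K v (fun ω => s * W ω) := by
    refine feasible_of (hWm.const_mul s) ?_ hbud'.ge
    filter_upwards [hWb] with ω h
    exact ⟨mul_nonneg hs0.le h.1, by nlinarith [h.1, h.2]⟩
  have h1 := hopt _ hfeas
  have h2 := rho_scale_lt hlam hc hsmono hWm hWb hWne hs0 hs1
  rw [rhoLam_eq_rho' (W := W), rhoLam_eq_rho' (W := fun ω => s * W ω)] at h1
  linarith

/-! ### Threshold structure of solutions -/

theorem sol_threshold {lam : ℝ} (hlam : lam ∈ Ioo (0:ℝ) 1) {ℓ : ℝ → ℝ}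
    (hc : Continuous ℓ) (hsmono : StrictMono ℓ) {φ : Ω → ℝ} (hφm : Measurable φ)
    (hφint : Integrable φ P) (hφpos : ∀ᵐ ω ∂P, 0 < φ ω) {K v : ℝ} (hK : 0 ≤ K)
    {W : Ω → ℝ} (hWm : Measurable W)
    (hsol : IsLamSolution P lam ℓ φ K v W) (hv : 0 < v) :
    ∃ u : ℝ, 0 ≤ u ∧ u ≤ K ∧ (∀ᵐ ω ∂P, u ≤ W ω) ∧
      rhoLam' P lam ℓ W = ℓ u + (1/lam) * ∫ ω, max (ℓ (W ω) - ℓ u) 0 ∂P := by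
  have hmono := hsmono.monotone
  obtain ⟨⟨hmem, hWb, hbud⟩, hopt⟩ := hsol
  obtain ⟨t, ht0, htK, q, hq, hq_zero, hq_one, hval, hF⟩ :=
    attain hlam hc hmono hWm hWb
  obtain ⟨u, hu01, huval⟩ : ∃ u ∈ Icc (0:ℝ) K, ℓ u = t := by
    have h1 := intermediate_value_Icc hK hc.continuousOn (a := 0) (b := K)
    obtain ⟨u, hu, huv⟩ := h1 ⟨ht0, htK⟩
    exact ⟨u, hu, huv⟩
  set W1 : Ω → ℝ := fun ω => max (W ω) u with hW1def
  have hW1m : Measurable W1 := hWm.max measurable_const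
  have hW1b : ∀ᵐ ω ∂P, 0 ≤ W1 ω ∧ W1 ω ≤ K := by
    filter_upwards [hWb] with ω h
    exact ⟨le_trans h.1 (le_max_left _ _), max_le h.2 hu01.2⟩
  have hptmax : ∀ ω, max (ℓ (W1 ω) - t) 0 = max (ℓ (W ω) - t) 0 := by
    intro ω
    rcases le_or_gt u (W ω) with h | h
    · rw [hW1def]
      simp only [max_eq_left h]
    · have h1 : W1 ω = u := by rw [hW1def]; simp only [max_eq_right h.le]
      rw [h1, huval, sub_self, max_self]
      rw [max_eq_right]
      have : ℓ (W ω) ≤ ℓ u := hmono h.le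
      linarith [huval]
  have hle1 : rhoLam' P lam ℓ W1 ≤ rhoLam' P lam ℓ W := by
    calc rhoLam' P lam ℓ W1 ≤ t + (1/lam) * ∫ ω, max (ℓ (W1 ω) - t) 0 ∂P :=
          rho_le_F hlam hc hmono hW1m hW1b t
      _ = t + (1/lam) * ∫ ω, max (ℓ (W ω) - t) 0 ∂P := by
          rw [integral_congr_ae (Eventually.of_forall hptmax)]
      _ = rhoLam' P lam ℓ W := hF.symm
  have hWint : Integrable (fun ω => φ ω * W ω) P :=
    phiW_intble hφm hφint hWm.aestronglyMeasurable (abs_le_of_bounds hWb)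
  have hW1int : Integrable (fun ω => φ ω * W1 ω) P :=
    phiW_intble hφm hφint hW1m.aestronglyMeasurable (abs_le_of_bounds hW1b)
  have hbudmono : ∫ ω, φ ω * W ω ∂P ≤ ∫ ω, φ ω * W1 ω ∂P := by
    refine integral_mono_ae hWint hW1int ?_
    filter_upwards [hφpos] with ω hφω
    exact mul_le_mul_of_nonneg_left (le_max_left _ _) hφω.le
  have hfeas1 : Feasible P φ K v W1 := feasible_of hW1m hW1b (le_trans hbud hbudmono)
  have hopt1 : rhoLam P lam ℓ W ≤ rhoLam P lam ℓ W1 := hopt _ hfeas1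
  rw [rhoLam_eq_rho' (W := W), rhoLam_eq_rho' (W := W1)] at hopt1
  have heq : rhoLam' P lam ℓ W1 = rhoLam' P lam ℓ W := le_antisymm hle1 hopt1
  have hsol1 : IsLamSolution P lam ℓ φ K v W1 := by
    refine ⟨hfeas1, fun Y hY => ?_⟩
    have := hopt Y hY
    rw [rhoLam_eq_rho' (W := W)] at this
    rw [rhoLam_eq_rho' (W := W1)]
    linarith [heq.ge, heq.le]
  have hb1 : ∫ ω, φ ω * W1 ω ∂P = v :=
    sol_budget hlam hc hsmono hφm hφint hW1m hsol1 hv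
  have hb0 : ∫ ω, φ ω * W ω ∂P = v :=
    sol_budget hlam hc hsmono hφm hφint hWm ⟨⟨hmem, hWb, hbud⟩, hopt⟩ hv
  have hzero : ∫ ω, φ ω * W1 ω - φ ω * W ω ∂P = 0 := by
    rw [integral_sub hW1int hWint, hb1, hb0, sub_self]
  have hnonneg : ∀ᵐ ω ∂P, 0 ≤ φ ω * W1 ω - φ ω * W ω := by
    filter_upwards [hφpos] with ω hφω
    have : W ω ≤ W1 ω := le_max_left _ _
    nlinarith
  have hae0 : (fun ω => φ ω * W1 ω - φ ω * W ω) =ᵐ[P] 0 :=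
    (integral_eq_zero_iff_of_nonneg_ae hnonneg (hW1int.sub hWint)).1 hzero
  have hup : ∀ᵐ ω ∂P, u ≤ W ω := by
    filter_upwards [hae0, hφpos] with ω h1 h2
    have h3 : φ ω * W1 ω - φ ω * W ω = 0 := h1
    have h4 : W1 ω = W ω := by
      have h5 : φ ω * (W1 ω - W ω) = 0 := by ring_nf; ring_nf at h3; linarith
      rcases mul_eq_zero.1 h5 with h | h
      · exact absurd h (ne_of_gt h2)
      · linarith
    rw [hW1def] at h4
    simp only [max_eq_left_iff] at h4
    exact h4
  refine ⟨u, hu01.1, hu01.2, hup, ?_⟩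
  rw [huval]
  exact hF

/-! ### Characterization of optimal densities -/

theorem opt_den_char {lam : ℝ} (hlam : lam ∈ Ioo (0:ℝ) 1) {ℓ : ℝ → ℝ}
    (hc : Continuous ℓ) (hsmono : StrictMono ℓ) {K : ℝ} {W : Ω → ℝ}
    (hWm : Measurable W) (hWb : ∀ᵐ ω ∂P, 0 ≤ W ω ∧ W ω ≤ K) {u : ℝ}
    (hup : ∀ᵐ ω ∂P, u ≤ W ω)
    (hF : rhoLam' P lam ℓ W = ℓ u + (1/lam) * ∫ ω, max (ℓ (W ω) - ℓ u) 0 ∂P)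
    {q : Ω → ℝ} (hq : Den P lam q)
    (hqv : ∫ ω, q ω * ℓ (W ω) ∂P = rhoLam' P lam ℓ W) :
    ∀ᵐ ω ∂P, u < W ω → q ω = 1/lam := by
  have hmono := hsmono.monotone
  set t : ℝ := ℓ u with htdef
  have hae_ge : ∀ᵐ ω ∂P, t ≤ ℓ (W ω) := by
    filter_upwards [hup] with ω h
    exact hmono h
  have hint1 : Integrable (fun ω => ℓ (W ω)) P := lW_intble hc hmono hWm hWb
  have hintqz : Integrable (fun ω => q ω * (ℓ (W ω) - t)) P :=
    den_mul_intble hq (hint1.sub (integrable_const t))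
  have hplusint : Integrable (fun ω => max (ℓ (W ω) - t) 0) P :=
    (hint1.sub (integrable_const t)).pos_part
  have hsplit : ∫ ω, q ω * ℓ (W ω) ∂P = t + ∫ ω, q ω * (ℓ (W ω) - t) ∂P := by
    have h1 : (fun ω => q ω * ℓ (W ω)) = fun ω => q ω * t + q ω * (ℓ (W ω) - t) :=
      funext fun ω => by ring
    rw [h1, integral_add ((den_intble hq).mul_const t) hintqz,
      integral_mul_const, hq.mass, one_mul]
  have he1 : ∫ ω, q ω * (ℓ (W ω) - t) ∂P = ∫ ω, q ω * max (ℓ (W ω) - t) 0 ∂P := by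
    refine integral_congr_ae ?_
    filter_upwards [hae_ge] with ω h
    rw [max_eq_left (by linarith)]
  have hkey : ∫ ω, (1/lam - q ω) * max (ℓ (W ω) - t) 0 ∂P = 0 := by
    have h2 : t + ∫ ω, q ω * max (ℓ (W ω) - t) 0 ∂P
        = t + (1/lam) * ∫ ω, max (ℓ (W ω) - t) 0 ∂P := by
      rw [← he1, ← hsplit, hqv, hF]
    have h3 : ∫ ω, (1/lam - q ω) * max (ℓ (W ω) - t) 0 ∂P
        = (1/lam) * ∫ ω, max (ℓ (W ω) - t) 0 ∂P
          - ∫ ω, q ω * max (ℓ (W ω) - t) 0 ∂P := by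
      rw [← integral_const_mul, ← integral_sub (hplusint.const_mul _)
        (den_mul_intble hq hplusint)]
      refine integral_congr_ae (Eventually.of_forall fun ω => ?_)
      ring
    rw [h3]
    linarith
  have hgnonneg : ∀ᵐ ω ∂P, 0 ≤ (1/lam - q ω) * max (ℓ (W ω) - t) 0 :=
    Eventually.of_forall fun ω => mul_nonneg (by linarith [hq.le ω]) (le_max_right _ _)
  have hgint : Integrable (fun ω => (1/lam - q ω) * max (ℓ (W ω) - t) 0) P :=
    hplusint.bdd_mul (aestronglyMeasurable_const.sub hq.meas.aestronglyMeasurable)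
      (c := 1/lam) (Eventually.of_forall fun ω => by
        rw [Real.norm_eq_abs, abs_of_nonneg (by linarith [hq.le ω])]
        linarith [hq.nonneg ω])
  have hg0 : (fun ω => (1/lam - q ω) * max (ℓ (W ω) - t) 0) =ᵐ[P] 0 :=
    (integral_eq_zero_iff_of_nonneg_ae hgnonneg hgint).1 hkey
  filter_upwards [hg0] with ω hg
  intro hlt
  have h1 : t < ℓ (W ω) := by rw [htdef]; exact hsmono hlt
  have h2 : max (ℓ (W ω) - t) 0 = ℓ (W ω) - t := max_eq_left (by linarith)
  have h3 : (1/lam - q ω) * max (ℓ (W ω) - t) 0 = 0 := hg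
  rw [h2] at h3
  rcases mul_eq_zero.1 h3 with h | h
  · linarith [h]
  · linarith

/-! ### Uniqueness of solutions -/

theorem sol_unique {lam : ℝ} (hlam : lam ∈ Ioo (0:ℝ) 1) {ℓ : ℝ → ℝ}
    (hc : Continuous ℓ) (hsmono : StrictMono ℓ) (hconv : StrictConvexOn ℝ univ ℓ)
    {φ : Ω → ℝ} (hφm : Measurable φ) (hφint : Integrable φ P) (hφpos : ∀ᵐ ω ∂P, 0 < φ ω)
    {K v : ℝ} (hK : 0 ≤ K) {W1 W2 : Ω → ℝ} (hW1m : Measurable W1) (hW2m : Measurable W2)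
    (h1 : IsLamSolution P lam ℓ φ K v W1) (h2 : IsLamSolution P lam ℓ φ K v W2)
    (hv : 0 < v) : W1 =ᵐ[P] W2 := by
  have hmono := hsmono.monotone
  have hW1b := h1.1.2.1
  have hW2b := h2.1.2.1
  obtain ⟨u1, hu10, hu1K, hup1, hF1⟩ :=
    sol_threshold hlam hc hsmono hφm hφint hφpos hK hW1m h1 hv
  obtain ⟨u2, hu20, hu2K, hup2, hF2⟩ :=
    sol_threshold hlam hc hsmono hφm hφint hφpos hK hW2m h2 hv
  have hb1 := sol_budget hlam hc hsmono hφm hφint hW1m h1 hv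
  have hb2 := sol_budget hlam hc hsmono hφm hφint hW2m h2 hv
  have hW1int : Integrable (fun ω => φ ω * W1 ω) P :=
    phiW_intble hφm hφint hW1m.aestronglyMeasurable (abs_le_of_bounds hW1b)
  have hW2int : Integrable (fun ω => φ ω * W2 ω) P :=
    phiW_intble hφm hφint hW2m.aestronglyMeasurable (abs_le_of_bounds hW2b)
  set M : Ω → ℝ := fun ω => (W1 ω + W2 ω)/2 with hMdef
  have hMm : Measurable M := (hW1m.add hW2m).div_const 2
  have hMb : ∀ᵐ ω ∂P, 0 ≤ M ω ∧ M ω ≤ K := by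
    filter_upwards [hW1b, hW2b] with ω g1 g2
    constructor
    · simp only [hMdef]; linarith [g1.1, g2.1]
    · simp only [hMdef]; linarith [g1.2, g2.2]
  have hMbud : ∫ ω, φ ω * M ω ∂P = v := by
    have e : (fun ω => φ ω * M ω)
        = fun ω => (1/2) * (φ ω * W1 ω) + (1/2) * (φ ω * W2 ω) := by
      funext ω; simp only [hMdef]; ring
    rw [e, integral_add (hW1int.const_mul _) (hW2int.const_mul _),
      integral_const_mul, integral_const_mul, hb1, hb2]
    ring
  have hMfeas : Feasible P φ K v M := feasible_of hMm hMb hMbud.ge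
  obtain ⟨tM, -, -, qM, hqM, -, -, hvalM, -⟩ := attain hlam hc hmono hMm hMb
  have hA1 : ∫ ω, qM ω * ℓ (W1 ω) ∂P ≤ rhoLam' P lam ℓ W1 :=
    le_rho hlam hc hmono hW1m hW1b hqM
  have hA2 : ∫ ω, qM ω * ℓ (W2 ω) ∂P ≤ rhoLam' P lam ℓ W2 :=
    le_rho hlam hc hmono hW2m hW2b hqM
  have hint1 : Integrable (fun ω => qM ω * ℓ (W1 ω)) P :=
    den_mul_intble hqM (lW_intble hc hmono hW1m hW1b)
  have hint2 : Integrable (fun ω => qM ω * ℓ (W2 ω)) P :=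
    den_mul_intble hqM (lW_intble hc hmono hW2m hW2b)
  have hintM : Integrable (fun ω => qM ω * ℓ (M ω)) P :=
    den_mul_intble hqM (lW_intble hc hmono hMm hMb)
  have hconvpt : ∀ ω, qM ω * ℓ (M ω) ≤ qM ω * ((ℓ (W1 ω) + ℓ (W2 ω))/2) := by
    intro ω
    refine mul_le_mul_of_nonneg_left ?_ (hqM.nonneg ω)
    have hcv := hconv.convexOn.2 (mem_univ (W1 ω)) (mem_univ (W2 ω))
      (by norm_num : (0:ℝ) ≤ 1/2) (by norm_num : (0:ℝ) ≤ 1/2) (by norm_num)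
    simp only [smul_eq_mul] at hcv
    have e : (1/2 : ℝ) * W1 ω + 1/2 * W2 ω = M ω := by simp only [hMdef]; ring
    rw [e] at hcv
    linarith
  have e12 : (fun ω => qM ω * ((ℓ (W1 ω) + ℓ (W2 ω))/2))
      = fun ω => (1/2) * (qM ω * ℓ (W1 ω)) + (1/2) * (qM ω * ℓ (W2 ω)) := by
    funext ω; ring
  have hint12 : Integrable (fun ω => qM ω * ((ℓ (W1 ω) + ℓ (W2 ω))/2)) P := by
    rw [e12]; exact (hint1.const_mul _).add (hint2.const_mul _)
  have e2 : ∫ ω, qM ω * ((ℓ (W1 ω) + ℓ (W2 ω))/2) ∂P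
      = (∫ ω, qM ω * ℓ (W1 ω) ∂P + ∫ ω, qM ω * ℓ (W2 ω) ∂P)/2 := by
    rw [e12, integral_add (hint1.const_mul _) (hint2.const_mul _),
      integral_const_mul, integral_const_mul]
    ring
  have hmid_le : ∫ ω, qM ω * ℓ (M ω) ∂P
      ≤ (∫ ω, qM ω * ℓ (W1 ω) ∂P + ∫ ω, qM ω * ℓ (W2 ω) ∂P)/2 := by
    calc ∫ ω, qM ω * ℓ (M ω) ∂P ≤ ∫ ω, qM ω * ((ℓ (W1 ω) + ℓ (W2 ω))/2) ∂P :=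
          integral_mono_ae hintM hint12 (Eventually.of_forall hconvpt)
      _ = _ := e2
  have hop1 : rhoLam' P lam ℓ W1 ≤ rhoLam' P lam ℓ M := h1.2 M hMfeas
  have hop2 : rhoLam' P lam ℓ W2 ≤ rhoLam' P lam ℓ M := h2.2 M hMfeas
  have hE1 : ∫ ω, qM ω * ℓ (W1 ω) ∂P = rhoLam' P lam ℓ W1 := by linarith [hvalM]
  have hE2 : ∫ ω, qM ω * ℓ (W2 ω) ∂P = rhoLam' P lam ℓ W2 := by linarith [hvalM]
  have e4 : (fun ω => qM ω * ((ℓ (W1 ω) + ℓ (W2 ω))/2 - ℓ (M ω)))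
      = fun ω => qM ω * ((ℓ (W1 ω) + ℓ (W2 ω))/2) - qM ω * ℓ (M ω) := by
    funext ω; ring
  have hintgap : Integrable (fun ω => qM ω * ((ℓ (W1 ω) + ℓ (W2 ω))/2 - ℓ (M ω))) P := by
    rw [e4]; exact hint12.sub hintM
  have hgap_eq : ∫ ω, qM ω * ((ℓ (W1 ω) + ℓ (W2 ω))/2 - ℓ (M ω)) ∂P = 0 := by
    rw [e4, integral_sub hint12 hintM, e2]
    linarith [hvalM]
  have hgap_nonneg : ∀ᵐ ω ∂P, 0 ≤ qM ω * ((ℓ (W1 ω) + ℓ (W2 ω))/2 - ℓ (M ω)) :=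
    Eventually.of_forall fun ω => by linarith [hconvpt ω]
  have hgap0 : (fun ω => qM ω * ((ℓ (W1 ω) + ℓ (W2 ω))/2 - ℓ (M ω))) =ᵐ[P] 0 :=
    (integral_eq_zero_iff_of_nonneg_ae hgap_nonneg hintgap).1 hgap_eq
  have hch1 := opt_den_char hlam hc hsmono hW1m hW1b hup1 hF1 hqM hE1
  have hch2 := opt_den_char hlam hc hsmono hW2m hW2b hup2 hF2 hqM hE2
  have hstruct : ∀ᵐ ω ∂P, W1 ω ≠ W2 ω → (W1 ω = u1 ∧ W2 ω = u2) := by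
    filter_upwards [hgap0, hch1, hch2, hup1, hup2] with ω hg hc1 hc2 hu1ω hu2ω
    intro hne
    have hstrict : ℓ (M ω) < (ℓ (W1 ω) + ℓ (W2 ω))/2 := by
      have hcv := hconv.2 (mem_univ (W1 ω)) (mem_univ (W2 ω)) hne
        (by norm_num : (0:ℝ) < 1/2) (by norm_num : (0:ℝ) < 1/2) (by norm_num)
      simp only [smul_eq_mul] at hcv
      have e : (1/2 : ℝ) * W1 ω + 1/2 * W2 ω = M ω := by simp only [hMdef]; ring
      rw [e] at hcv
      linarith
    have hq0 : qM ω = 0 := by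
      have hgg : qM ω * ((ℓ (W1 ω) + ℓ (W2 ω))/2 - ℓ (M ω)) = 0 := hg
      rcases mul_eq_zero.1 hgg with h | h
      · exact h
      · linarith
    have hlam0 := hlam.1
    have hlampos : (0:ℝ) < 1/lam := by positivity
    constructor
    · by_contra hne1
      have hlt : u1 < W1 ω := lt_of_le_of_ne hu1ω (Ne.symm hne1)
      have := hc1 hlt
      rw [hq0] at this
      linarith
    · by_contra hne2
      have hlt : u2 < W2 ω := lt_of_le_of_ne hu2ω (Ne.symm hne2)
      have := hc2 hlt
      rw [hq0] at this
      linarith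
  have hint12' : Integrable (fun ω => φ ω * W2 ω - φ ω * W1 ω) P := hW2int.sub hW1int
  have hzero2 : ∫ ω, φ ω * W2 ω - φ ω * W1 ω ∂P = 0 := by
    rw [integral_sub hW2int hW1int, hb1, hb2, sub_self]
  rcases lt_trichotomy u1 u2 with hu | hu | hu
  · have hnn : ∀ᵐ ω ∂P, 0 ≤ φ ω * W2 ω - φ ω * W1 ω := by
      filter_upwards [hstruct, hφpos] with ω hs hφω
      by_cases hne : W1 ω = W2 ω
      · rw [hne]; simp
      · obtain ⟨e1, e2⟩ := hs hne
        rw [e1, e2, ← mul_sub]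
        exact (mul_pos hφω (sub_pos.2 hu)).le
    have hae0 := (integral_eq_zero_iff_of_nonneg_ae hnn hint12').1 hzero2
    filter_upwards [hae0, hφpos, hstruct] with ω hz hφω hs
    by_contra hne
    obtain ⟨e1, e2⟩ := hs hne
    have hzz : φ ω * W2 ω - φ ω * W1 ω = 0 := hz
    rw [e1, e2, ← mul_sub] at hzz
    exact absurd hzz (ne_of_gt (mul_pos hφω (sub_pos.2 hu)))
  · filter_upwards [hstruct] with ω hs
    by_contra hne
    obtain ⟨e1, e2⟩ := hs hne
    exact hne (by rw [e1, e2, hu])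
  · have hnn : ∀ᵐ ω ∂P, 0 ≤ φ ω * W1 ω - φ ω * W2 ω := by
      filter_upwards [hstruct, hφpos] with ω hs hφω
      by_cases hne : W1 ω = W2 ω
      · rw [hne]; simp
      · obtain ⟨e1, e2⟩ := hs hne
        rw [e1, e2, ← mul_sub]
        exact (mul_pos hφω (sub_pos.2 hu)).le
    have hzero3 : ∫ ω, φ ω * W1 ω - φ ω * W2 ω ∂P = 0 := by
      rw [integral_sub hW1int hW2int, hb1, hb2, sub_self]
    have hae0 := (integral_eq_zero_iff_of_nonneg_ae hnn (hW1int.sub hW2int)).1 hzero3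
    filter_upwards [hae0, hφpos, hstruct] with ω hz hφω hs
    by_contra hne
    obtain ⟨e1, e2⟩ := hs hne
    have hzz : φ ω * W1 ω - φ ω * W2 ω = 0 := hz
    rw [e1, e2, ← mul_sub] at hzz
    exact absurd hzz (ne_of_gt (mul_pos hφω (sub_pos.2 hu)))

/-! ### Rebalancing densities -/

theorem rebalance {lam : ℝ} (hlam : lam ∈ Ioo (0:ℝ) 1)
    {p1 p2 r f g : Ω → ℝ}
    (hp1m : Measurable p1) (hp2m : Measurable p2) (hrm : Measurable r)
    (hp1b : ∀ ω, 0 ≤ p1 ω ∧ p1 ω ≤ 1/lam) (hp2b : ∀ ω, 0 ≤ p2 ω ∧ p2 ω ≤ 1/lam)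
    (hrb : ∀ ω, 0 ≤ r ω ∧ r ω ≤ p1 ω ∧ r ω ≤ 1/lam - p2 ω)
    (hsupp : ∀ ω, r ω ≠ 0 → g ω ≤ f ω)
    (hgint : Integrable g P) (hfint : Integrable f P)
    (hmass : ∫ ω, p1 ω ∂P + ∫ ω, p2 ω ∂P = 2)
    (hge1 : 1 ≤ ∫ ω, p1 ω ∂P)
    (hroom : ∫ ω, p1 ω ∂P - 1 ≤ ∫ ω, r ω ∂P) :
    ∃ p1' p2' : Ω → ℝ, Den P lam p1' ∧ Den P lam p2' ∧
      ∫ ω, p1 ω * g ω ∂P + ∫ ω, p2 ω * f ω ∂P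
        ≤ ∫ ω, p1' ω * g ω ∂P + ∫ ω, p2' ω * f ω ∂P := by
  have hlam0 := hlam.1
  have hp1int : Integrable p1 P :=
    intble hp1m.aestronglyMeasurable (1/lam)
      (Eventually.of_forall fun ω => by
        rw [abs_of_nonneg (hp1b ω).1]; exact (hp1b ω).2)
  have hp2int : Integrable p2 P :=
    intble hp2m.aestronglyMeasurable (1/lam)
      (Eventually.of_forall fun ω => by
        rw [abs_of_nonneg (hp2b ω).1]; exact (hp2b ω).2)
  have hrint : Integrable r P :=
    intble hrm.aestronglyMeasurable (1/lam)
      (Eventually.of_forall fun ω => by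
        rw [abs_of_nonneg (hrb ω).1]
        linarith [(hrb ω).2.1, (hp1b ω).2])
  by_cases hr0 : ∫ ω, r ω ∂P = 0
  · -- then the masses are already balanced
    have hβ : ∫ ω, p1 ω ∂P = 1 := le_antisymm (by linarith) hge1
    have hβ2 : ∫ ω, p2 ω ∂P = 1 := by linarith
    exact ⟨p1, p2, ⟨hp1m, fun ω => (hp1b ω).1, fun ω => (hp1b ω).2, hβ⟩,
      ⟨hp2m, fun ω => (hp2b ω).1, fun ω => (hp2b ω).2, hβ2⟩, le_refl _⟩
  · have hrpos : 0 < ∫ ω, r ω ∂P :=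
      lt_of_le_of_ne (integral_nonneg fun ω => (hrb ω).1) (Ne.symm hr0)
    set θ : ℝ := (∫ ω, p1 ω ∂P - 1) / ∫ ω, r ω ∂P with hθdef
    have hθ0 : 0 ≤ θ := div_nonneg (by linarith) hrpos.le
    have hθ1 : θ ≤ 1 := (div_le_one hrpos).2 hroom
    have hθr : ∀ ω, 0 ≤ θ * r ω ∧ θ * r ω ≤ r ω := fun ω =>
      ⟨mul_nonneg hθ0 (hrb ω).1, by nlinarith [(hrb ω).1]⟩
    refine ⟨fun ω => p1 ω - θ * r ω, fun ω => p2 ω + θ * r ω,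
      ⟨hp1m.sub (hrm.const_mul θ), fun ω => by linarith [(hθr ω).2, (hrb ω).2.1],
        fun ω => by linarith [(hθr ω).1, (hp1b ω).2], ?_⟩,
      ⟨hp2m.add (hrm.const_mul θ), fun ω => by linarith [(hθr ω).1, (hp2b ω).1],
        fun ω => by linarith [(hθr ω).2, (hrb ω).2.2], ?_⟩, ?_⟩
    · rw [integral_sub hp1int (hrint.const_mul θ), integral_const_mul, hθdef]
      field_simp
      ring
    · rw [integral_add hp2int (hrint.const_mul θ), integral_const_mul, hθdef]
      field_simp
      linarith
    · have hrg : Integrable (fun ω => r ω * g ω) P :=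
        hgint.bdd_mul hrm.aestronglyMeasurable
          (c := 1/lam) (Eventually.of_forall fun ω => by
            rw [Real.norm_eq_abs, abs_of_nonneg (hrb ω).1]
            linarith [(hrb ω).2.1, (hp1b ω).2])
      have hrf : Integrable (fun ω => r ω * f ω) P :=
        hfint.bdd_mul hrm.aestronglyMeasurable
          (c := 1/lam) (Eventually.of_forall fun ω => by
            rw [Real.norm_eq_abs, abs_of_nonneg (hrb ω).1]
            linarith [(hrb ω).2.1, (hp1b ω).2])
      have hp1g : Integrable (fun ω => p1 ω * g ω) P :=
        hgint.bdd_mul hp1m.aestronglyMeasurable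
          (c := 1/lam) (Eventually.of_forall fun ω => by
            rw [Real.norm_eq_abs, abs_of_nonneg (hp1b ω).1]; exact (hp1b ω).2)
      have hp2f : Integrable (fun ω => p2 ω * f ω) P :=
        hfint.bdd_mul hp2m.aestronglyMeasurable
          (c := 1/lam) (Eventually.of_forall fun ω => by
            rw [Real.norm_eq_abs, abs_of_nonneg (hp2b ω).1]; exact (hp2b ω).2)
      have e1 : (fun ω => (p1 ω - θ * r ω) * g ω)
          = fun ω => p1 ω * g ω - θ * (r ω * g ω) := funext fun ω => by ring
      have e2 : (fun ω => (p2 ω + θ * r ω) * f ω)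
          = fun ω => p2 ω * f ω + θ * (r ω * f ω) := funext fun ω => by ring
      rw [e1, e2, integral_sub hp1g (hrg.const_mul θ),
        integral_add hp2f (hrf.const_mul θ), integral_const_mul, integral_const_mul]
      have hmono2 : ∫ ω, r ω * g ω ∂P ≤ ∫ ω, r ω * f ω ∂P := by
        refine integral_mono_ae hrg hrf (Eventually.of_forall fun ω => ?_)
        show r ω * g ω ≤ r ω * f ω
        by_cases hr : r ω = 0
        · rw [hr]; simp
        · exact mul_le_mul_of_nonneg_left (hsupp ω hr) (hrb ω).1
      nlinarith
  
/-! ### The solution at level zero -/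

theorem den_one {lam : ℝ} (hlam : lam ∈ Ioo (0:ℝ) 1) :
    Den P lam (fun _ : Ω => (1:ℝ)) := by
  refine ⟨measurable_const, fun ω => zero_le_one, fun ω => ?_, by simp⟩
  rw [le_div_iff₀ hlam.1]
  linarith [hlam.2]

theorem sol_zero {lam : ℝ} (hlam : lam ∈ Ioo (0:ℝ) 1) {ℓ : ℝ → ℝ}
    (hc : Continuous ℓ) (hsmono : StrictMono ℓ) {φ : Ω → ℝ} {K : ℝ} (hK : 0 ≤ K)
    {W : Ω → ℝ} (hWm : Measurable W)
    (hsol : IsLamSolution P lam ℓ φ K 0 W) : W =ᵐ[P] (fun _ => (0:ℝ)) := by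
  have hmono := hsmono.monotone
  have hWb := hsol.1.2.1
  have h0b : ∀ᵐ ω ∂P, 0 ≤ (0:ℝ) ∧ (0:ℝ) ≤ K :=
    Eventually.of_forall fun ω => ⟨le_refl 0, hK⟩
  have hzero_feas : Feasible P φ K 0 (fun _ => (0:ℝ)) := by
    refine feasible_of measurable_const h0b ?_
    simp
  have h1 : rhoLam' P lam ℓ W ≤ rhoLam' P lam ℓ (fun _ => (0:ℝ)) := hsol.2 _ hzero_feas
  have h2 : rhoLam' P lam ℓ (fun _ : Ω => (0:ℝ)) ≤ ℓ 0 := by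
    refine rho_le hlam hc hmono measurable_const h0b fun q hq => ?_
    have : ∫ ω, q ω * ℓ 0 ∂P = ℓ 0 := by
      rw [integral_mul_const, hq.mass, one_mul]
    exact this.le
  have h3 : ∫ ω, (1:ℝ) * ℓ (W ω) ∂P ≤ rhoLam' P lam ℓ W :=
    le_rho hlam hc hmono hWm hWb (den_one hlam)
  have hWint : Integrable (fun ω => ℓ (W ω)) P := lW_intble hc hmono hWm hWb
  have h4 : ∫ ω, ℓ (W ω) - ℓ 0 ∂P ≤ 0 := by
    rw [integral_sub hWint (integrable_const _), integral_const]
    simp only [probReal_univ, one_smul]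
    have h5 : ∫ ω, ℓ (W ω) ∂P = ∫ ω, (1:ℝ) * ℓ (W ω) ∂P := by
      refine integral_congr_ae (Eventually.of_forall fun ω => ?_)
      ring
    linarith [h5 ▸ (le_trans h3 (le_trans h1 h2))]
  have h5 : ∀ᵐ ω ∂P, 0 ≤ ℓ (W ω) - ℓ 0 := by
    filter_upwards [hWb] with ω h
    linarith [hmono h.1]
  have h6 : ∫ ω, ℓ (W ω) - ℓ 0 ∂P = 0 :=
    le_antisymm h4 (integral_nonneg_of_ae h5)
  have h7 : (fun ω => ℓ (W ω) - ℓ 0) =ᵐ[P] 0 :=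
    (integral_eq_zero_iff_of_nonneg_ae h5 (hWint.sub (integrable_const _))).1 h6
  filter_upwards [h7, hWb] with ω hω hb
  have h8 : ℓ (W ω) - ℓ 0 = 0 := hω
  have h9 : ℓ (W ω) = ℓ 0 := by linarith
  exact hsmono.injective h9

/-! ### Solutions transfer along a.e. equality -/

theorem sol_congr {lam : ℝ} {ℓ : ℝ → ℝ} {φ : Ω → ℝ} {K v : ℝ} {W W' : Ω → ℝ}
    (h : W =ᵐ[P] W') (hs : IsLamSolution P lam ℓ φ K v W) :
    IsLamSolution P lam ℓ φ K v W' := by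
  obtain ⟨⟨hmem, hb, hbud⟩, hopt⟩ := hs
  have hint : ∫ ω, φ ω * W ω ∂P = ∫ ω, φ ω * W' ω ∂P := by
    refine integral_congr_ae ?_
    filter_upwards [h] with ω hω
    rw [hω]
  refine ⟨⟨hmem.ae_eq h, ?_, ?_⟩, fun Y hY => ?_⟩
  · filter_upwards [hb, h] with ω h1 h2
    rw [← h2]
    exact h1
  · rw [← hint]
    exact hbud
  · rw [← rhoLam_congr h]
    exact hopt Y hY

end NPAux

set_option maxHeartbeats 2000000 in
open NPAux in
theorem rhoLam_solutions_monotone_in_level'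
    {Ω : Type*} [MeasurableSpace Ω] (P : Measure Ω) [IsProbabilityMeasure P]
    (φ : Ω → ℝ) (hφm : Measurable φ) (hφint : Integrable φ P)
    (hφpos : ∀ᵐ ω ∂P, 0 < φ ω)
    (K : ℝ) (hK : 0 < K) (lam : ℝ) (hlam : lam ∈ Ioo (0:ℝ) 1)
    (ℓ : ℝ → ℝ) (hℓconv : StrictConvexOn ℝ univ ℓ) (hℓmono : StrictMono ℓ)
    (hℓcont : Continuous ℓ)
    (v v' : ℝ) (hv : 0 ≤ v) (hvv' : v < v') (hv' : v' ≤ K)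
    (X X' : Ω → ℝ)
    (hX : IsLamSolution P lam ℓ φ K v X) (hX' : IsLamSolution P lam ℓ φ K v' X') :
    ∀ᵐ ω ∂P, X ω ≤ X' ω := by
  classical
  have hlam0 := hlam.1
  have hmono : Monotone ℓ := hℓmono.monotone
  have hK0 : (0:ℝ) ≤ K := hK.le
  have hXsm : AEStronglyMeasurable X P := hX.1.1.aestronglyMeasurable
  have hX'sm : AEStronglyMeasurable X' P := hX'.1.1.aestronglyMeasurable
  set Xm : Ω → ℝ := hXsm.mk X with hXmdef
  set X'm : Ω → ℝ := hX'sm.mk X' with hX'mdef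
  have hXae : X =ᵐ[P] Xm := hXsm.ae_eq_mk
  have hX'ae : X' =ᵐ[P] X'm := hX'sm.ae_eq_mk
  have hXmm : Measurable Xm := hXsm.stronglyMeasurable_mk.measurable
  have hX'mm : Measurable X'm := hX'sm.stronglyMeasurable_mk.measurable
  have hXs : IsLamSolution P lam ℓ φ K v Xm := sol_congr hXae hX
  have hX's : IsLamSolution P lam ℓ φ K v' X'm := sol_congr hX'ae hX'
  have hXb := hXs.1.2.1
  have hX'b := hX's.1.2.1
  suffices hfin : ∀ᵐ ω ∂P, Xm ω ≤ X'm ω by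
    filter_upwards [hfin, hXae, hX'ae] with ω h1 h2 h3
    rw [h2, h3]
    exact h1
  have hv'pos : 0 < v' := lt_of_le_of_lt hv hvv'
  rcases eq_or_lt_of_le hv with hv0 | hvpos
  · -- level zero : the solution is 0 a.e.
    have hXs0 : IsLamSolution P lam ℓ φ K 0 Xm := by rw [hv0]; exact hXs
    have hX0 : Xm =ᵐ[P] (fun _ => (0:ℝ)) := sol_zero hlam hℓcont hℓmono hK0 hXmm hXs0
    filter_upwards [hX0, hX'b] with ω h1 h2
    rw [show Xm ω = 0 from h1]
    exact h2.1
  -- main case : 0 < v < v'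
  have hbX : ∫ ω, φ ω * Xm ω ∂P = v :=
    sol_budget hlam hℓcont hℓmono hφm hφint hXmm hXs hvpos
  have hbX' : ∫ ω, φ ω * X'm ω ∂P = v' :=
    sol_budget hlam hℓcont hℓmono hφm hφint hX'mm hX's hv'pos
  have hXint : Integrable (fun ω => φ ω * Xm ω) P :=
    phiW_intble hφm hφint hXmm.aestronglyMeasurable (abs_le_of_bounds hXb)
  have hX'int : Integrable (fun ω => φ ω * X'm ω) P :=
    phiW_intble hφm hφint hX'mm.aestronglyMeasurable (abs_le_of_bounds hX'b)
  have hDm : MeasurableSet {ω | X'm ω < Xm ω} := measurableSet_lt hX'mm hXmm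
  have hGm : MeasurableSet {ω | Xm ω < X'm ω} := measurableSet_lt hXmm hX'mm
  set dD : Ω → ℝ := fun ω => if X'm ω < Xm ω then φ ω * (Xm ω - X'm ω) else 0 with hdDdef
  set dG : Ω → ℝ := fun ω => if Xm ω < X'm ω then φ ω * (X'm ω - Xm ω) else 0 with hdGdef
  have hdDm : Measurable dD :=
    Measurable.ite hDm (hφm.mul (hXmm.sub hX'mm)) measurable_const
  have hdGm : Measurable dG :=
    Measurable.ite hGm (hφm.mul (hX'mm.sub hXmm)) measurable_const
  have hdDint : Integrable dD P := by
    refine (hφint.abs.const_mul K).mono' hdDm.aestronglyMeasurable ?_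
    filter_upwards [hXb, hX'b] with ω h1 h2
    rw [hdDdef]
    dsimp only
    split_ifs with h
    · rw [Real.norm_eq_abs, abs_mul]
      have hd : |Xm ω - X'm ω| ≤ K := by
        rw [abs_le]; constructor <;> [linarith [h1.1, h2.2]; linarith [h1.2, h2.1]]
      calc |φ ω| * |Xm ω - X'm ω| ≤ |φ ω| * K :=
            mul_le_mul_of_nonneg_left hd (abs_nonneg _)
        _ = K * |φ ω| := mul_comm _ _
    · simp only [norm_zero]
      positivity
  have hdGint : Integrable dG P := by
    refine (hφint.abs.const_mul K).mono' hdGm.aestronglyMeasurable ?_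
    filter_upwards [hXb, hX'b] with ω h1 h2
    rw [hdGdef]
    dsimp only
    split_ifs with h
    · rw [Real.norm_eq_abs, abs_mul]
      have hd : |X'm ω - Xm ω| ≤ K := by
        rw [abs_le]; constructor <;> [linarith [h1.2, h2.1]; linarith [h1.1, h2.2]]
      calc |φ ω| * |X'm ω - Xm ω| ≤ |φ ω| * K :=
            mul_le_mul_of_nonneg_left hd (abs_nonneg _)
        _ = K * |φ ω| := mul_comm _ _
    · simp only [norm_zero]
      positivity
  set c : ℝ := ∫ ω, dD ω ∂P with hcdef
  set e : ℝ := ∫ ω, dG ω ∂P with hedef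
  have hkey_pt : ∀ ω, dG ω - dD ω = φ ω * X'm ω - φ ω * Xm ω := by
    intro ω
    rw [hdDdef, hdGdef]
    dsimp only
    rcases lt_trichotomy (Xm ω) (X'm ω) with h | h | h
    · rw [if_pos h, if_neg (not_lt.2 h.le)]
      ring
    · rw [if_neg (not_lt.2 h.ge), if_neg (not_lt.2 h.le), h]
      ring
    · rw [if_neg (not_lt.2 h.le), if_pos h]
      ring
  have hce : e - c = v' - v := by
    have h1 : ∫ ω, dG ω - dD ω ∂P = v' - v := by
      rw [integral_congr_ae (Eventually.of_forall hkey_pt),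
        integral_sub hX'int hXint, hbX, hbX']
    rw [integral_sub hdGint hdDint] at h1
    rw [hcdef, hedef]
    linarith
  have hc0 : 0 ≤ c := by
    refine integral_nonneg_of_ae ?_
    filter_upwards [hφpos] with ω hφω
    rw [hdDdef]
    dsimp only
    split_ifs with h
    · have : 0 < Xm ω - X'm ω := by linarith
      positivity
    · exact le_refl 0
  have hepos : 0 < e := by linarith
  set μ : ℝ := c / (2*e) with hμdef
  have hμ0 : 0 ≤ μ := div_nonneg hc0 (by linarith)
  have hμhalf : μ ≤ 1/2 := by
    rw [hμdef, div_le_iff₀ (by linarith)]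
    linarith
  have hμe : μ * e = c/2 := by
    rw [hμdef]
    field_simp
  set Y : Ω → ℝ := fun ω => if X'm ω < Xm ω then (Xm ω + X'm ω)/2
      else if Xm ω < X'm ω then (1-μ)*Xm ω + μ*X'm ω else Xm ω with hYdef
  set Y' : Ω → ℝ := fun ω => if X'm ω < Xm ω then (Xm ω + X'm ω)/2
      else if Xm ω < X'm ω then μ*Xm ω + (1-μ)*X'm ω else X'm ω with hY'def
  have hYm : Measurable Y :=
    Measurable.ite hDm ((hXmm.add hX'mm).div_const 2)
      (Measurable.ite hGm ((hXmm.const_mul _).add (hX'mm.const_mul _)) hXmm)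
  have hY'm : Measurable Y' :=
    Measurable.ite hDm ((hXmm.add hX'mm).div_const 2)
      (Measurable.ite hGm ((hXmm.const_mul _).add (hX'mm.const_mul _)) hX'mm)
  have hYY' : ∀ ω, Y ω ≤ Y' ω := by
    intro ω
    rw [hYdef, hY'def]
    dsimp only
    split_ifs with h1 h2
    · exact le_refl _
    · nlinarith [mul_nonneg (by linarith : (0:ℝ) ≤ 1 - 2*μ) (by linarith : (0:ℝ) ≤ X'm ω - Xm ω)]
    · exact not_lt.1 h1
  have hYb : ∀ᵐ ω ∂P, 0 ≤ Y ω ∧ Y ω ≤ K := by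
    filter_upwards [hXb, hX'b] with ω h1 h2
    rw [hYdef]
    dsimp only
    split_ifs with ha hb
    · constructor <;> [linarith [h1.1, h2.1]; linarith [h1.2, h2.2]]
    · constructor
      · nlinarith [mul_nonneg (by linarith : (0:ℝ) ≤ 1-μ) h1.1, mul_nonneg hμ0 h2.1]
      · nlinarith [mul_le_mul_of_nonneg_left h1.2 (by linarith : (0:ℝ) ≤ 1-μ),
          mul_le_mul_of_nonneg_left h2.2 hμ0]
    · exact h1
  have hY'b : ∀ᵐ ω ∂P, 0 ≤ Y' ω ∧ Y' ω ≤ K := by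
    filter_upwards [hXb, hX'b] with ω h1 h2
    rw [hY'def]
    dsimp only
    split_ifs with ha hb
    · constructor <;> [linarith [h1.1, h2.1]; linarith [h1.2, h2.2]]
    · constructor
      · nlinarith [mul_nonneg (by linarith : (0:ℝ) ≤ 1-μ) h2.1, mul_nonneg hμ0 h1.1]
      · nlinarith [mul_le_mul_of_nonneg_left h2.2 (by linarith : (0:ℝ) ≤ 1-μ),
          mul_le_mul_of_nonneg_left h1.2 hμ0]
    · exact h2
  have hbudYpt : ∀ ω, φ ω * Y ω = (φ ω * Xm ω - (1/2) * dD ω) + μ * dG ω := by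
    intro ω
    rw [hYdef, hdDdef, hdGdef]
    dsimp only
    rcases lt_trichotomy (Xm ω) (X'm ω) with h | h | h
    · rw [if_neg (not_lt.2 h.le), if_pos h, if_neg (not_lt.2 h.le), if_pos h]
      ring
    · rw [if_neg (not_lt.2 h.ge), if_neg (not_lt.2 h.le), if_neg (not_lt.2 h.ge),
        if_neg (not_lt.2 h.le)]
      ring
    · rw [if_pos h, if_pos h, if_neg (not_lt.2 h.le)]
      ring
  have hbudY'pt : ∀ ω, φ ω * Y' ω = (φ ω * X'm ω + (1/2) * dD ω) - μ * dG ω := by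
    intro ω
    rw [hY'def, hdDdef, hdGdef]
    dsimp only
    rcases lt_trichotomy (Xm ω) (X'm ω) with h | h | h
    · rw [if_neg (not_lt.2 h.le), if_pos h, if_neg (not_lt.2 h.le), if_pos h]
      ring
    · rw [if_neg (not_lt.2 h.ge), if_neg (not_lt.2 h.le), if_neg (not_lt.2 h.ge),
        if_neg (not_lt.2 h.le)]
      ring
    · rw [if_pos h, if_pos h, if_neg (not_lt.2 h.le)]
      ring
  have hbudY : ∫ ω, φ ω * Y ω ∂P = v := by
    have hi3 : Integrable (fun ω => (1/2) * dD ω) P := hdDint.const_mul _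
    have hi1 : Integrable (fun ω => φ ω * Xm ω - (1/2) * dD ω) P := hXint.sub hi3
    have hi2 : Integrable (fun ω => μ * dG ω) P := hdGint.const_mul _
    rw [integral_congr_ae (Eventually.of_forall hbudYpt), integral_add hi1 hi2,
      integral_sub hXint hi3, integral_const_mul, integral_const_mul,
      hbX, ← hcdef, ← hedef]
    linarith [hμe]
  have hbudY' : ∫ ω, φ ω * Y' ω ∂P = v' := by
    have hi3 : Integrable (fun ω => (1/2) * dD ω) P := hdDint.const_mul _
    have hi1 : Integrable (fun ω => φ ω * X'm ω + (1/2) * dD ω) P := hX'int.add hi3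
    have hi2 : Integrable (fun ω => μ * dG ω) P := hdGint.const_mul _
    rw [integral_congr_ae (Eventually.of_forall hbudY'pt), integral_sub hi1 hi2,
      integral_add hX'int hi3, integral_const_mul, integral_const_mul,
      hbX', ← hcdef, ← hedef]
    linarith [hμe]
  obtain ⟨t1, -, -, q1, hq1, -, -, hvalY, -⟩ := attain hlam hℓcont hmono hYm hYb
  obtain ⟨t2, -, -, q2, hq2, -, -, hvalY', -⟩ := attain hlam hℓcont hmono hY'm hY'b
  set p1 : Ω → ℝ := fun ω => if X'm ω < Xm ω then (q1 ω + q2 ω)/2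
      else if Xm ω < X'm ω then (1-μ)*q1 ω + μ*q2 ω else q1 ω with hp1def
  set p2 : Ω → ℝ := fun ω => if X'm ω < Xm ω then (q1 ω + q2 ω)/2
      else if Xm ω < X'm ω then μ*q1 ω + (1-μ)*q2 ω else q2 ω with hp2def
  have hp1m : Measurable p1 :=
    Measurable.ite hDm ((hq1.meas.add hq2.meas).div_const 2)
      (Measurable.ite hGm ((hq1.meas.const_mul _).add (hq2.meas.const_mul _)) hq1.meas)
  have hp2m : Measurable p2 :=
    Measurable.ite hDm ((hq1.meas.add hq2.meas).div_const 2)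
      (Measurable.ite hGm ((hq1.meas.const_mul _).add (hq2.meas.const_mul _)) hq2.meas)
  have hp1b : ∀ ω, 0 ≤ p1 ω ∧ p1 ω ≤ 1/lam := by
    intro ω
    have b1 := hq1.nonneg ω; have b2 := hq1.le ω
    have b3 := hq2.nonneg ω; have b4 := hq2.le ω
    rw [hp1def]
    dsimp only
    split_ifs with ha hb
    · constructor <;> linarith
    · constructor
      · nlinarith [mul_nonneg (by linarith : (0:ℝ) ≤ 1-μ) b1, mul_nonneg hμ0 b3]
      · nlinarith [mul_le_mul_of_nonneg_left b2 (by linarith : (0:ℝ) ≤ 1-μ),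
          mul_le_mul_of_nonneg_left b4 hμ0]
    · exact ⟨b1, b2⟩
  have hp2b : ∀ ω, 0 ≤ p2 ω ∧ p2 ω ≤ 1/lam := by
    intro ω
    have b1 := hq1.nonneg ω; have b2 := hq1.le ω
    have b3 := hq2.nonneg ω; have b4 := hq2.le ω
    rw [hp2def]
    dsimp only
    split_ifs with ha hb
    · constructor <;> linarith
    · constructor
      · nlinarith [mul_nonneg (by linarith : (0:ℝ) ≤ 1-μ) b3, mul_nonneg hμ0 b1]
      · nlinarith [mul_le_mul_of_nonneg_left b4 (by linarith : (0:ℝ) ≤ 1-μ),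
          mul_le_mul_of_nonneg_left b2 hμ0]
    · exact ⟨b3, b4⟩
  have hq1int : Integrable q1 P := den_intble hq1
  have hq2int : Integrable q2 P := den_intble hq2
  have hp1int : Integrable p1 P :=
    intble hp1m.aestronglyMeasurable (1/lam)
      (Eventually.of_forall fun ω => by
        rw [abs_of_nonneg (hp1b ω).1]; exact (hp1b ω).2)
  have hp2int : Integrable p2 P :=
    intble hp2m.aestronglyMeasurable (1/lam)
      (Eventually.of_forall fun ω => by
        rw [abs_of_nonneg (hp2b ω).1]; exact (hp2b ω).2)
  have hmass12 : ∫ ω, p1 ω ∂P + ∫ ω, p2 ω ∂P = 2 := by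
    have h1 : ∀ ω, p1 ω + p2 ω = q1 ω + q2 ω := by
      intro ω
      rw [hp1def, hp2def]
      dsimp only
      split_ifs with ha hb
      · ring
      · ring
      · ring
    have h2 : ∫ ω, p1 ω + p2 ω ∂P = ∫ ω, q1 ω + q2 ω ∂P :=
      integral_congr_ae (Eventually.of_forall h1)
    rw [integral_add hp1int hp2int, integral_add hq1int hq2int, hq1.mass, hq2.mass] at h2
    linarith
  have hlXint : Integrable (fun ω => ℓ (Xm ω)) P := lW_intble hℓcont hmono hXmm hXb
  have hlX'int : Integrable (fun ω => ℓ (X'm ω)) P := lW_intble hℓcont hmono hX'mm hX'b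
  have hkey : ∀ ω, q1 ω * ℓ (Y ω) + q2 ω * ℓ (Y' ω)
      ≤ p1 ω * ℓ (Xm ω) + p2 ω * ℓ (X'm ω) := by
    intro ω
    have b1 := hq1.nonneg ω
    have b3 := hq2.nonneg ω
    rw [hYdef, hY'def, hp1def, hp2def]
    dsimp only
    split_ifs with ha hb
    · have hcv := hℓconv.convexOn.2 (mem_univ (Xm ω)) (mem_univ (X'm ω))
        (by norm_num : (0:ℝ) ≤ 1/2) (by norm_num : (0:ℝ) ≤ 1/2) (by norm_num)
      simp only [smul_eq_mul] at hcv
      have e1 : (1/2 : ℝ) * Xm ω + 1/2 * X'm ω = (Xm ω + X'm ω)/2 := by ring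
      rw [e1] at hcv
      nlinarith [mul_le_mul_of_nonneg_left hcv b1, mul_le_mul_of_nonneg_left hcv b3]
    · have hcv1 := hℓconv.convexOn.2 (mem_univ (Xm ω)) (mem_univ (X'm ω))
        (by linarith : (0:ℝ) ≤ 1-μ) hμ0 (by ring)
      have hcv2 := hℓconv.convexOn.2 (mem_univ (Xm ω)) (mem_univ (X'm ω))
        hμ0 (by linarith : (0:ℝ) ≤ 1-μ) (by ring)
      simp only [smul_eq_mul] at hcv1 hcv2
      nlinarith [mul_le_mul_of_nonneg_left hcv1 b1, mul_le_mul_of_nonneg_left hcv2 b3]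
    · exact le_refl _
  have hq1lY : Integrable (fun ω => q1 ω * ℓ (Y ω)) P :=
    den_mul_intble hq1 (lW_intble hℓcont hmono hYm hYb)
  have hq2lY' : Integrable (fun ω => q2 ω * ℓ (Y' ω)) P :=
    den_mul_intble hq2 (lW_intble hℓcont hmono hY'm hY'b)
  have hp1lX : Integrable (fun ω => p1 ω * ℓ (Xm ω)) P :=
    hlXint.bdd_mul hp1m.aestronglyMeasurable
      (c := 1/lam) (Eventually.of_forall fun ω => by
        rw [Real.norm_eq_abs, abs_of_nonneg (hp1b ω).1]; exact (hp1b ω).2)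
  have hp2lX' : Integrable (fun ω => p2 ω * ℓ (X'm ω)) P :=
    hlX'int.bdd_mul hp2m.aestronglyMeasurable
      (c := 1/lam) (Eventually.of_forall fun ω => by
        rw [Real.norm_eq_abs, abs_of_nonneg (hp2b ω).1]; exact (hp2b ω).2)
  have hstep1 : ∫ ω, q1 ω * ℓ (Y ω) ∂P + ∫ ω, q2 ω * ℓ (Y' ω) ∂P
      ≤ ∫ ω, p1 ω * ℓ (Xm ω) ∂P + ∫ ω, p2 ω * ℓ (X'm ω) ∂P := by
    rw [← integral_add hq1lY hq2lY', ← integral_add hp1lX hp2lX']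
    exact integral_mono_ae (hq1lY.add hq2lY') (hp1lX.add hp2lX')
      (Eventually.of_forall hkey)
  have hstep2 : ∫ ω, p1 ω * ℓ (Xm ω) ∂P + ∫ ω, p2 ω * ℓ (X'm ω) ∂P
      ≤ rhoLam' P lam ℓ Xm + rhoLam' P lam ℓ X'm := by
    rcases le_total 1 (∫ ω, p1 ω ∂P) with hge | hle
    · -- transfer mass from p1 (paired with ℓ∘Xm) to p2 (paired with ℓ∘X'm)
      set r : Ω → ℝ := fun ω => if X'm ω < Xm ω then 0
          else min (p1 ω) (1/lam - p2 ω) with hrdef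
      have hrm : Measurable r :=
        Measurable.ite hDm measurable_const
          (hp1m.min (measurable_const.sub hp2m))
      have hrb : ∀ ω, 0 ≤ r ω ∧ r ω ≤ p1 ω ∧ r ω ≤ 1/lam - p2 ω := by
        intro ω
        rw [hrdef]
        dsimp only
        split_ifs with h
        · exact ⟨le_refl 0, (hp1b ω).1, by linarith [(hp2b ω).2]⟩
        · exact ⟨le_min (hp1b ω).1 (by linarith [(hp2b ω).2]),
            min_le_left _ _, min_le_right _ _⟩
      have hsupp : ∀ ω, r ω ≠ 0 → ℓ (Xm ω) ≤ ℓ (X'm ω) := by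
        intro ω hr
        by_cases h : X'm ω < Xm ω
        · exact absurd (by simp only [hrdef, if_pos h]) hr
        · exact hmono (not_lt.1 h)
      have hlow : ∀ ω, p1 ω - q1 ω + (q1 ω - q2 ω)/2 ≤ r ω := by
        intro ω
        have b1 := hq1.nonneg ω; have b2 := hq1.le ω
        have b3 := hq2.nonneg ω; have b4 := hq2.le ω
        rcases lt_trichotomy (Xm ω) (X'm ω) with h | h | h
        · simp only [hrdef, hp1def, hp2def, if_neg (not_lt.2 h.le), if_pos h]
          refine le_min (by linarith) (by linarith)
        · simp only [hrdef, hp1def, hp2def, if_neg (not_lt.2 h.ge), if_neg (not_lt.2 h.le)]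
          refine le_min (by linarith) (by linarith)
        · simp only [hrdef, hp1def, hp2def, if_pos h, if_neg (not_lt.2 h.le)]
          linarith
      have hroom : ∫ ω, p1 ω ∂P - 1 ≤ ∫ ω, r ω ∂P := by
        have h1 : ∫ ω, p1 ω - q1 ω + (q1 ω - q2 ω)/2 ∂P = ∫ ω, p1 ω ∂P - 1 := by
          have e3 : (fun ω => p1 ω - q1 ω + (q1 ω - q2 ω)/2)
              = fun ω => p1 ω - ((1/2) * q1 ω + (1/2) * q2 ω) := by
            funext ω; ring
          have hiq1 : Integrable (fun ω => (1/2) * q1 ω) P := hq1int.const_mul _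
          have hiq2 : Integrable (fun ω => (1/2) * q2 ω) P := hq2int.const_mul _
          have hiq : Integrable (fun ω => (1/2) * q1 ω + (1/2) * q2 ω) P := hiq1.add hiq2
          rw [e3, integral_sub hp1int hiq, integral_add hiq1 hiq2,
            integral_const_mul, integral_const_mul, hq1.mass, hq2.mass]
          ring
        rw [← h1]
        refine integral_mono_ae ?_ ?_ (Eventually.of_forall hlow)
        · exact (hp1int.sub hq1int).add ((hq1int.sub hq2int).div_const 2)
        · exact intble hrm.aestronglyMeasurable (1/lam)
            (Eventually.of_forall fun ω => by
              rw [abs_of_nonneg (hrb ω).1]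
              linarith [(hrb ω).2.1, (hp1b ω).2])
      obtain ⟨p1', p2', hd1, hd2, hle2⟩ :=
        rebalance hlam hp1m hp2m hrm hp1b hp2b hrb hsupp hlXint hlX'int hmass12 hge hroom
      calc ∫ ω, p1 ω * ℓ (Xm ω) ∂P + ∫ ω, p2 ω * ℓ (X'm ω) ∂P
          ≤ ∫ ω, p1' ω * ℓ (Xm ω) ∂P + ∫ ω, p2' ω * ℓ (X'm ω) ∂P := hle2
        _ ≤ rhoLam' P lam ℓ Xm + rhoLam' P lam ℓ X'm :=
            add_le_add (le_rho hlam hℓcont hmono hXmm hXb hd1)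
              (le_rho hlam hℓcont hmono hX'mm hX'b hd2)
    · -- transfer mass from p2 (paired with ℓ∘X'm) to p1 (paired with ℓ∘Xm)
      have hge2 : 1 ≤ ∫ ω, p2 ω ∂P := by linarith
      set r : Ω → ℝ := fun ω => if Xm ω < X'm ω then 0
          else min (p2 ω) (1/lam - p1 ω) with hrdef
      have hrm : Measurable r :=
        Measurable.ite hGm measurable_const
          (hp2m.min (measurable_const.sub hp1m))
      have hrb : ∀ ω, 0 ≤ r ω ∧ r ω ≤ p2 ω ∧ r ω ≤ 1/lam - p1 ω := by
        intro ω
        rw [hrdef]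
        dsimp only
        split_ifs with h
        · exact ⟨le_refl 0, (hp2b ω).1, by linarith [(hp1b ω).2]⟩
        · exact ⟨le_min (hp2b ω).1 (by linarith [(hp1b ω).2]),
            min_le_left _ _, min_le_right _ _⟩
      have hsupp : ∀ ω, r ω ≠ 0 → ℓ (X'm ω) ≤ ℓ (Xm ω) := by
        intro ω hr
        by_cases h : Xm ω < X'm ω
        · exact absurd (by simp only [hrdef, if_pos h]) hr
        · exact hmono (not_lt.1 h)
      have hμ1 : (0:ℝ) ≤ 1 - μ := by linarith
      have hlow : ∀ ω, p2 ω - q2 ω + μ * (q2 ω - q1 ω) ≤ r ω := by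
        intro ω
        have b1 := hq1.nonneg ω; have b2 := hq1.le ω
        have b3 := hq2.nonneg ω; have b4 := hq2.le ω
        rcases lt_trichotomy (Xm ω) (X'm ω) with h | h | h
        · simp only [hrdef, hp1def, hp2def, if_neg (not_lt.2 h.le), if_pos h]
          linarith
        · simp only [hrdef, hp1def, hp2def, if_neg (not_lt.2 h.ge), if_neg (not_lt.2 h.le)]
          refine le_min ?_ ?_
          · linarith [mul_nonneg hμ0 b1, mul_nonneg hμ1 b3]
          · linarith [mul_le_mul_of_nonneg_left b2 hμ1, mul_le_mul_of_nonneg_left b4 hμ0]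
        · simp only [hrdef, hp1def, hp2def, if_pos h, if_neg (not_lt.2 h.le)]
          refine le_min ?_ ?_
          · linarith [mul_nonneg hμ0 b1, mul_nonneg hμ1 b3]
          · linarith [mul_le_mul_of_nonneg_left b2 hμ1, mul_le_mul_of_nonneg_left b4 hμ0]
      have hroom : ∫ ω, p2 ω ∂P - 1 ≤ ∫ ω, r ω ∂P := by
        have h1 : ∫ ω, p2 ω - q2 ω + μ * (q2 ω - q1 ω) ∂P = ∫ ω, p2 ω ∂P - 1 := by
          have e3 : (fun ω => p2 ω - q2 ω + μ * (q2 ω - q1 ω))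
              = fun ω => p2 ω - ((1-μ) * q2 ω + μ * q1 ω) := by
            funext ω; ring
          have hiq1 : Integrable (fun ω => (1-μ) * q2 ω) P := hq2int.const_mul _
          have hiq2 : Integrable (fun ω => μ * q1 ω) P := hq1int.const_mul _
          have hiq : Integrable (fun ω => (1-μ) * q2 ω + μ * q1 ω) P := hiq1.add hiq2
          rw [e3, integral_sub hp2int hiq, integral_add hiq1 hiq2,
            integral_const_mul, integral_const_mul, hq1.mass, hq2.mass]
          ring
        rw [← h1]
        refine integral_mono_ae ?_ ?_ (Eventually.of_forall hlow)
        · exact (hp2int.sub hq2int).add ((hq2int.sub hq1int).const_mul μ)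
        · exact intble hrm.aestronglyMeasurable (1/lam)
            (Eventually.of_forall fun ω => by
              rw [abs_of_nonneg (hrb ω).1]
              linarith [(hrb ω).2.1, (hp2b ω).2])
      obtain ⟨p2', p1', hd2, hd1, hle2⟩ :=
        rebalance hlam hp2m hp1m hrm hp2b hp1b hrb hsupp hlX'int hlXint
          (by linarith) hge2 hroom
      calc ∫ ω, p1 ω * ℓ (Xm ω) ∂P + ∫ ω, p2 ω * ℓ (X'm ω) ∂P
          = ∫ ω, p2 ω * ℓ (X'm ω) ∂P + ∫ ω, p1 ω * ℓ (Xm ω) ∂P := add_comm _ _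
        _ ≤ ∫ ω, p2' ω * ℓ (X'm ω) ∂P + ∫ ω, p1' ω * ℓ (Xm ω) ∂P := hle2
        _ ≤ rhoLam' P lam ℓ X'm + rhoLam' P lam ℓ Xm :=
            add_le_add (le_rho hlam hℓcont hmono hX'mm hX'b hd2)
              (le_rho hlam hℓcont hmono hXmm hXb hd1)
        _ = rhoLam' P lam ℓ Xm + rhoLam' P lam ℓ X'm := add_comm _ _
  have hfinal : rhoLam' P lam ℓ Y + rhoLam' P lam ℓ Y'
      ≤ rhoLam' P lam ℓ Xm + rhoLam' P lam ℓ X'm := by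
    rw [hvalY, hvalY']
    exact le_trans hstep1 hstep2
  have hYfeas : Feasible P φ K v Y := feasible_of hYm hYb hbudY.ge
  have hY'feas : Feasible P φ K v' Y' := feasible_of hY'm hY'b hbudY'.ge
  have o1 : rhoLam' P lam ℓ Xm ≤ rhoLam' P lam ℓ Y := hXs.2 _ hYfeas
  have o2 : rhoLam' P lam ℓ X'm ≤ rhoLam' P lam ℓ Y' := hX's.2 _ hY'feas
  have eY : rhoLam' P lam ℓ Y = rhoLam' P lam ℓ Xm := by linarith
  have eY' : rhoLam' P lam ℓ Y' = rhoLam' P lam ℓ X'm := by linarith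
  have hYsol : IsLamSolution P lam ℓ φ K v Y := by
    refine ⟨hYfeas, fun Z hZ => ?_⟩
    have h1 : rhoLam' P lam ℓ Xm ≤ rhoLam' P lam ℓ Z := hXs.2 Z hZ
    show rhoLam' P lam ℓ Y ≤ rhoLam' P lam ℓ Z
    linarith
  have hY'sol : IsLamSolution P lam ℓ φ K v' Y' := by
    refine ⟨hY'feas, fun Z hZ => ?_⟩
    have h1 : rhoLam' P lam ℓ X'm ≤ rhoLam' P lam ℓ Z := hX's.2 Z hZ
    show rhoLam' P lam ℓ Y' ≤ rhoLam' P lam ℓ Z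
    linarith
  have hXY : Xm =ᵐ[P] Y :=
    sol_unique hlam hℓcont hℓmono hℓconv hφm hφint hφpos hK0 hXmm hYm hXs hYsol hvpos
  have hX'Y' : X'm =ᵐ[P] Y' :=
    sol_unique hlam hℓcont hℓmono hℓconv hφm hφint hφpos hK0 hX'mm hY'm hX's hY'sol hv'pos
  filter_upwards [hXY, hX'Y'] with ω h1 h2
  rw [h1, h2]
  exact hYY' ω

/-- Lemma 3.2: the solutions of the Neyman–Pearson problem for `ρ_λ`
are pointwise increasing in the capital level: if `0 ≤ v < v' ≤ K`, then the solutions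
at levels `v` and `v'` satisfy `X*(v) ≤ X*(v')` P-a.s. -/
theorem rhoLam_solutions_monotone_in_level
    {Ω : Type*} [MeasurableSpace Ω] (P : Measure Ω) [IsProbabilityMeasure P]
    (hP : Atomless P)
    (φ : Ω → ℝ) (hφm : Measurable φ) (hφint : Integrable φ P)
    (hφpos : ∀ᵐ ω ∂P, 0 < φ ω) (hφ1 : ∫ ω, φ ω ∂P = 1)
    (hφunb : ∀ M : ℝ, 0 < P {ω | M < φ ω})
    (hFcont : ContinuousOn (fun x : ℝ => (P {ω | φ ω ≤ x}).toReal) (Ioi 0))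
    (hFmono : StrictMonoOn (fun x : ℝ => (P {ω | φ ω ≤ x}).toReal) (Ioi 0))
    (K : ℝ) (hK : 0 < K) (lam : ℝ) (hlam : lam ∈ Ioo (0:ℝ) 1)
    (ℓ : ℝ → ℝ) (hℓconv : StrictConvexOn ℝ univ ℓ) (hℓmono : StrictMono ℓ)
    (hℓC1 : ContDiff ℝ 1 ℓ) (hℓ'pos : ∀ x : ℝ, 0 < deriv ℓ x)
    (v v' : ℝ) (hv : 0 ≤ v) (hvv' : v < v') (hv' : v' ≤ K)
    (X X' : Ω → ℝ)
    (hX : IsLamSolution P lam ℓ φ K v X) (hX' : IsLamSolution P lam ℓ φ K v' X') :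
    ∀ᵐ ω ∂P, X ω ≤ X' ω := by
  exact rhoLam_solutions_monotone_in_level' P φ hφm hφint hφpos K hK lam hlam
    ℓ hℓconv hℓmono hℓC1.continuous v v' hv hvv' hv' X X' hX hX'
end
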